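/- arXiv:2107.09218 — 5 statements merged into one kernel-verified Lean document; each statement's English description precedes it below -/
import Mathlib

section
/- For probability measures μ₁, μ₂ on the real line with cumulative distribution functions F₁, F₂, the p-Wasserstein distance satisfies W_p^p(μ₁,μ₂) = ∫₀¹ |F₁⁻¹(s) − F₂⁻¹(s)|^p ds, where F⁻¹ denotes the left-continuous quantile (generalized inverse) function. -/
open MeasureTheory Set

/-- The p-th power Wasserstein cost between probability measures on ℝ,
defined as the infimum over all couplings of `E|X-Y|^p`. -/
noncomputable def WassersteinP (p : ℝ) (μ ν : Measure ℝ) : ℝ :=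
  sInf {c : ℝ | ∃ π : Measure (ℝ × ℝ), IsProbabilityMeasure π ∧
    π.map Prod.fst = μ ∧ π.map Prod.snd = ν ∧
    c = ∫ x, |x.1 - x.2| ^ p ∂π}

/-- The left-continuous quantile (generalized inverse distribution) function of a measure. -/
noncomputable def quantileFn (μ : Measure ℝ) (s : ℝ) : ℝ :=
  sInf {x : ℝ | s ≤ (μ (Iic x)).toReal}

open ProbabilityTheory Filter ENNReal

section Aux

variable {μ : Measure ℝ} [IsProbabilityMeasure μ]

lemma quantileFn_eq (s : ℝ) : quantileFn μ s = sInf {x : ℝ | s ≤ cdf μ x} := by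
  unfold quantileFn
  congr 1
  ext x
  simp [cdf_eq_real, measureReal_def]

lemma quantile_set_nonempty {s : ℝ} (hs : s < 1) : {x : ℝ | s ≤ cdf μ x}.Nonempty := by
  obtain ⟨x, hx⟩ := ((tendsto_cdf_atTop μ).eventually (eventually_ge_nhds hs)).exists
  exact ⟨x, hx⟩

lemma quantile_set_bddBelow {s : ℝ} (hs : 0 < s) : BddBelow {x : ℝ | s ≤ cdf μ x} := by
  obtain ⟨y, hy⟩ := ((tendsto_cdf_atBot μ).eventually (eventually_lt_nhds hs)).exists
  refine ⟨y, fun z hz => ?_⟩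
  by_contra h
  push_neg at h
  have hcz : cdf μ z < s := lt_of_le_of_lt (monotone_cdf μ h.le) hy
  exact absurd hz hcz.not_ge

/-- Galois property of the quantile function. -/
lemma quantileFn_le_iff {s : ℝ} (hs0 : 0 < s) (hs1 : s < 1) {x : ℝ} :
    quantileFn μ s ≤ x ↔ s ≤ cdf μ x := by
  rw [quantileFn_eq]
  constructor
  · intro h
    have key : s ≤ cdf μ (sInf {x : ℝ | s ≤ cdf μ x}) := by
      set Q := sInf {x : ℝ | s ≤ cdf μ x} with hQ
      have hn : ∀ n : ℕ, s ≤ cdf μ (Q + ((n : ℝ) + 1)⁻¹) := by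
        intro n
        have hlt : Q < Q + ((n : ℝ) + 1)⁻¹ := by
          have : (0:ℝ) < ((n : ℝ) + 1)⁻¹ := by positivity
          linarith
        obtain ⟨z, hz, hzlt⟩ := exists_lt_of_csInf_lt (quantile_set_nonempty hs1) hlt
        exact le_trans hz (monotone_cdf μ hzlt.le)
      have ht : Tendsto (fun n : ℕ => Q + ((n : ℝ) + 1)⁻¹) atTop (nhdsWithin Q (Ici Q)) := by
        rw [tendsto_nhdsWithin_iff]
        constructor
        · have h0 : Tendsto (fun n : ℕ => ((n : ℝ) + 1)⁻¹) atTop (nhds 0) := by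
            simpa [one_div] using tendsto_one_div_add_atTop_nhds_zero_nat (𝕜 := ℝ)
          simpa using tendsto_const_nhds.add h0
        · exact Filter.Eventually.of_forall fun n => by
            simp only [mem_Ici]
            have : (0:ℝ) ≤ ((n : ℝ) + 1)⁻¹ := by positivity
            linarith
      have hc : Tendsto (fun n : ℕ => cdf μ (Q + ((n : ℝ) + 1)⁻¹)) atTop (nhds (cdf μ Q)) :=
        Filter.Tendsto.comp ((cdf μ).right_continuous Q) ht
      exact ge_of_tendsto hc (Filter.Eventually.of_forall hn)
    exact le_trans key (monotone_cdf μ h)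
  · intro h
    exact csInf_le (quantile_set_bddBelow hs0) h

lemma monotoneOn_quantileFn : MonotoneOn (quantileFn μ) (Ioo (0:ℝ) 1) := by
  intro a ha b hb hab
  rw [quantileFn_eq, quantileFn_eq]
  exact csInf_le_csInf (quantile_set_bddBelow ha.1) (quantile_set_nonempty hb.2)
    (fun x hx => le_trans hab hx)

lemma aemeasurable_quantileFn :
    AEMeasurable (quantileFn μ) (volume.restrict (Ioo (0:ℝ) 1)) :=
  aemeasurable_restrict_of_monotoneOn measurableSet_Ioo monotoneOn_quantileFn

/-- volume of `Ioo 0 1 ∩ Ioc α β` for `α, β ∈ [0,1]`. -/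
lemma volume_Ioo_inter_Ioc {α β : ℝ} (hα : 0 ≤ α) (hβ : β ≤ 1) :
    volume (Ioo (0:ℝ) 1 ∩ Ioc α β) = ENNReal.ofReal (β - α) := by
  rcases le_or_gt β α with h | h
  · rw [Ioc_eq_empty h.not_gt, inter_empty, measure_empty,
      ENNReal.ofReal_of_nonpos (by linarith)]
  · refine le_antisymm ?_ ?_
    · calc volume (Ioo (0:ℝ) 1 ∩ Ioc α β) ≤ volume (Ioc α β) :=
          measure_mono inter_subset_right
        _ = ENNReal.ofReal (β - α) := Real.volume_Ioc
    · calc ENNReal.ofReal (β - α) = volume (Ioo α β) := Real.volume_Ioo.symm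
        _ ≤ volume (Ioo (0:ℝ) 1 ∩ Ioc α β) := measure_mono
            (fun x hx => ⟨⟨lt_of_le_of_lt hα hx.1, lt_of_lt_of_le hx.2 hβ⟩, hx.1, hx.2.le⟩)

/-- The quantile function pushes the uniform measure on (0,1) forward to μ. -/
lemma map_quantileFn : Measure.map (quantileFn μ) (volume.restrict (Ioo (0:ℝ) 1)) = μ := by
  have : IsFiniteMeasure (Measure.map (quantileFn μ) (volume.restrict (Ioo (0:ℝ) 1))) := by
    constructor
    rw [Measure.map_apply_of_aemeasurable aemeasurable_quantileFn MeasurableSet.univ]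
    simp [Measure.restrict_apply' measurableSet_Ioo]
  refine Measure.ext_of_Iic _ _ (fun x => ?_)
  rw [Measure.map_apply_of_aemeasurable aemeasurable_quantileFn measurableSet_Iic,
    Measure.restrict_apply' measurableSet_Ioo]
  have hset : (quantileFn μ ⁻¹' Iic x) ∩ Ioo (0:ℝ) 1 = Ioo (0:ℝ) 1 ∩ Ioc 0 (cdf μ x) := by
    ext s
    simp only [mem_inter_iff, mem_preimage, mem_Iic, mem_Ioo, mem_Ioc]
    constructor
    · rintro ⟨hq, hs0, hs1⟩
      exact ⟨⟨hs0, hs1⟩, hs0, (quantileFn_le_iff hs0 hs1).1 hq⟩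
    · rintro ⟨⟨hs0, hs1⟩, _, hq⟩
      exact ⟨(quantileFn_le_iff hs0 hs1).2 hq, hs0, hs1⟩
  rw [hset, volume_Ioo_inter_Ioc le_rfl (cdf_le_one μ x), sub_zero, ofReal_cdf]

end Aux

section Master

/-- Pointwise layer identity. -/
lemma ofReal_abs_sub_layer {a b r : ℝ} (hr : 0 ≤ r) :
    ENNReal.ofReal (|a - b| - r)
      = volume {t : ℝ | b ≤ t ∧ t + r < a} + volume {t : ℝ | a ≤ t ∧ t + r < b} := by
  have h1 : {t : ℝ | b ≤ t ∧ t + r < a} = Ico b (a - r) := by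
    ext t; simp [mem_Ico, lt_sub_iff_add_lt]
  have h2 : {t : ℝ | a ≤ t ∧ t + r < b} = Ico a (b - r) := by
    ext t; simp [mem_Ico, lt_sub_iff_add_lt]
  rw [h1, h2, Real.volume_Ico, Real.volume_Ico]
  rcases le_total a b with h | h
  · have e1 : ENNReal.ofReal (a - r - b) = 0 := ENNReal.ofReal_of_nonpos (by linarith)
    rw [e1, zero_add, abs_of_nonpos (by linarith)]
    congr 1; ring
  · have e2 : ENNReal.ofReal (b - r - a) = 0 := ENNReal.ofReal_of_nonpos (by linarith)
    rw [e2, add_zero, abs_of_nonneg (by linarith)]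
    congr 1; ring

/-- Lower bound for the layer cost of an arbitrary coupling. -/
lemma layer_lower_bound (μ₁ μ₂ : Measure ℝ) [IsProbabilityMeasure μ₁] [IsProbabilityMeasure μ₂]
    (π : Measure (ℝ × ℝ)) [IsProbabilityMeasure π]
    (h1 : π.map Prod.fst = μ₁) (h2 : π.map Prod.snd = μ₂) {r : ℝ} (hr : 0 ≤ r) :
    ∫⁻ t : ℝ, ((μ₂ (Iic t) - μ₁ (Iic (t + r))) + (μ₁ (Iic t) - μ₂ (Iic (t + r)))) ∂volume
      ≤ ∫⁻ z : ℝ × ℝ, ENNReal.ofReal (|z.1 - z.2| - r) ∂π := by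
  classical
  set S₁ : Set ((ℝ × ℝ) × ℝ) := {q | q.1.2 ≤ q.2 ∧ q.2 + r < q.1.1} with hS₁def
  set S₂ : Set ((ℝ × ℝ) × ℝ) := {q | q.1.1 ≤ q.2 ∧ q.2 + r < q.1.2} with hS₂def
  have hmS₁ : MeasurableSet S₁ :=
    (measurableSet_le measurable_fst.snd measurable_snd).inter
      (measurableSet_lt (measurable_snd.add_const r) measurable_fst.fst)
  have hmS₂ : MeasurableSet S₂ :=
    (measurableSet_le measurable_fst.fst measurable_snd).inter
      (measurableSet_lt (measurable_snd.add_const r) measurable_fst.snd)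
  set f : ℝ × ℝ → ℝ → ℝ≥0∞ := fun z t =>
    S₁.indicator 1 (z, t) + S₂.indicator 1 (z, t) with hfdef
  have hum : AEMeasurable (Function.uncurry f) (π.prod volume) := by
    apply Measurable.aemeasurable
    exact (measurable_const.indicator hmS₁).add (measurable_const.indicator hmS₂)
  have hswap := MeasureTheory.lintegral_lintegral_swap hum
  have hL : ∫⁻ z, ∫⁻ t, f z t ∂volume ∂π
      = ∫⁻ z : ℝ × ℝ, ENNReal.ofReal (|z.1 - z.2| - r) ∂π := by
    refine lintegral_congr fun z => ?_
    have hset1 : {t : ℝ | z.2 ≤ t ∧ t + r < z.1} = Ico z.2 (z.1 - r) := by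
      ext t; simp [mem_Ico, lt_sub_iff_add_lt]
    have hset2 : {t : ℝ | z.1 ≤ t ∧ t + r < z.2} = Ico z.1 (z.2 - r) := by
      ext t; simp [mem_Ico, lt_sub_iff_add_lt]
    have hfz : ∀ t, f z t = (Ico z.2 (z.1 - r)).indicator 1 t
        + (Ico z.1 (z.2 - r)).indicator 1 t := by
      intro t
      have hiff1 : ((z, t) ∈ S₁) ↔ t ∈ Ico z.2 (z.1 - r) := by
        simp [hS₁def, mem_Ico, lt_sub_iff_add_lt]
      have hiff2 : ((z, t) ∈ S₂) ↔ t ∈ Ico z.1 (z.2 - r) := by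
        simp [hS₂def, mem_Ico, lt_sub_iff_add_lt]
      show S₁.indicator 1 (z, t) + S₂.indicator 1 (z, t) = _
      congr 1
      · by_cases h : (z, t) ∈ S₁
        · rw [indicator_of_mem h, indicator_of_mem (hiff1.1 h)]; rfl
        · rw [indicator_of_notMem h, indicator_of_notMem (fun hc => h (hiff1.2 hc))]
      · by_cases h : (z, t) ∈ S₂
        · rw [indicator_of_mem h, indicator_of_mem (hiff2.1 h)]; rfl
        · rw [indicator_of_notMem h, indicator_of_notMem (fun hc => h (hiff2.2 hc))]
    rw [lintegral_congr hfz,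
      lintegral_add_left (measurable_one.indicator measurableSet_Ico),
      lintegral_indicator_one measurableSet_Ico, lintegral_indicator_one measurableSet_Ico,
      ofReal_abs_sub_layer hr, hset1, hset2]
  rw [← hL, hswap]
  refine lintegral_mono fun t => ?_
  have hm₁ : MeasurableSet {z : ℝ × ℝ | z.2 ≤ t ∧ t + r < z.1} :=
    (measurableSet_le measurable_snd measurable_const).inter
      (measurableSet_lt measurable_const measurable_fst)
  have hm₂ : MeasurableSet {z : ℝ × ℝ | z.1 ≤ t ∧ t + r < z.2} :=
    (measurableSet_le measurable_fst measurable_const).inter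
      (measurableSet_lt measurable_const measurable_snd)
  have hz₁ : ∫⁻ z : ℝ × ℝ, f z t ∂π
      = π {z : ℝ × ℝ | z.2 ≤ t ∧ t + r < z.1} + π {z : ℝ × ℝ | z.1 ≤ t ∧ t + r < z.2} := by
    have h1' : ∀ z : ℝ × ℝ, f z t
        = {z : ℝ × ℝ | z.2 ≤ t ∧ t + r < z.1}.indicator 1 z
          + {z : ℝ × ℝ | z.1 ≤ t ∧ t + r < z.2}.indicator 1 z := by
      intro z
      have hiff1 : ((z, t) ∈ S₁) ↔ z ∈ {z : ℝ × ℝ | z.2 ≤ t ∧ t + r < z.1} := by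
        simp [hS₁def, mem_setOf_eq]
      have hiff2 : ((z, t) ∈ S₂) ↔ z ∈ {z : ℝ × ℝ | z.1 ≤ t ∧ t + r < z.2} := by
        simp [hS₂def, mem_setOf_eq]
      show S₁.indicator 1 (z, t) + S₂.indicator 1 (z, t) = _
      congr 1
    rw [lintegral_congr h1', lintegral_add_left (measurable_one.indicator hm₁),
      lintegral_indicator_one hm₁, lintegral_indicator_one hm₂]
  rw [hz₁]
  refine add_le_add ?_ ?_
  · rw [tsub_le_iff_right]
    have e2 : μ₂ (Iic t) = π {z : ℝ × ℝ | z.2 ≤ t} := by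
      rw [← h2, Measure.map_apply measurable_snd measurableSet_Iic]; rfl
    have e1 : μ₁ (Iic (t + r)) = π {z : ℝ × ℝ | z.1 ≤ t + r} := by
      rw [← h1, Measure.map_apply measurable_fst measurableSet_Iic]; rfl
    rw [e2, e1]
    refine le_trans (measure_mono ?_) (measure_union_le _ _)
    intro z hz
    by_cases h : t + r < z.1
    · exact Or.inl ⟨hz, h⟩
    · exact Or.inr (not_lt.1 h)
  · rw [tsub_le_iff_right]
    have e2 : μ₁ (Iic t) = π {z : ℝ × ℝ | z.1 ≤ t} := by
      rw [← h1, Measure.map_apply measurable_fst measurableSet_Iic]; rfl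
    have e1 : μ₂ (Iic (t + r)) = π {z : ℝ × ℝ | z.2 ≤ t + r} := by
      rw [← h2, Measure.map_apply measurable_snd measurableSet_Iic]; rfl
    rw [e2, e1]
    refine le_trans (measure_mono ?_) (measure_union_le _ _)
    intro z hz
    by_cases h : t + r < z.2
    · exact Or.inl ⟨hz, h⟩
    · exact Or.inr (not_lt.1 h)

/-- The layer cost of the quantile coupling. -/
lemma layer_quantile (μ₁ μ₂ : Measure ℝ) [IsProbabilityMeasure μ₁] [IsProbabilityMeasure μ₂]
    {r : ℝ} (hr : 0 ≤ r) :
    ∫⁻ s in Ioo (0:ℝ) 1, ENNReal.ofReal (|quantileFn μ₁ s - quantileFn μ₂ s| - r)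
      = ∫⁻ t : ℝ, ((μ₂ (Iic t) - μ₁ (Iic (t + r))) + (μ₁ (Iic t) - μ₂ (Iic (t + r)))) ∂volume := by
  classical
  set F₁ := cdf μ₁ with hF₁
  set F₂ := cdf μ₂ with hF₂
  set T₁ : Set (ℝ × ℝ) := {q | q.1 ≤ F₂ q.2 ∧ F₁ (q.2 + r) < q.1} with hT₁def
  set T₂ : Set (ℝ × ℝ) := {q | q.1 ≤ F₁ q.2 ∧ F₂ (q.2 + r) < q.1} with hT₂def
  have hmF₁ : Measurable (F₁ : ℝ → ℝ) := (monotone_cdf μ₁).measurable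
  have hmF₂ : Measurable (F₂ : ℝ → ℝ) := (monotone_cdf μ₂).measurable
  have hmT₁ : MeasurableSet T₁ :=
    (measurableSet_le measurable_fst (hmF₂.comp measurable_snd)).inter
      (measurableSet_lt (hmF₁.comp (measurable_snd.add_const r)) measurable_fst)
  have hmT₂ : MeasurableSet T₂ :=
    (measurableSet_le measurable_fst (hmF₁.comp measurable_snd)).inter
      (measurableSet_lt (hmF₂.comp (measurable_snd.add_const r)) measurable_fst)
  set f : ℝ → ℝ → ℝ≥0∞ := fun s t => T₁.indicator 1 (s, t) + T₂.indicator 1 (s, t) with hfdef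
  have hum : AEMeasurable (Function.uncurry f) ((volume.restrict (Ioo (0:ℝ) 1)).prod volume) := by
    apply Measurable.aemeasurable
    exact (measurable_one.indicator hmT₁).add (measurable_one.indicator hmT₂)
  have hstep1 : ∫⁻ s in Ioo (0:ℝ) 1, ENNReal.ofReal (|quantileFn μ₁ s - quantileFn μ₂ s| - r)
      = ∫⁻ s in Ioo (0:ℝ) 1, ∫⁻ t, f s t ∂volume := by
    refine setLIntegral_congr_fun measurableSet_Ioo (
      fun s hs => ?_)
    rw [ofReal_abs_sub_layer hr]
    have hset1 : {t : ℝ | quantileFn μ₂ s ≤ t ∧ t + r < quantileFn μ₁ s}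
        = {t : ℝ | s ≤ F₂ t ∧ F₁ (t + r) < s} := by
      ext t
      simp only [mem_setOf_eq]
      constructor
      · rintro ⟨ha, hb⟩
        refine ⟨(quantileFn_le_iff hs.1 hs.2).1 ha, ?_⟩
        by_contra hc
        push_neg at hc
        exact absurd ((quantileFn_le_iff hs.1 hs.2).2 hc) (by linarith)
      · rintro ⟨ha, hb⟩
        refine ⟨(quantileFn_le_iff hs.1 hs.2).2 ha, ?_⟩
        by_contra hc
        push_neg at hc
        exact absurd ((quantileFn_le_iff hs.1 hs.2).1 hc) (by linarith)
    have hset2 : {t : ℝ | quantileFn μ₁ s ≤ t ∧ t + r < quantileFn μ₂ s}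
        = {t : ℝ | s ≤ F₁ t ∧ F₂ (t + r) < s} := by
      ext t
      simp only [mem_setOf_eq]
      constructor
      · rintro ⟨ha, hb⟩
        refine ⟨(quantileFn_le_iff hs.1 hs.2).1 ha, ?_⟩
        by_contra hc
        push_neg at hc
        exact absurd ((quantileFn_le_iff hs.1 hs.2).2 hc) (by linarith)
      · rintro ⟨ha, hb⟩
        refine ⟨(quantileFn_le_iff hs.1 hs.2).2 ha, ?_⟩
        by_contra hc
        push_neg at hc
        exact absurd ((quantileFn_le_iff hs.1 hs.2).1 hc) (by linarith)
    have hm1 : MeasurableSet {t : ℝ | s ≤ F₂ t ∧ F₁ (t + r) < s} :=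
      (measurableSet_le measurable_const hmF₂).inter
        (measurableSet_lt (hmF₁.comp (measurable_id.add_const r)) measurable_const)
    have hm2 : MeasurableSet {t : ℝ | s ≤ F₁ t ∧ F₂ (t + r) < s} :=
      (measurableSet_le measurable_const hmF₁).inter
        (measurableSet_lt (hmF₂.comp (measurable_id.add_const r)) measurable_const)
    have hfz : ∀ t, f s t = ({t : ℝ | s ≤ F₂ t ∧ F₁ (t + r) < s}).indicator 1 t
        + ({t : ℝ | s ≤ F₁ t ∧ F₂ (t + r) < s}).indicator 1 t := by
      intro t
      show T₁.indicator 1 (s, t) + T₂.indicator 1 (s, t) = _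
      congr 1
    rw [hset1, hset2, lintegral_congr hfz,
      lintegral_add_left (measurable_one.indicator hm1),
      lintegral_indicator_one hm1, lintegral_indicator_one hm2]
  rw [hstep1, MeasureTheory.lintegral_lintegral_swap hum]
  refine lintegral_congr fun t => ?_
  have hA : ∀ (ν₁ ν₂ : Measure ℝ) (h₁ : IsProbabilityMeasure ν₁) (h₂ : IsProbabilityMeasure ν₂)
      (T : Set (ℝ × ℝ)) (hT : MeasurableSet T)
      (hTdef : T = {q : ℝ × ℝ | q.1 ≤ cdf ν₂ q.2 ∧ cdf ν₁ (q.2 + r) < q.1}),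
      ∫⁻ s in Ioo (0:ℝ) 1, T.indicator 1 (s, t) ∂volume = ν₂ (Iic t) - ν₁ (Iic (t + r)) := by
    intro ν₁ ν₂ h₁ h₂ T hT hTdef
    have hsl : MeasurableSet {s : ℝ | s ≤ cdf ν₂ t ∧ cdf ν₁ (t + r) < s} :=
      (measurableSet_le measurable_id measurable_const).inter
        (measurableSet_lt measurable_const measurable_id)
    have hind : ∀ s : ℝ, T.indicator (1 : ℝ × ℝ → ℝ≥0∞) (s, t)
        = ({s : ℝ | s ≤ cdf ν₂ t ∧ cdf ν₁ (t + r) < s}).indicator (1 : ℝ → ℝ≥0∞) s := by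
      intro s
      by_cases h : s ∈ {s : ℝ | s ≤ cdf ν₂ t ∧ cdf ν₁ (t + r) < s}
      · rw [indicator_of_mem (show (s, t) ∈ T by rw [hTdef]; exact h),
          indicator_of_mem h]
        rfl
      · rw [indicator_of_notMem (show (s, t) ∉ T by rw [hTdef]; exact h),
          indicator_of_notMem h]
    rw [lintegral_congr hind, lintegral_indicator_one hsl,
      Measure.restrict_apply' measurableSet_Ioo]
    have hseteq : {s : ℝ | s ≤ cdf ν₂ t ∧ cdf ν₁ (t + r) < s} ∩ Ioo (0:ℝ) 1
        = Ioo (0:ℝ) 1 ∩ Ioc (cdf ν₁ (t + r)) (cdf ν₂ t) := by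
      ext s
      simp only [mem_inter_iff, mem_setOf_eq, mem_Ioo, mem_Ioc]
      tauto
    rw [hseteq, volume_Ioo_inter_Ioc (cdf_nonneg ν₁ (t + r)) (cdf_le_one ν₂ t),
      ENNReal.ofReal_sub _ (cdf_nonneg ν₁ (t + r)), ofReal_cdf, ofReal_cdf]
  have key : ∫⁻ s in Ioo (0:ℝ) 1, f s t ∂volume
      = (μ₂ (Iic t) - μ₁ (Iic (t + r))) + (μ₁ (Iic t) - μ₂ (Iic (t + r))) := by
    have hmeas1 : Measurable fun s : ℝ => T₁.indicator (1 : ℝ × ℝ → ℝ≥0∞) (s, t) :=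
      (measurable_one.indicator hmT₁).comp (measurable_id.prodMk measurable_const)
    have : ∀ s : ℝ, f s t = T₁.indicator 1 (s, t) + T₂.indicator 1 (s, t) := fun s => rfl
    rw [lintegral_congr this, lintegral_add_left hmeas1]
    rw [hA μ₁ μ₂ inferInstance inferInstance T₁ hmT₁ hT₁def,
      hA μ₂ μ₁ inferInstance inferInstance T₂ hmT₂ hT₂def]
  exact key

/-- Layer-cake representation of `|w|^p` for `p > 1`. -/
lemma layer_cake_rpow {p : ℝ} (hp : 1 < p) (w : ℝ) :
    ∫⁻ r in Ioi (0:ℝ),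
        ENNReal.ofReal (p * (p-1) * r ^ (p-2)) * ENNReal.ofReal (|w| - r) ∂volume
      = ENNReal.ofReal (|w| ^ p) := by
  have hp0 : p ≠ 0 := by linarith
  have hp1 : p - 1 ≠ 0 := by linarith
  set a := |w| with hadef
  have ha0 : 0 ≤ a := abs_nonneg w
  rcases eq_or_lt_of_le ha0 with ha | ha
  · have hz : ∀ r ∈ Ioi (0:ℝ),
        ENNReal.ofReal (p * (p-1) * r ^ (p-2)) * ENNReal.ofReal (a - r) = 0 := by
      intro r hrr
      have h0 : ENNReal.ofReal (a - r) = 0 :=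
        ENNReal.ofReal_of_nonpos (by rw [← ha]; linarith [mem_Ioi.1 hrr])
      rw [h0, mul_zero]
    rw [setLIntegral_congr_fun measurableSet_Ioi hz,
      lintegral_zero, ← ha, Real.zero_rpow hp0, ENNReal.ofReal_zero]
  · have hsplit : Ioi (0:ℝ) = Ioo 0 a ∪ Ici a := (Ioo_union_Ici_eq_Ioi ha).symm
    have hdisj : Disjoint (Ioo (0:ℝ) a) (Ici a) := by
      refine Set.disjoint_left.2 fun r hr1 hr2 => ?_
      exact absurd (mem_Ici.1 hr2) (not_le.2 hr1.2)
    rw [hsplit, lintegral_union measurableSet_Ici hdisj]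
    have hzero : ∫⁻ r in Ici a,
        ENNReal.ofReal (p * (p-1) * r ^ (p-2)) * ENNReal.ofReal (a - r) ∂volume = 0 := by
      have hz : ∀ r ∈ Ici a,
          ENNReal.ofReal (p * (p-1) * r ^ (p-2)) * ENNReal.ofReal (a - r) = 0 := by
        intro r hrr
        have h0 : ENNReal.ofReal (a - r) = 0 :=
          ENNReal.ofReal_of_nonpos (by linarith [mem_Ici.1 hrr])
        rw [h0, mul_zero]
      rw [setLIntegral_congr_fun measurableSet_Ici hz,
        lintegral_zero]
    rw [hzero, add_zero]
    set g : ℝ → ℝ := fun r => p * (p-1) * (a * r ^ (p-2) - r ^ (p-1)) with hgdef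
    have hfg : ∀ r ∈ Ioo (0:ℝ) a,
        ENNReal.ofReal (p * (p-1) * r ^ (p-2)) * ENNReal.ofReal (a - r)
          = ENNReal.ofReal (g r) := by
      intro r hrr
      have hr0 : (0:ℝ) < r := hrr.1
      have hcn : 0 ≤ p * (p-1) * r ^ (p-2) := by
        have : (0:ℝ) ≤ r ^ (p-2) := Real.rpow_nonneg hr0.le _
        have h1 : (0:ℝ) < p - 1 := by linarith
        positivity
      rw [← ENNReal.ofReal_mul hcn]
      congr 1
      have hr1 : r ^ (p-1) = r ^ (p-2) * r := by
        rw [show p - 1 = (p-2) + 1 by ring, Real.rpow_add hr0, Real.rpow_one]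
      rw [hgdef]
      simp only
      rw [hr1]
      ring
    rw [setLIntegral_congr_fun measurableSet_Ioo
      hfg]
    have hint2 : IntegrableOn (fun r : ℝ => r ^ (p-2)) (Ioo 0 a) volume := by
      have := (intervalIntegrable_iff_integrableOn_Ioc_of_le ha.le).1
        (intervalIntegral.intervalIntegrable_rpow' (by linarith : (-1:ℝ) < p - 2))
      exact this.mono_set Ioo_subset_Ioc_self
    have hint1 : IntegrableOn (fun r : ℝ => r ^ (p-1)) (Ioo 0 a) volume := by
      have := (intervalIntegrable_iff_integrableOn_Ioc_of_le ha.le).1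
        (intervalIntegral.intervalIntegrable_rpow' (by linarith : (-1:ℝ) < p - 1))
      exact this.mono_set Ioo_subset_Ioc_self
    have hgint : IntegrableOn g (Ioo 0 a) volume := by
      exact ((hint2.const_mul a).sub hint1).const_mul (p * (p-1))
    have hgnn : 0 ≤ᵐ[volume.restrict (Ioo 0 a)] g := by
      refine (ae_restrict_iff' measurableSet_Ioo).2 (Filter.Eventually.of_forall
        fun r hrr => ?_)
      have hr0 : (0:ℝ) < r := hrr.1
      have hr1 : r ^ (p-1) = r ^ (p-2) * r := by
        rw [show p - 1 = (p-2) + 1 by ring, Real.rpow_add hr0, Real.rpow_one]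
      have hnn : (0:ℝ) ≤ r ^ (p-2) := Real.rpow_nonneg hr0.le _
      have h1 : (0:ℝ) < p - 1 := by linarith
      have : r ^ (p-1) ≤ a * r ^ (p-2) := by
        rw [hr1]
        nlinarith [mul_le_mul_of_nonneg_left hrr.2.le hnn]
      have h2 : 0 ≤ a * r ^ (p-2) - r ^ (p-1) := by linarith
      rw [hgdef]
      simp only [Pi.zero_apply]
      exact mul_nonneg (mul_nonneg (by linarith) (by linarith)) h2
    rw [← MeasureTheory.ofReal_integral_eq_lintegral_ofReal hgint hgnn]
    congr 1
    have hIoc : ∫ r in Ioo (0:ℝ) a, g r = ∫ r in Ioc (0:ℝ) a, g r :=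
      (MeasureTheory.integral_Ioc_eq_integral_Ioo).symm
    have hival : ∫ r in (0:ℝ)..a, g r = ∫ r in Ioc (0:ℝ) a, g r :=
      intervalIntegral.integral_of_le ha.le
    rw [hIoc, ← hival, hgdef]
    have hii2 : IntervalIntegrable (fun r : ℝ => a * r ^ (p-2)) volume 0 a :=
      (intervalIntegral.intervalIntegrable_rpow' (by linarith : (-1:ℝ) < p - 2)).const_mul a
    have hii1 : IntervalIntegrable (fun r : ℝ => r ^ (p-1)) volume 0 a :=
      intervalIntegral.intervalIntegrable_rpow' (by linarith : (-1:ℝ) < p - 1)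
    simp only
    rw [intervalIntegral.integral_const_mul, intervalIntegral.integral_sub hii2 hii1,
      intervalIntegral.integral_const_mul, integral_rpow (Or.inl (by linarith : (-1:ℝ) < p - 2)),
      integral_rpow (Or.inl (by linarith : (-1:ℝ) < p - 1))]
    rw [show p - 2 + 1 = p - 1 by ring, show p - 1 + 1 = p by ring,
      Real.zero_rpow hp1, Real.zero_rpow hp0]
    have hap : a * a ^ (p-1) = a ^ p := by
      nth_rewrite 1 [show a = a ^ (1:ℝ) by rw [Real.rpow_one]]
      rw [← Real.rpow_add ha, show (1:ℝ) + (p-1) = p by ring]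
    rw [sub_zero, sub_zero]
    field_simp
    rw [mul_assoc p a, hap]
    ring

/-- Main comparison: any coupling has cost at least the quantile cost. -/
lemma quantile_cost_le (p : ℝ) (hp : 1 ≤ p)
    (μ₁ μ₂ : Measure ℝ) [IsProbabilityMeasure μ₁] [IsProbabilityMeasure μ₂]
    (π : Measure (ℝ × ℝ)) [IsProbabilityMeasure π]
    (h1 : π.map Prod.fst = μ₁) (h2 : π.map Prod.snd = μ₂) :
    ∫⁻ s in Ioo (0:ℝ) 1, ENNReal.ofReal (|quantileFn μ₁ s - quantileFn μ₂ s| ^ p)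
      ≤ ∫⁻ z : ℝ × ℝ, ENNReal.ofReal (|z.1 - z.2| ^ p) ∂π := by
  rcases eq_or_lt_of_le hp with hp1 | hp1
  · subst hp1
    simp only [Real.rpow_one]
    calc ∫⁻ s in Ioo (0:ℝ) 1, ENNReal.ofReal |quantileFn μ₁ s - quantileFn μ₂ s|
        = ∫⁻ s in Ioo (0:ℝ) 1, ENNReal.ofReal (|quantileFn μ₁ s - quantileFn μ₂ s| - 0) := by
          simp
      _ = ∫⁻ t : ℝ, ((μ₂ (Iic t) - μ₁ (Iic (t + 0))) + (μ₁ (Iic t) - μ₂ (Iic (t + 0)))) ∂volume :=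
          layer_quantile μ₁ μ₂ le_rfl
      _ ≤ ∫⁻ z : ℝ × ℝ, ENNReal.ofReal (|z.1 - z.2| - 0) ∂π :=
          layer_lower_bound μ₁ μ₂ π h1 h2 le_rfl
      _ = ∫⁻ z : ℝ × ℝ, ENNReal.ofReal |z.1 - z.2| ∂π := by simp
  · have hcm : Measurable fun r : ℝ => ENNReal.ofReal (p * (p-1) * r ^ (p-2)) :=
      ((measurable_id.pow_const (p-2)).const_mul (p * (p-1))).ennreal_ofReal
    have hq1 : AEMeasurable (fun q : ℝ × ℝ => quantileFn μ₁ q.1)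
        ((volume.restrict (Ioo (0:ℝ) 1)).prod (volume.restrict (Ioi (0:ℝ)))) :=
      (aemeasurable_quantileFn (μ := μ₁)).comp_quasiMeasurePreserving
        Measure.quasiMeasurePreserving_fst
    have hq2 : AEMeasurable (fun q : ℝ × ℝ => quantileFn μ₂ q.1)
        ((volume.restrict (Ioo (0:ℝ) 1)).prod (volume.restrict (Ioi (0:ℝ)))) :=
      (aemeasurable_quantileFn (μ := μ₂)).comp_quasiMeasurePreserving
        Measure.quasiMeasurePreserving_fst
    have huncL : AEMeasurable (Function.uncurry fun s r : ℝ =>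
        ENNReal.ofReal (p * (p-1) * r ^ (p-2))
          * ENNReal.ofReal (|quantileFn μ₁ s - quantileFn μ₂ s| - r))
        ((volume.restrict (Ioo (0:ℝ) 1)).prod (volume.restrict (Ioi (0:ℝ)))) := by
      exact (hcm.comp measurable_snd).aemeasurable.mul
        ((((continuous_abs.measurable.comp_aemeasurable (hq1.sub hq2)).sub
          measurable_snd.aemeasurable)).ennreal_ofReal)
    have huncR : AEMeasurable (Function.uncurry fun (z : ℝ × ℝ) (r : ℝ) =>
        ENNReal.ofReal (p * (p-1) * r ^ (p-2)) * ENNReal.ofReal (|z.1 - z.2| - r))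
        (π.prod (volume.restrict (Ioi (0:ℝ)))) := by
      exact ((hcm.comp measurable_snd).mul
        ((((continuous_abs.measurable.comp (measurable_fst.fst.sub measurable_fst.snd)).sub
          measurable_snd)).ennreal_ofReal)
        ).aemeasurable
    have hLHS : ∫⁻ s in Ioo (0:ℝ) 1, ENNReal.ofReal (|quantileFn μ₁ s - quantileFn μ₂ s| ^ p)
        = ∫⁻ r in Ioi (0:ℝ), ENNReal.ofReal (p * (p-1) * r ^ (p-2))
            * ∫⁻ s in Ioo (0:ℝ) 1, ENNReal.ofReal (|quantileFn μ₁ s - quantileFn μ₂ s| - r)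
            ∂volume := by
      rw [lintegral_congr fun s => (layer_cake_rpow hp1 (quantileFn μ₁ s - quantileFn μ₂ s)).symm,
        MeasureTheory.lintegral_lintegral_swap huncL]
      exact lintegral_congr fun r => lintegral_const_mul' _ _ ENNReal.ofReal_ne_top
    have hRHS : ∫⁻ z : ℝ × ℝ, ENNReal.ofReal (|z.1 - z.2| ^ p) ∂π
        = ∫⁻ r in Ioi (0:ℝ), ENNReal.ofReal (p * (p-1) * r ^ (p-2))
            * ∫⁻ z : ℝ × ℝ, ENNReal.ofReal (|z.1 - z.2| - r) ∂π ∂volume := by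
      rw [lintegral_congr fun z : ℝ × ℝ => (layer_cake_rpow hp1 (z.1 - z.2)).symm,
        MeasureTheory.lintegral_lintegral_swap huncR]
      exact lintegral_congr fun r => lintegral_const_mul' _ _ ENNReal.ofReal_ne_top
    rw [hLHS, hRHS]
    refine lintegral_mono_ae ((ae_restrict_iff' measurableSet_Ioi).2
      (Filter.Eventually.of_forall fun r hrr => ?_))
    refine mul_le_mul_right ?_ _
    calc ∫⁻ s in Ioo (0:ℝ) 1, ENNReal.ofReal (|quantileFn μ₁ s - quantileFn μ₂ s| - r)
        = ∫⁻ t : ℝ, ((μ₂ (Iic t) - μ₁ (Iic (t + r))) + (μ₁ (Iic t) - μ₂ (Iic (t + r))))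
            ∂volume := layer_quantile μ₁ μ₂ (le_of_lt hrr)
      _ ≤ ∫⁻ z : ℝ × ℝ, ENNReal.ofReal (|z.1 - z.2| - r) ∂π :=
          layer_lower_bound μ₁ μ₂ π h1 h2 (le_of_lt hrr)

end Master

/-- For probability measures on ℝ with finite p-th moments, the p-Wasserstein cost equals
the L^p distance between the quantile functions:
`W_p^p(μ₁,μ₂) = ∫₀¹ |F₁⁻¹(s) - F₂⁻¹(s)|^p ds`. -/
theorem wasserstein_eq_quantile_integral (p : ℝ) (hp : 1 ≤ p)
    (μ₁ μ₂ : Measure ℝ) [IsProbabilityMeasure μ₁] [IsProbabilityMeasure μ₂]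
    (hm₁ : Integrable (fun x => |x| ^ p) μ₁)
    (hm₂ : Integrable (fun x => |x| ^ p) μ₂) :
    WassersteinP p μ₁ μ₂ =
      ∫ s in Ioo (0 : ℝ) 1, |quantileFn μ₁ s - quantileFn μ₂ s| ^ p := by
  have hp0 : (0:ℝ) ≤ p := by linarith
  have hcont : Continuous fun x : ℝ => |x| ^ p :=
    (Real.continuous_rpow_const hp0).comp continuous_abs
  have hcost_cont : Continuous fun z : ℝ × ℝ => |z.1 - z.2| ^ p :=
    hcont.comp (continuous_fst.sub continuous_snd)
  set R := ∫ s in Ioo (0 : ℝ) 1, |quantileFn μ₁ s - quantileFn μ₂ s| ^ p with hRdef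
  set S : Set ℝ := {c : ℝ | ∃ π : Measure (ℝ × ℝ), IsProbabilityMeasure π ∧
    π.map Prod.fst = μ₁ ∧ π.map Prod.snd = μ₂ ∧ c = ∫ x, |x.1 - x.2| ^ p ∂π} with hSdef
  have hq1 : AEMeasurable (quantileFn μ₁) (volume.restrict (Ioo (0:ℝ) 1)) :=
    aemeasurable_quantileFn
  have hq2 : AEMeasurable (quantileFn μ₂) (volume.restrict (Ioo (0:ℝ) 1)) :=
    aemeasurable_quantileFn
  have hpair : AEMeasurable (fun s => (quantileFn μ₁ s, quantileFn μ₂ s))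
      (volume.restrict (Ioo (0:ℝ) 1)) := hq1.prodMk hq2
  haveI hprob01 : IsProbabilityMeasure (volume.restrict (Ioo (0:ℝ) 1)) := by
    constructor
    rw [Measure.restrict_apply_univ, Real.volume_Ioo]
    norm_num
  set π₀ : Measure (ℝ × ℝ) := Measure.map (fun s => (quantileFn μ₁ s, quantileFn μ₂ s))
    (volume.restrict (Ioo (0:ℝ) 1)) with hπ₀def
  haveI : IsProbabilityMeasure π₀ := Measure.isProbabilityMeasure_map hpair
  have hfst : π₀.map Prod.fst = μ₁ := by
    rw [hπ₀def, AEMeasurable.map_map_of_aemeasurable measurable_fst.aemeasurable hpair]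
    have : (Prod.fst ∘ fun s => (quantileFn μ₁ s, quantileFn μ₂ s)) = quantileFn μ₁ := rfl
    rw [this, map_quantileFn]
  have hsnd : π₀.map Prod.snd = μ₂ := by
    rw [hπ₀def, AEMeasurable.map_map_of_aemeasurable measurable_snd.aemeasurable hpair]
    have : (Prod.snd ∘ fun s => (quantileFn μ₁ s, quantileFn μ₂ s)) = quantileFn μ₂ := rfl
    rw [this, map_quantileFn]
  have hcost : ∫ z : ℝ × ℝ, |z.1 - z.2| ^ p ∂π₀ = R := by
    rw [hπ₀def, integral_map hpair hcost_cont.aestronglyMeasurable]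
  have hmem : R ∈ S := ⟨π₀, inferInstance, hfst, hsnd, hcost.symm⟩
  have hRlint : R = (∫⁻ s in Ioo (0:ℝ) 1,
      ENNReal.ofReal (|quantileFn μ₁ s - quantileFn μ₂ s| ^ p)).toReal := by
    rw [hRdef, integral_eq_lintegral_of_nonneg_ae
      (Filter.Eventually.of_forall fun s => Real.rpow_nonneg (abs_nonneg _) p)
      ((hcont.measurable.comp_aemeasurable (hq1.sub hq2)).aestronglyMeasurable)
      (f := fun s => |quantileFn μ₁ s - quantileFn μ₂ s| ^ p)]
  have hlb : ∀ c ∈ S, R ≤ c := by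
    rintro c ⟨π, hπprob, hπ1, hπ2, rfl⟩
    haveI := hπprob
    have hb : ∀ z : ℝ × ℝ, |z.1 - z.2| ^ p ≤ 2 ^ p * (|z.1| ^ p + |z.2| ^ p) := by
      intro z
      have h1 : |z.1 - z.2| ≤ |z.1| + |z.2| := by
        rw [sub_eq_add_neg]
        refine (abs_add_le _ _).trans ?_
        rw [abs_neg]
      have hM : |z.1| + |z.2| ≤ 2 * max |z.1| |z.2| := by
        have := le_max_left |z.1| |z.2|
        have := le_max_right |z.1| |z.2|
        linarith
      have h2 : |z.1 - z.2| ^ p ≤ (2 * max |z.1| |z.2|) ^ p :=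
        Real.rpow_le_rpow (abs_nonneg _) (h1.trans hM) hp0
      have h3 : (2 * max |z.1| |z.2|) ^ p = 2 ^ p * (max |z.1| |z.2|) ^ p :=
        Real.mul_rpow (by norm_num) (le_max_iff.2 (Or.inl (abs_nonneg _)))
      have h4 : (max |z.1| |z.2|) ^ p ≤ |z.1| ^ p + |z.2| ^ p := by
        rcases max_cases |z.1| |z.2| with ⟨hm, _⟩ | ⟨hm, _⟩ <;> rw [hm]
        · linarith [Real.rpow_nonneg (abs_nonneg z.2) p]
        · linarith [Real.rpow_nonneg (abs_nonneg z.1) p]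
      calc |z.1 - z.2| ^ p ≤ (2 * max |z.1| |z.2|) ^ p := h2
        _ = 2 ^ p * (max |z.1| |z.2|) ^ p := h3
        _ ≤ 2 ^ p * (|z.1| ^ p + |z.2| ^ p) :=
            mul_le_mul_of_nonneg_left h4 (Real.rpow_nonneg (by norm_num) p)
    have hint1 : Integrable (fun z : ℝ × ℝ => |z.1| ^ p) π :=
      (integrable_map_measure hcont.aestronglyMeasurable measurable_fst.aemeasurable).1
        (hπ1.symm ▸ hm₁)
    have hint2 : Integrable (fun z : ℝ × ℝ => |z.2| ^ p) π :=
      (integrable_map_measure hcont.aestronglyMeasurable measurable_snd.aemeasurable).1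
        (hπ2.symm ▸ hm₂)
    have hintπ : Integrable (fun z : ℝ × ℝ => |z.1 - z.2| ^ p) π := by
      refine ((hint1.add hint2).const_mul ((2:ℝ) ^ p)).mono'
        hcost_cont.aestronglyMeasurable ?_
      refine Filter.Eventually.of_forall fun z => ?_
      rw [Real.norm_eq_abs, abs_of_nonneg (Real.rpow_nonneg (abs_nonneg _) p)]
      exact hb z
    have hclint : ∫ z : ℝ × ℝ, |z.1 - z.2| ^ p ∂π
        = (∫⁻ z : ℝ × ℝ, ENNReal.ofReal (|z.1 - z.2| ^ p) ∂π).toReal :=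
      integral_eq_lintegral_of_nonneg_ae
        (Filter.Eventually.of_forall fun z => Real.rpow_nonneg (abs_nonneg _) p)
        hcost_cont.aestronglyMeasurable
    have hfin : (∫⁻ z : ℝ × ℝ, ENNReal.ofReal (|z.1 - z.2| ^ p) ∂π) ≠ ⊤ :=
      hintπ.lintegral_lt_top.ne
    rw [hRlint, hclint]
    exact ENNReal.toReal_mono hfin (quantile_cost_le p hp μ₁ μ₂ π hπ1 hπ2)
  have hW : WassersteinP p μ₁ μ₂ = sInf S := rfl
  rw [hW]
  exact le_antisymm (csInf_le ⟨R, fun c hc => hlb c hc⟩ hmem) (le_csInf ⟨R, hmem⟩ hlb)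
end

section
/- For any two probability measures μ, ν on a compact set M ⊂ ℝ^d, the squared 2-Wasserstein distance satisfies W₂²(μ,ν) ≤ d_TV(μ,ν)² + diam(M)·d_TV(μ,ν), where d_TV is the total variation distance and diam(M) is the (squared) diameter of M. -/
open MeasureTheory Set

/-- Squared 2-Wasserstein distance via couplings. -/
noncomputable def W2sq {d : ℕ} (μ ν : Measure (EuclideanSpace ℝ (Fin d))) : ℝ :=
  sInf {c : ℝ | ∃ π : Measure (EuclideanSpace ℝ (Fin d) × EuclideanSpace ℝ (Fin d)),
    IsProbabilityMeasure π ∧ π.map Prod.fst = μ ∧ π.map Prod.snd = ν ∧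
    c = ∫ x, ‖x.1 - x.2‖ ^ 2 ∂π}

/-- Total variation distance between measures. -/
noncomputable def dTV {d : ℕ} (μ ν : Measure (EuclideanSpace ℝ (Fin d))) : ℝ :=
  sSup {r : ℝ | ∃ B : Set (EuclideanSpace ℝ (Fin d)), MeasurableSet B ∧
    r = |(μ B).toReal - (ν B).toReal|}

/-- For probability measures supported on a compact set `M`, writing `diam` for the
supremum of squared distances in `M`, the squared 2-Wasserstein distance satisfies
`W₂²(μ,ν) ≤ d_TV(μ,ν)² + diam(M)·d_TV(μ,ν)`. -/
theorem W2sq_le_dTV {d : ℕ} (M : Set (EuclideanSpace ℝ (Fin d))) (hM : IsCompact M)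
    (μ ν : Measure (EuclideanSpace ℝ (Fin d)))
    [IsProbabilityMeasure μ] [IsProbabilityMeasure ν]
    (hμ : μ Mᶜ = 0) (hν : ν Mᶜ = 0) :
    W2sq μ ν ≤ dTV μ ν ^ 2 +
      (sSup {r : ℝ | ∃ x ∈ M, ∃ y ∈ M, r = ‖x - y‖ ^ 2}) * dTV μ ν := by
  classical
  unfold W2sq dTV
  set ρ : Measure (EuclideanSpace ℝ (Fin d)) := μ + ν with hρ
  have hμρ : μ ≪ ρ := Measure.AbsolutelyContinuous.rfl.add_right ν
  have hνρ : ν ≪ ρ := by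
    intro s hs
    simp only [hρ, Measure.add_apply, add_eq_zero] at hs
    exact hs.2
  set f := μ.rnDeriv ρ with hfdef
  set g := ν.rnDeriv ρ with hgdef
  have hf : Measurable f := Measure.measurable_rnDeriv μ ρ
  have hg : Measurable g := Measure.measurable_rnDeriv ν ρ
  have hρfin : IsFiniteMeasure ρ := by rw [hρ]; infer_instance
  have hμeq : ρ.withDensity f = μ := @Measure.withDensity_rnDeriv_eq _ _ μ ρ
    Measure.haveLebesgueDecomposition_of_finiteMeasure hμρ
  have hνeq : ρ.withDensity g = ν := @Measure.withDensity_rnDeriv_eq _ _ ν ρ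
    Measure.haveLebesgueDecomposition_of_finiteMeasure hνρ
  set lam : Measure (EuclideanSpace ℝ (Fin d)) := ρ.withDensity (fun x => min (f x) (g x)) with hlam
  set μ' : Measure (EuclideanSpace ℝ (Fin d)) := ρ.withDensity (fun x => f x - min (f x) (g x)) with hμ'
  set ν' : Measure (EuclideanSpace ℝ (Fin d)) := ρ.withDensity (fun x => g x - min (f x) (g x)) with hν'
  have hmin : Measurable (fun x => min (f x) (g x)) := hf.min hg
  have hsplitμ : lam + μ' = μ := by
    rw [hlam, hμ', ← withDensity_add_left hmin, ← hμeq]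
    congr 1
    ext x
    exact add_tsub_cancel_of_le (min_le_left _ _)
  have hsplitν : lam + ν' = ν := by
    rw [hlam, hν', ← withDensity_add_left hmin, ← hνeq]
    congr 1
    ext x
    exact add_tsub_cancel_of_le (min_le_right _ _)
  -- extra instances
  have hμ'fin : IsFiniteMeasure μ' := by
    constructor
    calc μ' univ ≤ (lam + μ') univ := Measure.le_add_left le_rfl univ
    _ = μ univ := by rw [hsplitμ]
    _ < ⊤ := by simp
  have hν'fin : IsFiniteMeasure ν' := by
    constructor
    calc ν' univ ≤ (lam + ν') univ := Measure.le_add_left le_rfl univ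
    _ = ν univ := by rw [hsplitν]
    _ < ⊤ := by simp
  -- total masses
  have hmassμ : lam univ + μ' univ = 1 := by
    have := congrArg (fun m : Measure (EuclideanSpace ℝ (Fin d)) => m univ) hsplitμ
    simpa using this
  have hmassν : lam univ + ν' univ = 1 := by
    have := congrArg (fun m : Measure (EuclideanSpace ℝ (Fin d)) => m univ) hsplitν
    simpa using this
  have hlamfin : lam univ ≠ ⊤ := by
    intro h; rw [h] at hmassμ; simp at hmassμ
  set t : ENNReal := μ' univ with ht
  have htν : ν' univ = t := by
    rw [ht]
    exact ((ENNReal.add_right_inj hlamfin).mp (hmassν.trans hmassμ.symm))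
  have htle : t ≤ 1 := by
    rw [ht, ← hmassμ]; exact le_add_self
  have htne : t ≠ ⊤ := ne_top_of_le_ne_top (by simp) htle
  -- the Hahn set
  set B : Set (EuclideanSpace ℝ (Fin d)) := {x | f x ≤ g x} with hBdef
  have hB : MeasurableSet B := measurableSet_le hf hg
  have hμ'B : μ' B = 0 := by
    rw [hμ', withDensity_apply _ hB]
    rw [setLIntegral_congr_fun hB ((fun x hx => by
      have hx' : f x ≤ g x := hx
      simp only [min_eq_left hx', tsub_self] : ∀ x ∈ B, f x - min (f x) (g x) = 0))]
    simp
  have hν'Bc : ν' Bᶜ = 0 := by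
    rw [hν', withDensity_apply _ hB.compl]
    rw [setLIntegral_congr_fun hB.compl ((fun x hx => by
      have : g x < f x := lt_of_not_ge (by simpa [hBdef] using hx)
      simp only [min_eq_right this.le, tsub_self] : ∀ x ∈ Bᶜ, g x - min (f x) (g x) = 0))]
    simp
  have hν'B : ν' B = t := by
    have := measure_add_measure_compl (μ := ν') hB
    rw [hν'Bc, add_zero, htν] at this
    exact this
  have hμB : μ B = lam B := by
    rw [← hsplitμ, Measure.add_apply, hμ'B, add_zero]
  have hνB : ν B = lam B + t := by
    rw [← hsplitν, Measure.add_apply, hν'B]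
  -- dTV facts
  set S : Set ℝ := {r : ℝ | ∃ B : Set (EuclideanSpace ℝ (Fin d)), MeasurableSet B ∧
    r = |(μ B).toReal - (ν B).toReal|} with hS
  have hSbdd : BddAbove S := by
    refine ⟨1, fun r hr => ?_⟩
    obtain ⟨C, hC, hreq⟩ := hr
    have h1 : (μ C).toReal ≤ 1 := by
      have := measure_mono (subset_univ C) (μ := μ)
      rw [measure_univ] at this
      simpa using ENNReal.toReal_mono (by simp) this
    have h2 : (ν C).toReal ≤ 1 := by
      have := measure_mono (subset_univ C) (μ := ν)
      rw [measure_univ] at this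
      simpa using ENNReal.toReal_mono (by simp) this
    rw [hreq, abs_sub_le_iff]
    constructor <;> [skip; skip] <;>
      linarith [ENNReal.toReal_nonneg (a := μ C), ENNReal.toReal_nonneg (a := ν C)]
  have hS0 : (0:ℝ) ∈ S := ⟨∅, MeasurableSet.empty, by simp⟩
  have hdTV0 : 0 ≤ sSup S := le_csSup hSbdd hS0
  have hlamBfin : lam B ≠ ⊤ := by
    intro h
    have : μ B = ⊤ := by rw [hμB, h]
    exact (measure_ne_top μ B) this
  have hdTVt : t.toReal ≤ sSup S := by
    refine le_csSup hSbdd ⟨B, hB, ?_⟩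
    rw [hμB, hνB, ENNReal.toReal_add hlamBfin htne]
    rw [abs_sub_comm]
    simp [abs_of_nonneg ENNReal.toReal_nonneg]
  -- diam facts
  have hMne : M.Nonempty := by
    by_contra h
    rw [not_nonempty_iff_eq_empty] at h
    rw [h, compl_empty] at hμ
    exact (one_ne_zero (measure_univ (μ := μ) ▸ hμ)).elim
  obtain ⟨x₀, hx₀⟩ := hMne
  set Dset : Set ℝ := {r : ℝ | ∃ x ∈ M, ∃ y ∈ M, r = ‖x - y‖ ^ 2} with hDset
  obtain ⟨C, hC⟩ := isBounded_iff_forall_norm_le.mp hM.isBounded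
  have hDbdd : BddAbove Dset := by
    refine ⟨(2*C)^2, fun r hr => ?_⟩
    obtain ⟨x, hx, y, hy, hreq⟩ := hr
    have hxy : ‖x - y‖ ≤ 2*C := by
      calc ‖x - y‖ ≤ ‖x‖ + ‖y‖ := norm_sub_le x y
      _ ≤ 2*C := by linarith [hC x hx, hC y hy]
    rw [hreq]
    exact pow_le_pow_left₀ (norm_nonneg _) hxy 2
  set D : ℝ := sSup Dset with hD
  have hD0 : 0 ≤ D := le_csSup hDbdd ⟨x₀, hx₀, x₀, hx₀, by simp⟩
  have hDle : ∀ x ∈ M, ∀ y ∈ M, ‖x - y‖ ^ 2 ≤ D :=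
    fun x hx y hy => le_csSup hDbdd ⟨x, hx, y, hy, rfl⟩
  have hMmeas : MeasurableSet M := hM.isClosed.measurableSet
  have hμ'M : μ' Mᶜ = 0 := by
    have hle : μ' ≤ μ := hsplitμ ▸ Measure.le_add_left le_rfl
    exact le_antisymm (hμ ▸ hle Mᶜ) (zero_le)
  have hν'M : ν' Mᶜ = 0 := by
    have hle : ν' ≤ ν := hsplitν ▸ Measure.le_add_left le_rfl
    exact le_antisymm (hν ▸ hle Mᶜ) (zero_le)
  -- W2sq set
  set W : Set ℝ := {c : ℝ | ∃ π : Measure (EuclideanSpace ℝ (Fin d) × EuclideanSpace ℝ (Fin d)),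
    IsProbabilityMeasure π ∧ π.map Prod.fst = μ ∧ π.map Prod.snd = ν ∧
    c = ∫ x, ‖x.1 - x.2‖ ^ 2 ∂π} with hW
  have hWbdd : BddBelow W := by
    refine ⟨0, fun c hc => ?_⟩
    obtain ⟨π, _, _, _, rfl⟩ := hc
    exact integral_nonneg (fun x => by positivity)
  have hdiag : Measurable (fun x : EuclideanSpace ℝ (Fin d) => (x, x)) :=
    measurable_id.prodMk measurable_id
  have hcont : Continuous (fun x : EuclideanSpace ℝ (Fin d) × EuclideanSpace ℝ (Fin d) =>
      ‖x.1 - x.2‖ ^ 2) := ((continuous_fst.sub continuous_snd).norm.pow 2)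
  have hgoal : sInf W ≤ sSup S ^ 2 + D * sSup S := by
    by_cases ht0 : t = 0
    · -- μ = ν, diagonal coupling
      have hμ'0 : μ' = 0 := Measure.measure_univ_eq_zero.mp ht0
      have hν'0 : ν' = 0 := Measure.measure_univ_eq_zero.mp (htν.trans ht0)
      have hμν : μ = ν := by rw [← hsplitμ, ← hsplitν, hμ'0, hν'0]
      set π := μ.map (fun x => (x, x)) with hπ
      have hprob : IsProbabilityMeasure π := Measure.isProbabilityMeasure_map hdiag.aemeasurable
      have hfst : π.map Prod.fst = μ := by
        rw [hπ, Measure.map_map measurable_fst hdiag]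
        exact Measure.map_id
      have hsnd : π.map Prod.snd = ν := by
        rw [hπ, Measure.map_map measurable_snd hdiag, ← hμν]
        exact Measure.map_id
      have hc : (∫ x, ‖x.1 - x.2‖ ^ 2 ∂π) = 0 := by
        rw [hπ, integral_map hdiag.aemeasurable hcont.aestronglyMeasurable]
        simp
      have hmem : (∫ x, ‖x.1 - x.2‖ ^ 2 ∂π) ∈ W := ⟨π, hprob, hfst, hsnd, rfl⟩
      calc sInf W ≤ ∫ x, ‖x.1 - x.2‖ ^ 2 ∂π := csInf_le hWbdd hmem
        _ = 0 := hc
        _ ≤ sSup S ^ 2 + D * sSup S := by positivity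
    · -- maximal coupling
      set π := lam.map (fun x => (x, x)) + t⁻¹ • (μ'.prod ν') with hπ
      have hdfst : (lam.map (fun x => (x, x))).map Prod.fst = lam := by
        rw [Measure.map_map measurable_fst hdiag]; exact Measure.map_id
      have hdsnd : (lam.map (fun x => (x, x))).map Prod.snd = lam := by
        rw [Measure.map_map measurable_snd hdiag]; exact Measure.map_id
      have hfst : π.map Prod.fst = μ := by
        rw [hπ, Measure.map_add _ _ measurable_fst, Measure.map_smul, hdfst,
          Measure.map_fst_prod, htν, smul_smul, ENNReal.inv_mul_cancel ht0 htne, one_smul,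
          hsplitμ]
      have hsnd : π.map Prod.snd = ν := by
        rw [hπ, Measure.map_add _ _ measurable_snd, Measure.map_smul, hdsnd,
          Measure.map_snd_prod, ← ht, smul_smul, ENNReal.inv_mul_cancel ht0 htne, one_smul,
          hsplitν]
      have hπuniv : (π.map Prod.fst) univ = π univ := by
        rw [Measure.map_apply measurable_fst MeasurableSet.univ, preimage_univ]
      have hprob : IsProbabilityMeasure π := by
        constructor
        rw [← hπuniv, hfst, measure_univ]
      have hmE : Measurable (fun x : EuclideanSpace ℝ (Fin d) × EuclideanSpace ℝ (Fin d) =>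
          ENNReal.ofReal (‖x.1 - x.2‖ ^ 2)) := hcont.measurable.ennreal_ofReal
      have hint : (∫ x, ‖x.1 - x.2‖ ^ 2 ∂π)
          = (∫⁻ x, ENNReal.ofReal (‖x.1 - x.2‖ ^ 2) ∂π).toReal :=
        integral_eq_lintegral_of_nonneg_ae (Filter.Eventually.of_forall fun x => by positivity)
          hcont.aestronglyMeasurable
      have hL1 : (∫⁻ x, ENNReal.ofReal (‖x.1 - x.2‖ ^ 2) ∂(lam.map (fun x => (x, x)))) = 0 := by
        rw [lintegral_map hmE hdiag]
        simp
      have hcompl : (μ'.prod ν') ((M ×ˢ M)ᶜ) = 0 := by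
        rw [compl_prod_eq_union]
        refine le_antisymm (le_trans (measure_union_le _ _) ?_) (zero_le)
        rw [Measure.prod_prod, Measure.prod_prod, hμ'M, hν'M]
        simp
      have hae : ∀ᵐ p ∂(μ'.prod ν'),
          ENNReal.ofReal (‖p.1 - p.2‖ ^ 2) ≤ ENNReal.ofReal D := by
        have hmem : ∀ᵐ p ∂(μ'.prod ν'), p ∈ M ×ˢ M := by
          rw [ae_iff]
          exact hcompl
        filter_upwards [hmem] with p hp
        exact ENNReal.ofReal_le_ofReal (hDle p.1 hp.1 p.2 hp.2)
      have hL2 : (∫⁻ p, ENNReal.ofReal (‖p.1 - p.2‖ ^ 2) ∂(μ'.prod ν'))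
          ≤ ENNReal.ofReal D * (t * t) := by
        calc (∫⁻ p, ENNReal.ofReal (‖p.1 - p.2‖ ^ 2) ∂(μ'.prod ν'))
            ≤ ∫⁻ _, ENNReal.ofReal D ∂(μ'.prod ν') := lintegral_mono_ae hae
          _ = ENNReal.ofReal D * (t * t) := by
            rw [lintegral_const, ← univ_prod_univ, Measure.prod_prod, htν, ← ht]
      have hL : (∫⁻ x, ENNReal.ofReal (‖x.1 - x.2‖ ^ 2) ∂π) ≤ ENNReal.ofReal D * t := by
        rw [hπ, lintegral_add_measure, lintegral_smul_measure, hL1, zero_add]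
        calc t⁻¹ * (∫⁻ p, ENNReal.ofReal (‖p.1 - p.2‖ ^ 2) ∂(μ'.prod ν'))
            ≤ t⁻¹ * (ENNReal.ofReal D * (t * t)) := mul_le_mul_right hL2 _
          _ = ENNReal.ofReal D * ((t⁻¹ * t) * t) := by ring
          _ = ENNReal.ofReal D * t := by
            rw [ENNReal.inv_mul_cancel ht0 htne, one_mul]
      have hc : (∫ x, ‖x.1 - x.2‖ ^ 2 ∂π) ≤ D * t.toReal := by
        rw [hint]
        calc (∫⁻ x, ENNReal.ofReal (‖x.1 - x.2‖ ^ 2) ∂π).toReal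
            ≤ (ENNReal.ofReal D * t).toReal :=
              ENNReal.toReal_mono (ENNReal.mul_ne_top ENNReal.ofReal_ne_top htne) hL
          _ = D * t.toReal := by
            rw [ENNReal.toReal_mul, ENNReal.toReal_ofReal hD0]
      have hmem : (∫ x, ‖x.1 - x.2‖ ^ 2 ∂π) ∈ W := ⟨π, hprob, hfst, hsnd, rfl⟩
      calc sInf W ≤ ∫ x, ‖x.1 - x.2‖ ^ 2 ∂π := csInf_le hWbdd hmem
        _ ≤ D * t.toReal := hc
        _ ≤ D * sSup S := mul_le_mul_of_nonneg_left hdTVt hD0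
        _ ≤ sSup S ^ 2 + D * sSup S := le_add_of_nonneg_left (sq_nonneg _)
  exact hgoal
end

section
/- Let ν be an absolutely continuous probability measure on a compact set M ⊂ ℝ^d whose density f is Lipschitz continuous. Let (d₁,…,d_m) be an equidistant rectangular grid on M with mesh ζ = min_{k≠l} ‖d_k − d_l‖, and let ν_r be the discrete measure placing mass r_k ∝ f(d_k) at d_k. Then W₂²(ν, ν_r) = O(ζ) as ζ → 0 (in particular W₂²(ν,ν_r) → 0). -/
open MeasureTheory Set
open scoped ENNReal NNReal

/-- The half-open grid cell (rectangular bin) with lower vertex `v` and spacing `h`. -/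
def gridCell {d : ℕ} (v : EuclideanSpace ℝ (Fin d)) (h : ℝ) :
    Set (EuclideanSpace ℝ (Fin d)) :=
  {x | ∀ i, v i ≤ x i ∧ x i < v i + h}

lemma gridCell_eq_preimage {d : ℕ} (v : EuclideanSpace ℝ (Fin d)) (h : ℝ) :
    gridCell v h = (MeasurableEquiv.toLp 2 (Fin d → ℝ)).symm ⁻¹'
      (Set.pi univ fun i => Ico (v i) (v i + h)) := by
  ext x
  simp [gridCell, Set.mem_pi, Ico]

lemma gridCell_measurable {d : ℕ} (v : EuclideanSpace ℝ (Fin d)) (h : ℝ) :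
    MeasurableSet (gridCell v h) := by
  rw [gridCell_eq_preimage]
  exact (MeasurableEquiv.toLp 2 (Fin d → ℝ)).symm.measurable
    (MeasurableSet.univ_pi fun i => measurableSet_Ico)

lemma gridCell_volume {d : ℕ} (v : EuclideanSpace ℝ (Fin d)) {h : ℝ} (hh : 0 ≤ h) :
    volume (gridCell v h) = ENNReal.ofReal (h ^ d) := by
  rw [gridCell_eq_preimage,
    (EuclideanSpace.volume_preserving_symm_measurableEquiv_toLp (Fin d)).measure_preimage
      ((MeasurableSet.univ_pi fun i => measurableSet_Ico).nullMeasurableSet)]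
  simp [Real.volume_pi_Ico, ENNReal.ofReal_pow hh]

lemma gridCell_norm_le {d : ℕ} {v x : EuclideanSpace ℝ (Fin d)} {h : ℝ} (hh : 0 ≤ h)
    (hx : x ∈ gridCell v h) : ‖x - v‖ ≤ Real.sqrt d * h := by
  rw [EuclideanSpace.norm_eq]
  have : ∀ i, ‖(x - v) i‖ ^ 2 ≤ h ^ 2 := by
    intro i
    have h1 := (hx i).1
    have h2 := (hx i).2
    have : (x - v) i = x i - v i := rfl
    rw [this, Real.norm_eq_abs, sq_abs]
    nlinarith
  calc Real.sqrt (∑ i, ‖(x - v) i‖ ^ 2) ≤ Real.sqrt (∑ _i : Fin d, h ^ 2) :=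
        Real.sqrt_le_sqrt (Finset.sum_le_sum fun i _ => this i)
    _ = Real.sqrt d * h := by
        rw [Finset.sum_const, Finset.card_univ, Fintype.card_fin, nsmul_eq_mul,
          Real.sqrt_mul (by positivity), Real.sqrt_sq hh]

lemma map_finset_sum' {α β : Type*} [MeasurableSpace α] [MeasurableSpace β]
    {ι : Type*} (s : Finset ι) (μ : ι → Measure α) {g : α → β} (hg : Measurable g) :
    (∑ i ∈ s, μ i).map g = ∑ i ∈ s, (μ i).map g := by
  ext t ht
  rw [Measure.map_apply hg ht, Measure.finset_sum_apply, Measure.finset_sum_apply]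
  exact Finset.sum_congr rfl fun i _ => (Measure.map_apply hg ht).symm

lemma W2sq_le_of_coupling {d : ℕ} (μ ν : Measure (EuclideanSpace ℝ (Fin d)))
    (π : Measure (EuclideanSpace ℝ (Fin d) × EuclideanSpace ℝ (Fin d)))
    (hπ : IsProbabilityMeasure π) (h1 : π.map Prod.fst = μ) (h2 : π.map Prod.snd = ν)
    {c : ℝ} (hc : 0 ≤ c)
    (hint : ∫⁻ x, ENNReal.ofReal (‖x.1 - x.2‖ ^ 2) ∂π ≤ ENNReal.ofReal c) :
    W2sq μ ν ≤ c := by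
  have hcont : Continuous fun x : EuclideanSpace ℝ (Fin d) × EuclideanSpace ℝ (Fin d) =>
      ‖x.1 - x.2‖ ^ 2 := by continuity
  have heq : ∫ x, ‖x.1 - x.2‖ ^ 2 ∂π
      = (∫⁻ x, ENNReal.ofReal (‖x.1 - x.2‖ ^ 2) ∂π).toReal := by
    rw [integral_eq_lintegral_of_nonneg_ae (Filter.Eventually.of_forall fun x => sq_nonneg _)
      hcont.aestronglyMeasurable]
  have hle : ∫ x, ‖x.1 - x.2‖ ^ 2 ∂π ≤ c := by
    rw [heq]
    exact ENNReal.toReal_le_of_le_ofReal hc hint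
  refine le_trans (csInf_le ?_ ⟨π, hπ, h1, h2, rfl⟩) hle
  refine ⟨0, fun y hy => ?_⟩
  obtain ⟨π', _, _, _, rfl⟩ := hy
  exact integral_nonneg fun x => sq_nonneg _

set_option maxHeartbeats 2000000 in
lemma main_case {d : ℕ} {m : ℕ} (M : Set (EuclideanSpace ℝ (Fin d)))
    (hM : IsCompact M) (ν : Measure (EuclideanSpace ℝ (Fin d)))
    [IsProbabilityMeasure ν] (hνM : ν Mᶜ = 0)
    (f : EuclideanSpace ℝ (Fin d) → ℝ) (L : NNReal) (hf : LipschitzWith L f)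
    (hf0 : ∀ x, 0 ≤ f x)
    (hdens : ν = volume.withDensity (fun x => ENNReal.ofReal (f x)))
    (pts : Fin m → EuclideanSpace ℝ (Fin d)) (ζ R : ℝ)
    (hζ : 0 < ζ) (hR : 0 < R) (hRM : M ⊆ Metric.closedBall 0 R)
    (hζ0 : ζ ≤ 2*R+1)
    (hdisj : ∀ k l, k ≠ l → Disjoint (gridCell (pts k) ζ) (gridCell (pts l) ζ))
    (hcover : M ⊆ ⋃ k, gridCell (pts k) ζ)
    (hmem : ∀ k, pts k ∈ M)
    (hS : 0 < ∑ j, f (pts j)) :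
    W2sq ν (∑ k, ENNReal.ofReal (f (pts k) / ∑ j, f (pts j)) •
        Measure.dirac (pts k)) ≤
      (d * (2*R+1) + (Real.sqrt d * (2*R+1) + 2*R)^2 *
        (2 * L * Real.sqrt d *
          (volume (Metric.cthickening (Real.sqrt d * (2*R+1)) M)).toReal)) * ζ := by
  classical
  set sd : ℝ := Real.sqrt d with hsd_def
  have hsd0 : 0 ≤ sd := Real.sqrt_nonneg _
  set ζz : ℝ := 2*R+1 with hζz_def
  have hζzpos : 0 < ζz := by positivity
  set δ0 : ℝ := sd * ζz with hδ0_def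
  have hδ00 : 0 ≤ δ0 := by positivity
  set B : ℝ := δ0 + 2*R with hB_def
  have hB0 : 0 ≤ B := by positivity
  set V : ℝ := (volume (Metric.cthickening δ0 M)).toReal with hV_def
  have hV0 : 0 ≤ V := ENNReal.toReal_nonneg
  set Cl : Fin m → Set (EuclideanSpace ℝ (Fin d)) := fun k => gridCell (pts k) ζ with hCl_def
  have hClm : ∀ k, MeasurableSet (Cl k) := fun k => gridCell_measurable _ _
  set S : ℝ := ∑ j, f (pts j) with hS_def
  set r : Fin m → ℝ := fun k => f (pts k) / S with hr_def
  set p : Fin m → ℝ := fun k => (ν (Cl k)).toReal with hp_def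
  have hp0 : ∀ k, 0 ≤ p k := fun k => ENNReal.toReal_nonneg
  have hr0 : ∀ k, 0 ≤ r k := fun k => div_nonneg (hf0 _) hS.le
  have hνCl : ∀ k, ν (Cl k) = ENNReal.ofReal (p k) := fun k =>
    (ENNReal.ofReal_toReal (measure_ne_top ν _)).symm
  have hrsum : ∑ k, r k = 1 := by
    rw [hr_def, ← Finset.sum_div]
    exact div_self hS.ne'
  have hdisj' : Pairwise (Function.onFun Disjoint Cl) := fun k l h => hdisj k l h
  have hνsum : ∑ k, ν (Cl k) = 1 := by
    rw [← tsum_fintype (L := SummationFilter.unconditional _), ← measure_iUnion hdisj' hClm]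
    have h0 : ν (⋃ k, Cl k)ᶜ = 0 :=
      measure_mono_null (compl_subset_compl.mpr hcover) hνM
    refine le_antisymm (le_trans (measure_mono (subset_univ _)) measure_univ.le) ?_
    calc (1 : ℝ≥0∞) = ν univ := measure_univ.symm
      _ = ν ((⋃ k, Cl k) ∪ (⋃ k, Cl k)ᶜ) := by rw [union_compl_self]
      _ ≤ ν (⋃ k, Cl k) + ν (⋃ k, Cl k)ᶜ := measure_union_le _ _
      _ = ν (⋃ k, Cl k) := by rw [h0, add_zero]
  have hpsum : ∑ k, p k = 1 := by
    have := congrArg ENNReal.toReal hνsum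
    rwa [ENNReal.toReal_sum (fun k _ => measure_ne_top ν _), ENNReal.toReal_one] at this
  set mn : Fin m → ℝ := fun k => min (p k) (r k) with hmn_def
  have hmn0 : ∀ k, 0 ≤ mn k := fun k => le_min (hp0 k) (hr0 k)
  have hmnp : ∀ k, mn k ≤ p k := fun k => min_le_left _ _
  have hmnr : ∀ k, mn k ≤ r k := fun k => min_le_right _ _
  set τ : ℝ := ∑ k, (r k - mn k) with hτ_def
  have hτ0 : 0 ≤ τ := Finset.sum_nonneg fun k _ => sub_nonneg.mpr (hmnr k)
  have hτalt : τ = ∑ k, (p k - mn k) := by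
    rw [hτ_def, Finset.sum_sub_distrib, Finset.sum_sub_distrib, hrsum, hpsum]
  have hτ0' : τ = 0 → ∀ k, r k - mn k = 0 := by
    intro h k
    have h2 : ∑ k, (r k - mn k) = 0 := by rw [← hτ_def, h]
    exact (Finset.sum_eq_zero_iff_of_nonneg
      (fun k _ => sub_nonneg.mpr (hmnr k))).mp h2 k (Finset.mem_univ k)
  have hτ0p : τ = 0 → ∀ k, p k - mn k = 0 := by
    intro h k
    have h2 : ∑ k, (p k - mn k) = 0 := by rw [← hτalt, h]
    exact (Finset.sum_eq_zero_iff_of_nonneg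
      (fun k _ => sub_nonneg.mpr (hmnp k))).mp h2 k (Finset.mem_univ k)
  -- scalar coefficients
  set a : Fin m → ℝ≥0∞ := fun k => ENNReal.ofReal (mn k / p k) with ha_def
  set b : Fin m → ℝ≥0∞ := fun k => ENNReal.ofReal ((r k - mn k) / τ) with hb_def
  set cc : Fin m → ℝ≥0∞ := fun k => ENNReal.ofReal ((p k - mn k) / p k) with hcc_def
  set μm : Measure (EuclideanSpace ℝ (Fin d)) := ∑ l, cc l • ν.restrict (Cl l) with hμm_def
  set A : Fin m → Measure (EuclideanSpace ℝ (Fin d)) :=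
    fun k => a k • ν.restrict (Cl k) + b k • μm with hA_def
  set π : Measure (EuclideanSpace ℝ (Fin d) × EuclideanSpace ℝ (Fin d)) :=
    ∑ k, (A k).map (fun x => (x, pts k)) with hπ_def
  have hmnp_mul : ∀ k, mn k / p k * p k = mn k := by
    intro k
    rcases eq_or_lt_of_le (hp0 k) with h|h
    · have hmn : mn k = 0 := by have := hmnp k; have := hmn0 k; linarith
      rw [hmn, ← h]; simp
    · exact div_mul_cancel₀ _ h.ne'
  have hpmn_mul : ∀ k, (p k - mn k) / p k * p k = p k - mn k := by
    intro k
    rcases eq_or_lt_of_le (hp0 k) with h|h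
    · have hmn : mn k = 0 := by have := hmnp k; have := hmn0 k; linarith
      rw [hmn, ← h]; simp
    · exact div_mul_cancel₀ _ h.ne'
  have hbt_mul : ∀ k, (r k - mn k) / τ * τ = r k - mn k := by
    intro k
    rcases eq_or_lt_of_le hτ0 with h|h
    · rw [hτ0' h.symm k, ← h]; simp
    · exact div_mul_cancel₀ _ h.ne'
  have hXzero : ∀ k, p k = 0 → ν.restrict (Cl k) = 0 := by
    intro k h
    rw [Measure.restrict_eq_zero, hνCl k, h, ENNReal.ofReal_zero]
  have hAX : ∀ k, a k • ν.restrict (Cl k) + cc k • ν.restrict (Cl k) = ν.restrict (Cl k) := by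
    intro k
    rcases eq_or_lt_of_le (hp0 k) with h|h
    · rw [hXzero k h.symm]; simp
    · rw [← add_smul]
      have hac : a k + cc k = 1 := by
        show ENNReal.ofReal (mn k / p k) + ENNReal.ofReal ((p k - mn k) / p k) = 1
        rw [← ENNReal.ofReal_add (div_nonneg (hmn0 k) (hp0 k))
          (div_nonneg (sub_nonneg.mpr (hmnp k)) (hp0 k)), ← add_div]
        have : mn k + (p k - mn k) = p k := by ring
        rw [this, div_self h.ne', ENNReal.ofReal_one]
      rw [hac, one_smul]
  have hXsum : ∑ k, ν.restrict (Cl k) = ν := by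
    rw [← Measure.sum_fintype, ← Measure.restrict_iUnion hdisj' hClm]
    apply Measure.restrict_eq_self_of_ae_mem
    rw [ae_iff]
    exact measure_mono_null (compl_subset_compl.mpr hcover) hνM
  have hμm_univ : μm univ = ENNReal.ofReal τ := by
    rw [hμm_def, Measure.finset_sum_apply]
    have hterm : ∀ l, (cc l • ν.restrict (Cl l)) univ = ENNReal.ofReal (p l - mn l) := by
      intro l
      rw [Measure.smul_apply, smul_eq_mul, Measure.restrict_apply_univ, hνCl l]
      show ENNReal.ofReal ((p l - mn l) / p l) * ENNReal.ofReal (p l) = _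
      rw [← ENNReal.ofReal_mul (div_nonneg (sub_nonneg.mpr (hmnp l)) (hp0 l)), hpmn_mul l]
    rw [Finset.sum_congr rfl fun l _ => hterm l, ← ENNReal.ofReal_sum_of_nonneg
      (fun l _ => sub_nonneg.mpr (hmnp l)), ← hτalt]
  have hA_univ : ∀ k, A k univ = ENNReal.ofReal (r k) := by
    intro k
    show (a k • ν.restrict (Cl k) + b k • μm) univ = _
    rw [Measure.add_apply, Measure.smul_apply, Measure.smul_apply, smul_eq_mul, smul_eq_mul,
      Measure.restrict_apply_univ, hνCl k, hμm_univ]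
    show ENNReal.ofReal (mn k / p k) * ENNReal.ofReal (p k)
      + ENNReal.ofReal ((r k - mn k) / τ) * ENNReal.ofReal τ = _
    rw [← ENNReal.ofReal_mul (div_nonneg (hmn0 k) (hp0 k)),
      ← ENNReal.ofReal_mul (div_nonneg (sub_nonneg.mpr (hmnr k)) hτ0),
      hmnp_mul k, hbt_mul k,
      ← ENNReal.ofReal_add (hmn0 k) (sub_nonneg.mpr (hmnr k))]
    have : mn k + (r k - mn k) = r k := by ring
    rw [this]
  have hι : ∀ k : Fin m, Measurable fun x : EuclideanSpace ℝ (Fin d) => (x, pts k) :=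
    fun k => measurable_id.prodMk measurable_const
  have hfst : π.map Prod.fst = ν := by
    rw [hπ_def, map_finset_sum' _ _ measurable_fst]
    have h1 : ∀ k, ((A k).map (fun x => (x, pts k))).map Prod.fst = A k := by
      intro k
      rw [Measure.map_map measurable_fst (hι k)]
      have : (Prod.fst ∘ fun x : EuclideanSpace ℝ (Fin d) => (x, pts k)) = id := rfl
      rw [this, Measure.map_id]
    rw [Finset.sum_congr rfl fun k _ => h1 k]
    have hsplit : ∀ k : Fin m, A k = a k • ν.restrict (Cl k) + b k • μm := fun k => rfl
    rw [Finset.sum_congr rfl fun k _ => hsplit k, Finset.sum_add_distrib, ← Finset.sum_smul]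
    have hbμ : (∑ k, b k) • μm = μm := by
      rcases eq_or_lt_of_le hτ0 with h|h
      · have hz : μm = 0 := by
          rw [hμm_def]
          apply Finset.sum_eq_zero
          intro l _
          have : cc l = 0 := by
            show ENNReal.ofReal ((p l - mn l) / p l) = 0
            rw [hτ0p h.symm l, zero_div, ENNReal.ofReal_zero]
          rw [this, zero_smul]
        rw [hz, smul_zero]
      · have hb1 : ∑ k, b k = 1 := by
          show ∑ k, ENNReal.ofReal ((r k - mn k) / τ) = 1
          rw [← ENNReal.ofReal_sum_of_nonneg
            (fun k _ => div_nonneg (sub_nonneg.mpr (hmnr k)) hτ0),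
            ← Finset.sum_div, ← hτ_def, div_self h.ne', ENNReal.ofReal_one]
        rw [hb1, one_smul]
    rw [hbμ, hμm_def, ← Finset.sum_add_distrib,
      Finset.sum_congr rfl fun k _ => hAX k]
    exact hXsum
  have hsnd : π.map Prod.snd = ∑ k, ENNReal.ofReal (r k) • Measure.dirac (pts k) := by
    rw [hπ_def, map_finset_sum' _ _ measurable_snd]
    refine Finset.sum_congr rfl fun k _ => ?_
    rw [Measure.map_map measurable_snd (hι k)]
    have : (Prod.snd ∘ fun x : EuclideanSpace ℝ (Fin d) => (x, pts k)) = fun _ => pts k := rfl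
    rw [this, Measure.map_const, hA_univ k]
  have hπprob : IsProbabilityMeasure π := by
    constructor
    rw [← Set.preimage_univ
        (f := @Prod.fst (EuclideanSpace ℝ (Fin d)) (EuclideanSpace ℝ (Fin d))),
      ← Measure.map_apply measurable_fst MeasurableSet.univ, hfst]
    exact measure_univ
  -- analytic estimates
  have hnorm_cell : ∀ k, ∀ x ∈ Cl k, ‖x - pts k‖ ≤ sd * ζ := fun k x hx =>
    gridCell_norm_le hζ.le hx
  have hvol : ∀ k, volume (Cl k) = ENNReal.ofReal (ζ ^ d) := fun k =>
    gridCell_volume _ hζ.le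
  have hfb : ∀ k, ∀ x ∈ Cl k, |f x - f (pts k)| ≤ L * (sd * ζ) := by
    intro k x hx
    have h1 := hf.dist_le_mul x (pts k)
    rw [Real.dist_eq] at h1
    have h2 : dist x (pts k) ≤ sd * ζ := by
      rw [dist_eq_norm]; exact hnorm_cell k x hx
    calc |f x - f (pts k)| ≤ L * dist x (pts k) := h1
      _ ≤ L * (sd * ζ) := mul_le_mul_of_nonneg_left h2 L.coe_nonneg
  set Lδ : ℝ := L * (sd * ζ) with hLδ_def
  have hLδ0 : 0 ≤ Lδ := mul_nonneg L.coe_nonneg (mul_nonneg hsd0 hζ.le)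
  have hζd0 : (0:ℝ) ≤ ζ ^ d := pow_nonneg hζ.le d
  have hcell : ∀ k, |p k - f (pts k) * ζ ^ d| ≤ Lδ * ζ ^ d := by
    intro k
    have hνk : ν (Cl k) = ∫⁻ x in Cl k, ENNReal.ofReal (f x) ∂volume := by
      conv_lhs => rw [hdens]
      exact withDensity_apply _ (hClm k)
    have hub : ν (Cl k) ≤ ENNReal.ofReal ((f (pts k) + Lδ) * ζ ^ d) := by
      rw [hνk]
      calc ∫⁻ x in Cl k, ENNReal.ofReal (f x) ∂volume
          ≤ ∫⁻ _x in Cl k, ENNReal.ofReal (f (pts k) + Lδ) ∂volume := by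
            refine lintegral_mono_ae ?_
            filter_upwards [ae_restrict_mem (hClm k)] with x hx
            refine ENNReal.ofReal_le_ofReal ?_
            have := abs_le.mp (hfb k x hx)
            linarith [this.1, this.2]
        _ = ENNReal.ofReal (f (pts k) + Lδ) * volume (Cl k) := by
            rw [lintegral_const, Measure.restrict_apply_univ]
        _ = ENNReal.ofReal ((f (pts k) + Lδ) * ζ ^ d) := by
            rw [hvol k, ← ENNReal.ofReal_mul (add_nonneg (hf0 _) hLδ0)]
    have hlb : ENNReal.ofReal ((f (pts k) - Lδ) * ζ ^ d) ≤ ν (Cl k) := by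
      rw [hνk]
      calc ENNReal.ofReal ((f (pts k) - Lδ) * ζ ^ d)
          = ENNReal.ofReal (f (pts k) - Lδ) * volume (Cl k) := by
            rw [hvol k, ← ENNReal.ofReal_mul' hζd0]
        _ = ∫⁻ _x in Cl k, ENNReal.ofReal (f (pts k) - Lδ) ∂volume := by
            rw [lintegral_const, Measure.restrict_apply_univ]
        _ ≤ ∫⁻ x in Cl k, ENNReal.ofReal (f x) ∂volume := by
            refine lintegral_mono_ae ?_
            filter_upwards [ae_restrict_mem (hClm k)] with x hx
            refine ENNReal.ofReal_le_ofReal ?_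
            have := abs_le.mp (hfb k x hx)
            linarith [this.1, this.2]
    have hub' : p k ≤ (f (pts k) + Lδ) * ζ ^ d :=
      ENNReal.toReal_le_of_le_ofReal
        (mul_nonneg (add_nonneg (hf0 _) hLδ0) hζd0) hub
    have hlb' : (f (pts k) - Lδ) * ζ ^ d ≤ p k := by
      rcases le_or_gt (f (pts k) - Lδ) 0 with h|h
      · exact le_trans (by nlinarith) (hp0 k)
      · exact (ENNReal.ofReal_le_iff_le_toReal (measure_ne_top ν _)).mp hlb
    rw [abs_le]
    constructor <;> nlinarith
  have hsubset : ∀ k, Cl k ⊆ Metric.cthickening δ0 M := by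
    intro k x hx
    apply Metric.closedBall_subset_cthickening (hmem k) δ0
    rw [Metric.mem_closedBall, dist_eq_norm]
    calc ‖x - pts k‖ ≤ sd * ζ := hnorm_cell k x hx
      _ ≤ δ0 := by rw [hδ0_def]; exact mul_le_mul_of_nonneg_left hζ0 hsd0
  have hmV : (m : ℝ) * ζ ^ d ≤ V := by
    have h1 : ∑ k : Fin m, volume (Cl k) ≤ volume (Metric.cthickening δ0 M) := by
      rw [← tsum_fintype (L := SummationFilter.unconditional _), ← measure_iUnion hdisj' hClm]
      exact measure_mono (iUnion_subset hsubset)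
    rw [Finset.sum_congr rfl (fun k _ => hvol k), Finset.sum_const, Finset.card_univ,
      Fintype.card_fin, nsmul_eq_mul] at h1
    have h2 : (m : ℝ≥0∞) * ENNReal.ofReal (ζ ^ d) = ENNReal.ofReal (m * ζ ^ d) := by
      rw [ENNReal.ofReal_mul (Nat.cast_nonneg m), ENNReal.ofReal_natCast]
    rw [h2] at h1
    have h3 := ENNReal.toReal_mono (hM.cthickening.measure_lt_top).ne h1
    rwa [ENNReal.toReal_ofReal (by positivity)] at h3
  set q : Fin m → ℝ := fun k => f (pts k) * ζ ^ d with hq_def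
  have hE2 : ∑ k, |p k - q k| ≤ Lδ * V := by
    calc ∑ k, |p k - q k| ≤ ∑ _k : Fin m, Lδ * ζ ^ d :=
        Finset.sum_le_sum fun k _ => hcell k
      _ = (m:ℝ) * (Lδ * ζ ^ d) := by
          rw [Finset.sum_const, Finset.card_univ, Fintype.card_fin, nsmul_eq_mul]
      _ = Lδ * ((m:ℝ) * ζ ^ d) := by ring
      _ ≤ Lδ * V := mul_le_mul_of_nonneg_left hmV hLδ0
  have hqQ : ∀ k, q k = r k * (S * ζ ^ d) := by
    intro k
    show f (pts k) * ζ ^ d = f (pts k) / S * (S * ζ ^ d)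
    field_simp
  have hQ1 : |S * ζ ^ d - 1| ≤ Lδ * V := by
    have h1 : S * ζ ^ d = ∑ k, q k := by
      show S * ζ ^ d = ∑ k, f (pts k) * ζ ^ d
      rw [hS_def, Finset.sum_mul]
    calc |S * ζ ^ d - 1| = |∑ k, (q k - p k)| := by
          rw [h1, ← hpsum, ← Finset.sum_sub_distrib]
      _ ≤ ∑ k, |q k - p k| := Finset.abs_sum_le_sum_abs _ _
      _ = ∑ k, |p k - q k| := by
          refine Finset.sum_congr rfl fun k _ => abs_sub_comm _ _
      _ ≤ Lδ * V := hE2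
  have hτle : τ ≤ 2 * Lδ * V := by
    have h1 : ∀ k, r k - mn k ≤ |p k - q k| + r k * |S * ζ ^ d - 1| := by
      intro k
      have hqr : |q k - r k| = r k * |S * ζ ^ d - 1| := by
        rw [hqQ k]
        have h2 : r k * (S * ζ ^ d) - r k = r k * (S * ζ ^ d - 1) := by ring
        rw [h2, abs_mul, abs_of_nonneg (hr0 k)]
      have habs : |r k - p k| ≤ |p k - q k| + r k * |S * ζ ^ d - 1| := by
        calc |r k - p k| ≤ |r k - q k| + |q k - p k| := abs_sub_le _ _ _
          _ = |p k - q k| + r k * |S * ζ ^ d - 1| := by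
              rw [abs_sub_comm (r k) (q k), hqr, abs_sub_comm (q k) (p k), add_comm]
      have hmin : r k - mn k ≤ |r k - p k| := by
        rcases le_total (p k) (r k) with h|h
        · have hm : mn k = p k := min_eq_left h
          rw [hm]; exact le_abs_self _
        · have hm : mn k = r k := min_eq_right h
          rw [hm]; simp [abs_nonneg]
      linarith
    calc τ = ∑ k, (r k - mn k) := hτ_def
      _ ≤ ∑ k, (|p k - q k| + r k * |S * ζ ^ d - 1|) := Finset.sum_le_sum fun k _ => h1 k
      _ = ∑ k, |p k - q k| + (∑ k, r k) * |S * ζ ^ d - 1| := by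
          rw [Finset.sum_add_distrib, ← Finset.sum_mul]
      _ ≤ Lδ * V + 1 * (Lδ * V) := by
          rw [hrsum]
          exact add_le_add hE2 (by rw [one_mul, one_mul]; exact hQ1)
      _ = 2 * Lδ * V := by ring
  -- cost bound
  have hgmeas : Measurable fun x : EuclideanSpace ℝ (Fin d) × EuclideanSpace ℝ (Fin d) =>
      ENNReal.ofReal (‖x.1 - x.2‖ ^ 2) :=
    (ENNReal.continuous_ofReal.comp
      (((continuous_fst.sub continuous_snd).norm).pow 2)).measurable
  have hI1 : ∀ k, ∫⁻ x, ENNReal.ofReal (‖x - pts k‖ ^ 2) ∂(ν.restrict (Cl k))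
      ≤ ENNReal.ofReal (d * ζ ^ 2) * ENNReal.ofReal (p k) := by
    intro k
    calc ∫⁻ x, ENNReal.ofReal (‖x - pts k‖ ^ 2) ∂(ν.restrict (Cl k))
        ≤ ∫⁻ _x, ENNReal.ofReal (d * ζ ^ 2) ∂(ν.restrict (Cl k)) := by
          refine lintegral_mono_ae ?_
          filter_upwards [ae_restrict_mem (hClm k)] with x hx
          refine ENNReal.ofReal_le_ofReal ?_
          have h1 : ‖x - pts k‖ ≤ sd * ζ := hnorm_cell k x hx
          have h2 : ‖x - pts k‖ ^ 2 ≤ (sd * ζ) ^ 2 := by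
            nlinarith [norm_nonneg (x - pts k)]
          have h3 : (sd * ζ) ^ 2 = d * ζ ^ 2 := by
            rw [mul_pow, hsd_def, Real.sq_sqrt (Nat.cast_nonneg d)]
          linarith
      _ = ENNReal.ofReal (d * ζ ^ 2) * ENNReal.ofReal (p k) := by
          rw [lintegral_const, Measure.restrict_apply_univ, hνCl k]
  have hI2 : ∀ k, ∫⁻ x, ENNReal.ofReal (‖x - pts k‖ ^ 2) ∂μm
      ≤ ENNReal.ofReal (B ^ 2) * ENNReal.ofReal τ := by
    intro k
    have hl : ∀ l, ∫⁻ x, ENNReal.ofReal (‖x - pts k‖ ^ 2) ∂(ν.restrict (Cl l))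
        ≤ ENNReal.ofReal (B ^ 2) * ν (Cl l) := by
      intro l
      calc ∫⁻ x, ENNReal.ofReal (‖x - pts k‖ ^ 2) ∂(ν.restrict (Cl l))
          ≤ ∫⁻ _x, ENNReal.ofReal (B ^ 2) ∂(ν.restrict (Cl l)) := by
            refine lintegral_mono_ae ?_
            filter_upwards [ae_restrict_mem (hClm l)] with x hx
            refine ENNReal.ofReal_le_ofReal ?_
            have h1 : ‖x - pts k‖ ≤ B := by
              have e1 : x - pts k = (x - pts l) + (pts l - pts k) := by abel
              have e2 : ‖pts l - pts k‖ ≤ ‖pts l‖ + ‖pts k‖ := norm_sub_le _ _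
              have e3 : ‖pts l‖ ≤ R := mem_closedBall_zero_iff.mp (hRM (hmem l))
              have e4 : ‖pts k‖ ≤ R := mem_closedBall_zero_iff.mp (hRM (hmem k))
              have e5 : ‖x - pts l‖ ≤ sd * ζ := hnorm_cell l x hx
              have e6 : sd * ζ ≤ δ0 := by
                rw [hδ0_def]; exact mul_le_mul_of_nonneg_left hζ0 hsd0
              calc ‖x - pts k‖ ≤ ‖x - pts l‖ + ‖pts l - pts k‖ := by
                    rw [e1]; exact norm_add_le _ _
                _ ≤ B := by rw [hB_def]; linarith
            nlinarith [norm_nonneg (x - pts k)]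
        _ = ENNReal.ofReal (B ^ 2) * ν (Cl l) := by
            rw [lintegral_const, Measure.restrict_apply_univ]
    have hμm_split : μm = ∑ l, cc l • ν.restrict (Cl l) := hμm_def
    rw [hμm_split, lintegral_finset_sum_measure]
    calc ∑ l, ∫⁻ x, ENNReal.ofReal (‖x - pts k‖ ^ 2) ∂(cc l • ν.restrict (Cl l))
        ≤ ∑ l, ENNReal.ofReal (B ^ 2) * ((cc l • ν.restrict (Cl l)) univ) := by
          refine Finset.sum_le_sum fun l _ => ?_
          rw [lintegral_smul_measure, Measure.smul_apply, smul_eq_mul,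
            Measure.restrict_apply_univ]
          calc cc l * ∫⁻ x, ENNReal.ofReal (‖x - pts k‖ ^ 2) ∂(ν.restrict (Cl l))
              ≤ cc l * (ENNReal.ofReal (B ^ 2) * ν (Cl l)) := mul_le_mul_right (hl l) _
            _ = ENNReal.ofReal (B ^ 2) * (cc l * ν (Cl l)) := by ring
        _ = ENNReal.ofReal (B ^ 2) * μm univ := by
          rw [← Finset.mul_sum, hμm_split, Measure.finset_sum_apply]
        _ = ENNReal.ofReal (B ^ 2) * ENNReal.ofReal τ := by rw [hμm_univ]
  have ha_p : ∀ k, a k * ENNReal.ofReal (p k) = ENNReal.ofReal (mn k) := by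
    intro k
    show ENNReal.ofReal (mn k / p k) * _ = _
    rw [← ENNReal.ofReal_mul (div_nonneg (hmn0 k) (hp0 k)), hmnp_mul k]
  have hbsum : ∑ k, b k ≤ 1 := by
    show ∑ k, ENNReal.ofReal ((r k - mn k) / τ) ≤ 1
    rw [← ENNReal.ofReal_sum_of_nonneg
      (fun k _ => div_nonneg (sub_nonneg.mpr (hmnr k)) hτ0), ← Finset.sum_div, ← hτ_def]
    calc ENNReal.ofReal (τ / τ) ≤ ENNReal.ofReal 1 :=
        ENNReal.ofReal_le_ofReal (div_self_le_one τ)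
      _ = 1 := ENNReal.ofReal_one
  have hπcost : ∫⁻ x, ENNReal.ofReal (‖x.1 - x.2‖ ^ 2) ∂π
      ≤ ENNReal.ofReal (d * ζ ^ 2) + ENNReal.ofReal (B ^ 2) * ENNReal.ofReal τ := by
    have hπ_split : π = ∑ k, (A k).map (fun x => (x, pts k)) := hπ_def
    rw [hπ_split, lintegral_finset_sum_measure]
    have hterm : ∀ k, ∫⁻ x, ENNReal.ofReal (‖x.1 - x.2‖ ^ 2)
          ∂((A k).map (fun x => (x, pts k)))
        ≤ a k * (ENNReal.ofReal (d * ζ ^ 2) * ENNReal.ofReal (p k))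
          + b k * (ENNReal.ofReal (B ^ 2) * ENNReal.ofReal τ) := by
      intro k
      rw [lintegral_map hgmeas (hι k)]
      have hAk : A k = a k • ν.restrict (Cl k) + b k • μm := rfl
      show ∫⁻ x, ENNReal.ofReal (‖x - pts k‖ ^ 2) ∂(A k) ≤ _
      rw [hAk, lintegral_add_measure, lintegral_smul_measure, lintegral_smul_measure]
      exact add_le_add (mul_le_mul_right (hI1 k) _) (mul_le_mul_right (hI2 k) _)
    calc ∑ k, ∫⁻ x, ENNReal.ofReal (‖x.1 - x.2‖ ^ 2) ∂((A k).map (fun x => (x, pts k)))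
        ≤ ∑ k, (a k * (ENNReal.ofReal (d * ζ ^ 2) * ENNReal.ofReal (p k))
            + b k * (ENNReal.ofReal (B ^ 2) * ENNReal.ofReal τ)) :=
          Finset.sum_le_sum fun k _ => hterm k
      _ = (∑ k, ENNReal.ofReal (d * ζ ^ 2) * (a k * ENNReal.ofReal (p k)))
            + (∑ k, b k) * (ENNReal.ofReal (B ^ 2) * ENNReal.ofReal τ) := by
          rw [Finset.sum_add_distrib, Finset.sum_mul]
          congr 1
          · refine Finset.sum_congr rfl fun k _ => by ring
      _ ≤ ENNReal.ofReal (d * ζ ^ 2) * 1 + 1 * (ENNReal.ofReal (B ^ 2) * ENNReal.ofReal τ) := by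
          refine add_le_add ?_ (mul_le_mul_left hbsum _)
          rw [Finset.sum_congr rfl fun k _ => by rw [ha_p k], ← Finset.mul_sum,
            ← ENNReal.ofReal_sum_of_nonneg (fun k _ => hmn0 k)]
          refine mul_le_mul_right ?_ _
          calc ENNReal.ofReal (∑ k, mn k) ≤ ENNReal.ofReal 1 := by
                refine ENNReal.ofReal_le_ofReal ?_
                rw [← hrsum]
                exact Finset.sum_le_sum fun k _ => hmnr k
            _ = 1 := ENNReal.ofReal_one
      _ = ENNReal.ofReal (d * ζ ^ 2) + ENNReal.ofReal (B ^ 2) * ENNReal.ofReal τ := by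
          rw [mul_one, one_mul]
  have hconst0 : (0:ℝ) ≤ ↑d * ζz + B ^ 2 * (2 * ↑L * sd * V) :=
    add_nonneg (mul_nonneg (Nat.cast_nonneg d) hζzpos.le)
      (mul_nonneg (sq_nonneg B)
        (mul_nonneg (mul_nonneg (mul_nonneg two_pos.le L.coe_nonneg) hsd0) hV0))
  have hfinal : ENNReal.ofReal (d * ζ ^ 2) + ENNReal.ofReal (B ^ 2) * ENNReal.ofReal τ
      ≤ ENNReal.ofReal ((↑d * ζz + B ^ 2 * (2 * ↑L * sd * V)) * ζ) := by
    rw [← ENNReal.ofReal_mul (sq_nonneg B),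
      ← ENNReal.ofReal_add (by positivity) (mul_nonneg (sq_nonneg B) hτ0)]
    refine ENNReal.ofReal_le_ofReal ?_
    have h1 : (d:ℝ) * ζ ^ 2 ≤ ↑d * ζz * ζ := by
      have hd : (0:ℝ) ≤ (d:ℝ) := Nat.cast_nonneg d
      nlinarith [mul_nonneg (mul_nonneg hd hζ.le) (sub_nonneg.mpr hζ0)]
    have h2 : B ^ 2 * τ ≤ B ^ 2 * (2 * ↑L * sd * V) * ζ := by
      have h3 : B ^ 2 * τ ≤ B ^ 2 * (2 * Lδ * V) :=
        mul_le_mul_of_nonneg_left hτle (sq_nonneg B)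
      have h4 : B ^ 2 * (2 * Lδ * V) = B ^ 2 * (2 * ↑L * sd * V) * ζ := by
        rw [hLδ_def]; ring
      linarith
    have h5 : (↑d * ζz + B ^ 2 * (2 * ↑L * sd * V)) * ζ
        = ↑d * ζz * ζ + B ^ 2 * (2 * ↑L * sd * V) * ζ := by ring
    linarith
  exact W2sq_le_of_coupling ν _ π hπprob hfst
    (hsnd.trans (by simp only [hr_def])) (mul_nonneg hconst0 hζ.le)
    (le_trans hπcost hfinal)




/-- Grid approximation of a continuous measure: if `ν` is an absolutely continuous
probability measure on a compact set `M` with Lipschitz density `f`, and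
`ν_r` is the discrete measure placing mass proportional to `f(d_k)` at the vertices `d_k`
of an equidistant rectangular grid with mesh `ζ` whose cells cover `M`, then
`W₂²(ν, ν_r) ≤ C·ζ` for a constant `C` not depending on the grid; in particular
`W₂²(ν, ν_r) → 0` as `ζ → 0`. -/
theorem W2sq_grid_approx {d : ℕ} (M : Set (EuclideanSpace ℝ (Fin d)))
    (hM : IsCompact M) (ν : Measure (EuclideanSpace ℝ (Fin d)))
    [IsProbabilityMeasure ν] (hνM : ν Mᶜ = 0)
    (f : EuclideanSpace ℝ (Fin d) → ℝ) (L : NNReal) (hf : LipschitzWith L f)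
    (hf0 : ∀ x, 0 ≤ f x)
    (hdens : ν = volume.withDensity (fun x => ENNReal.ofReal (f x))) :
    ∃ C > (0 : ℝ), ∀ (m : ℕ) (pts : Fin m → EuclideanSpace ℝ (Fin d)) (ζ : ℝ),
      0 < ζ →
      Function.Injective pts →
      (∀ k l, k ≠ l → ζ ≤ ‖pts k - pts l‖) →
      (∀ k l, k ≠ l → Disjoint (gridCell (pts k) ζ) (gridCell (pts l) ζ)) →
      M ⊆ ⋃ k, gridCell (pts k) ζ →
      (∀ k, pts k ∈ M) →
      0 < ∑ j, f (pts j) →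
      W2sq ν (∑ k, ENNReal.ofReal (f (pts k) / ∑ j, f (pts j)) •
        Measure.dirac (pts k)) ≤ C * ζ := by
  classical
  obtain ⟨R, hR, hRM⟩ := hM.isBounded.subset_closedBall_lt 0 0
  set C₁ : ℝ := ↑d * (2*R+1) + (Real.sqrt ↑d * (2*R+1) + 2*R)^2 *
    (2 * ↑L * Real.sqrt ↑d *
      (volume (Metric.cthickening (Real.sqrt ↑d * (2*R+1)) M)).toReal) with hC₁
  have hC₁0 : 0 ≤ C₁ :=
    add_nonneg (mul_nonneg (Nat.cast_nonneg d) (by linarith))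
      (mul_nonneg (sq_nonneg _)
        (mul_nonneg (mul_nonneg (mul_nonneg two_pos.le L.coe_nonneg)
          (Real.sqrt_nonneg _)) ENNReal.toReal_nonneg))
  have hq0 : (0:ℝ) ≤ (2*R)^2/(2*R+1) := div_nonneg (sq_nonneg _) (by linarith)
  refine ⟨C₁ + (2*R)^2/(2*R+1) + 1, by linarith, ?_⟩
  intro m pts ζ hζ hinj hsep hdisj hcover hmem hS
  by_cases hcase : ζ ≤ 2*R+1
  · refine le_trans
      (main_case M hM ν hνM f L hf hf0 hdens pts ζ R hζ hR hRM hcase hdisj hcover hmem hS) ?_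
    exact mul_le_mul_of_nonneg_right (by linarith) hζ.le
  · push_neg at hcase
    -- only one grid point is possible
    have hnorms : ∀ k, ‖pts k‖ ≤ R := fun k => mem_closedBall_zero_iff.mp (hRM (hmem k))
    have huniq : ∀ k l : Fin m, k = l := by
      intro k l
      by_contra h
      have h1 := hsep k l h
      have h2 : ‖pts k - pts l‖ ≤ 2*R := by
        calc ‖pts k - pts l‖ ≤ ‖pts k‖ + ‖pts l‖ := norm_sub_le _ _
          _ ≤ 2*R := by linarith [hnorms k, hnorms l]
      linarith
    have hm0 : m ≠ 0 := by
      rintro rfl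
      simp at hS
    have hm1 : m = 1 := by
      rcases Nat.lt_or_ge m 2 with h|h
      · omega
      · exfalso
        have h01 : (⟨0, by omega⟩ : Fin m) = ⟨1, by omega⟩ := huniq _ _
        simp [Fin.mk.injEq] at h01
    subst hm1
    have hSs : ∑ j : Fin 1, f (pts j) = f (pts 0) := by simp
    have hmeasone : (∑ k : Fin 1, ENNReal.ofReal (f (pts k) / ∑ j, f (pts j)) •
        Measure.dirac (pts k)) = Measure.dirac (pts 0) := by
      rw [Fin.sum_univ_one, hSs]
      rw [div_self (by rw [hSs] at hS; exact hS.ne'), ENNReal.ofReal_one, one_smul]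
    rw [hmeasone]
    set π : Measure (EuclideanSpace ℝ (Fin d) × EuclideanSpace ℝ (Fin d)) :=
      ν.map (fun x => (x, pts 0)) with hπ_def
    have hι : Measurable fun x : EuclideanSpace ℝ (Fin d) => (x, pts 0) :=
      measurable_id.prodMk measurable_const
    have hπprob : IsProbabilityMeasure π := Measure.isProbabilityMeasure_map hι.aemeasurable
    have hfst : π.map Prod.fst = ν := by
      rw [hπ_def, Measure.map_map measurable_fst hι]
      have : (Prod.fst ∘ fun x : EuclideanSpace ℝ (Fin d) => (x, pts 0)) = id := rfl
      rw [this, Measure.map_id]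
    have hsnd : π.map Prod.snd = Measure.dirac (pts 0) := by
      rw [hπ_def, Measure.map_map measurable_snd hι]
      have : (Prod.snd ∘ fun x : EuclideanSpace ℝ (Fin d) => (x, pts 0)) = fun _ => pts 0 := rfl
      rw [this, Measure.map_const, measure_univ, one_smul]
    have hgmeas : Measurable fun x : EuclideanSpace ℝ (Fin d) × EuclideanSpace ℝ (Fin d) =>
        ENNReal.ofReal (‖x.1 - x.2‖ ^ 2) :=
      (ENNReal.continuous_ofReal.comp
        (((continuous_fst.sub continuous_snd).norm).pow 2)).measurable
    have hc0 : (0:ℝ) ≤ (C₁ + (2*R)^2/(2*R+1) + 1) * ζ :=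
      mul_nonneg (by linarith) hζ.le
    refine W2sq_le_of_coupling ν _ π hπprob hfst hsnd hc0 ?_
    have haeM : ∀ᵐ x ∂ν, x ∈ M := by
      rw [ae_iff]
      exact hνM
    calc ∫⁻ x, ENNReal.ofReal (‖x.1 - x.2‖ ^ 2) ∂π
        = ∫⁻ x, ENNReal.ofReal (‖x - pts 0‖ ^ 2) ∂ν := by
          rw [hπ_def, lintegral_map hgmeas hι]
      _ ≤ ∫⁻ _x, ENNReal.ofReal ((2*R) ^ 2) ∂ν := by
          refine lintegral_mono_ae ?_
          filter_upwards [haeM] with x hx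
          refine ENNReal.ofReal_le_ofReal ?_
          have h1 : ‖x - pts 0‖ ≤ 2*R := by
            calc ‖x - pts 0‖ ≤ ‖x‖ + ‖pts 0‖ := norm_sub_le _ _
              _ ≤ 2*R := by
                  linarith [mem_closedBall_zero_iff.mp (hRM hx), hnorms 0]
          nlinarith [norm_nonneg (x - pts 0)]
      _ = ENNReal.ofReal ((2*R) ^ 2) := by rw [lintegral_const, measure_univ, mul_one]
      _ ≤ ENNReal.ofReal ((C₁ + (2*R)^2/(2*R+1) + 1) * ζ) := by
          refine ENNReal.ofReal_le_ofReal ?_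
          have h1 : (2*R)^2 = (2*R)^2/(2*R+1) * (2*R+1) :=
            (div_mul_cancel₀ _ (by linarith : (2*R+1:ℝ) ≠ 0)).symm
          have h2 : (2*R)^2/(2*R+1) * (2*R+1) ≤ (2*R)^2/(2*R+1) * ζ :=
            mul_le_mul_of_nonneg_left hcase.le hq0
          have h3 : (2*R)^2/(2*R+1) * ζ ≤ (C₁ + (2*R)^2/(2*R+1) + 1) * ζ :=
            mul_le_mul_of_nonneg_right (by linarith) hζ.le
          linarith
end

section
/- For quantile-based global Fréchet regression with one-dimensional distribution responses: the minimizer over probability measures μ of (1/n)Σᵢ s_{iG}(x)·W₂²(μ, νᵢ) is the measure whose quantile function is the metric projection (in L²[0,1]) of (1/n)Σᵢ s_{iG}(x)·F_{νᵢ}⁻¹ onto the convex set Q of quantile functions, provided the weights satisfy (1/n)Σᵢ s_{iG}(x) = 1. -/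
open MeasureTheory Set

/-- Squared 2-Wasserstein distance on ℝ via couplings. -/
noncomputable def W2sqR (μ ν : Measure ℝ) : ℝ :=
  sInf {c : ℝ | ∃ π : Measure (ℝ × ℝ), IsProbabilityMeasure π ∧
    π.map Prod.fst = μ ∧ π.map Prod.snd = ν ∧ c = ∫ x, (x.1 - x.2) ^ 2 ∂π}

/-- The set of quantile functions of probability measures supported in `[a,b]`. -/
def quantileSet (a b : ℝ) : Set (ℝ → ℝ) :=
  {g | ∃ μ : Measure ℝ, IsProbabilityMeasure μ ∧ μ (Icc a b)ᶜ = 0 ∧ g = quantileFn μ}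

section basics
variable {a b : ℝ} {μ : Measure ℝ}

lemma cdfR_mono (μ : Measure ℝ) [IsProbabilityMeasure μ] :
    Monotone (fun x => (μ (Iic x)).toReal) := fun x y hxy =>
  ENNReal.toReal_mono (measure_ne_top μ _) (measure_mono (Iic_subset_Iic.2 hxy))

lemma cdfR_le_one (μ : Measure ℝ) [IsProbabilityMeasure μ] (x : ℝ) :
    (μ (Iic x)).toReal ≤ 1 := by
  have := prob_le_one (μ := μ) (s := Iic x)
  simpa using ENNReal.toReal_mono (by simp) this

lemma cdfR_b [IsProbabilityMeasure μ] (hs : μ (Icc a b)ᶜ = 0) : (μ (Iic b)).toReal = 1 := by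
  have h1 : μ (Iic b)ᶜ = 0 := by
    refine measure_mono_null ?_ hs
    intro x hx
    simp only [mem_compl_iff, mem_Iic, not_le] at hx ⊢
    simp [mem_Icc]; intro; linarith
  have := prob_compl_eq_zero_iff (μ := μ) (s := Iic b) measurableSet_Iic |>.1 h1
  simp [this]

lemma cdfR_lt_a [IsProbabilityMeasure μ] (hs : μ (Icc a b)ᶜ = 0) {x : ℝ} (hx : x < a) :
    (μ (Iic x)).toReal = 0 := by
  have : μ (Iic x) = 0 := by
    refine measure_mono_null ?_ hs
    intro y hy
    simp only [mem_Iic] at hy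
    simp [mem_Icc]; intro; linarith
  simp [this]

lemma b_mem_S [IsProbabilityMeasure μ] (hs : μ (Icc a b)ᶜ = 0) {t : ℝ} (ht : t ≤ 1) :
    b ∈ {x : ℝ | t ≤ (μ (Iic x)).toReal} := by
  simp only [mem_setOf_eq, cdfR_b hs]; exact ht

lemma a_lb_S [IsProbabilityMeasure μ] (hs : μ (Icc a b)ᶜ = 0) {t : ℝ} (ht : 0 < t) :
    a ∈ lowerBounds {x : ℝ | t ≤ (μ (Iic x)).toReal} := by
  intro x hx
  by_contra h
  push_neg at h
  have := cdfR_lt_a hs h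
  simp only [mem_setOf_eq, this] at hx
  linarith

lemma quantile_mem_Icc [IsProbabilityMeasure μ] (hs : μ (Icc a b)ᶜ = 0) {t : ℝ}
    (ht0 : 0 < t) (ht1 : t ≤ 1) : quantileFn μ t ∈ Icc a b := by
  constructor
  · exact le_csInf ⟨b, b_mem_S hs ht1⟩ (fun x hx => a_lb_S hs ht0 hx)
  · exact csInf_le ⟨a, a_lb_S hs ht0⟩ (b_mem_S hs ht1)

lemma quantile_galois [IsProbabilityMeasure μ] (hs : μ (Icc a b)ᶜ = 0) {t : ℝ}
    (ht0 : 0 < t) (ht1 : t ≤ 1) (x : ℝ) :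
    quantileFn μ t ≤ x ↔ t ≤ (μ (Iic x)).toReal := by
  constructor
  · intro h
    -- first : t ≤ F (q + ε) for all ε > 0
    have key : ∀ ε : ℝ, 0 < ε → t ≤ (μ (Iic (quantileFn μ t + ε))).toReal := by
      intro ε hε
      obtain ⟨y, hy, hy2⟩ := Real.lt_sInf_add_pos (s := {x : ℝ | t ≤ (μ (Iic x)).toReal})
        ⟨b, b_mem_S hs ht1⟩ hε
      exact le_trans hy (cdfR_mono μ (le_of_lt hy2))
    have hq : t ≤ (μ (Iic (quantileFn μ t))).toReal := by
      set q := quantileFn μ t with hqdef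
      have hseq : Iic q = ⋂ n : ℕ, Iic (q + 1 / ((n:ℝ) + 1)) := by
        ext y
        simp only [mem_Iic, mem_iInter]
        constructor
        · intro hy n; have : (0:ℝ) < 1 / (n+1) := by positivity
          linarith
        · intro hy
          by_contra hc
          push_neg at hc
          obtain ⟨n, hn⟩ := exists_nat_one_div_lt (show (0:ℝ) < y - q by linarith)
          have := hy n
          linarith
      have hanti : Antitone (fun n : ℕ => Iic (q + 1 / (n + 1))) := by
        intro m n hmn
        apply Iic_subset_Iic.2
        have hmn' : (m:ℝ) ≤ n := Nat.cast_le.2 hmn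
        have : (1:ℝ) / (n+1) ≤ 1 / (m+1) := by
          apply one_div_le_one_div_of_le (by positivity); linarith
        linarith
      have htend : Filter.Tendsto (fun n : ℕ => μ (Iic (q + 1 / (n + 1)))) Filter.atTop
          (nhds (μ (⋂ n : ℕ, Iic (q + 1 / ((n:ℝ) + 1))))) := by
        apply tendsto_measure_iInter_atTop (fun n => measurableSet_Iic.nullMeasurableSet) hanti
        exact ⟨0, measure_ne_top μ _⟩
      rw [← hseq] at htend
      have htoReal : Filter.Tendsto (fun n : ℕ => (μ (Iic (q + 1 / (n + 1)))).toReal)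
          Filter.atTop (nhds (μ (Iic q)).toReal) :=
        (ENNReal.tendsto_toReal (measure_ne_top μ _)).comp htend
      exact ge_of_tendsto htoReal (Filter.Eventually.of_forall fun n =>
        key (1 / (n + 1)) (by positivity))
    exact le_trans hq (cdfR_mono μ h)
  · intro h
    exact csInf_le ⟨a, a_lb_S hs ht0⟩ h

end basics

/-- Globalized (monotone on all of ℝ) version of the quantile function. -/
noncomputable def gQuant (a b : ℝ) (μ : Measure ℝ) (t : ℝ) : ℝ :=
  if t ≤ 0 then a else if 1 ≤ t then b else quantileFn μ t

section gquant
variable {a b : ℝ} {μ : Measure ℝ}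

lemma gQuant_eq (t : ℝ) (ht : t ∈ Ioo (0:ℝ) 1) : gQuant a b μ t = quantileFn μ t := by
  simp [gQuant, not_le.2 ht.1, not_le.2 ht.2]

lemma gQuant_mem_Icc [IsProbabilityMeasure μ] (hab : a < b) (hs : μ (Icc a b)ᶜ = 0) (t : ℝ) :
    gQuant a b μ t ∈ Icc a b := by
  unfold gQuant
  split_ifs with h1 h2
  · exact ⟨le_refl a, le_of_lt hab⟩
  · exact ⟨le_of_lt hab, le_refl b⟩
  · exact quantile_mem_Icc hs (not_le.1 h1) (le_of_lt (not_le.1 h2))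

lemma quantileFn_mono_on [IsProbabilityMeasure μ] (hs : μ (Icc a b)ᶜ = 0)
    {t t' : ℝ} (ht : 0 < t) (ht' : t' ≤ 1) (htt : t ≤ t') :
    quantileFn μ t ≤ quantileFn μ t' := by
  apply csInf_le_csInf ⟨a, a_lb_S hs ht⟩ ⟨b, b_mem_S hs ht'⟩
  intro x hx
  exact le_trans htt hx

lemma gQuant_mono [IsProbabilityMeasure μ] (hab : a < b) (hs : μ (Icc a b)ᶜ = 0) :
    Monotone (gQuant a b μ) := by
  intro t t' htt
  by_cases h1 : t ≤ 0
  · rw [show gQuant a b μ t = a from if_pos h1]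
    exact (gQuant_mem_Icc hab hs t').1
  by_cases h2 : 1 ≤ t'
  · have h2' : ¬ t' ≤ 0 := by linarith
    rw [show gQuant a b μ t' = b by simp [gQuant, h2', h2]]
    exact (gQuant_mem_Icc hab hs t).2
  have h3 : ¬ t' ≤ 0 := fun h => h1 (le_trans htt h)
  have h4 : ¬ 1 ≤ t := fun h => h2 (le_trans h htt)
  simp only [gQuant, if_neg h1, if_neg h3, if_neg h4, if_neg h2]
  exact quantileFn_mono_on hs (not_le.1 h1) (le_of_lt (not_le.1 h2)) htt

lemma gQuant_measurable [IsProbabilityMeasure μ] (hab : a < b) (hs : μ (Icc a b)ᶜ = 0) :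
    Measurable (gQuant a b μ) := (gQuant_mono hab hs).measurable

lemma volume_Ioo01 : (volume : Measure ℝ) (Ioo 0 1) = 1 := by simp

instance : IsProbabilityMeasure ((volume : Measure ℝ).restrict (Ioo (0:ℝ) 1)) :=
  ⟨by rw [Measure.restrict_apply MeasurableSet.univ]; simp⟩

/-- Inverse CDF sampling: pushforward of uniform measure on (0,1) under the quantile
function equals μ. -/
lemma gQuant_map [IsProbabilityMeasure μ] (hab : a < b) (hs : μ (Icc a b)ᶜ = 0) :
    Measure.map (gQuant a b μ) ((volume : Measure ℝ).restrict (Ioo 0 1)) = μ := by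
  have hmeas := gQuant_measurable hab hs
  have : IsProbabilityMeasure (Measure.map (gQuant a b μ)
      ((volume : Measure ℝ).restrict (Ioo 0 1))) :=
    Measure.isProbabilityMeasure_map hmeas.aemeasurable
  refine Measure.ext_of_Iic _ _ (fun x => ?_)
  rw [Measure.map_apply hmeas measurableSet_Iic,
    Measure.restrict_apply (hmeas measurableSet_Iic)]
  have hF1 : (μ (Iic x)).toReal ≤ 1 := cdfR_le_one μ x
  have hF0 : 0 ≤ (μ (Iic x)).toReal := ENNReal.toReal_nonneg
  have hset : gQuant a b μ ⁻¹' Iic x ∩ Ioo 0 1 = Ioo 0 1 ∩ Iic ((μ (Iic x)).toReal) := by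
    ext t
    simp only [mem_inter_iff, mem_preimage, mem_Iic, mem_Ioo]
    constructor
    · rintro ⟨h1, h2⟩
      refine ⟨h2, ?_⟩
      rw [gQuant_eq t h2] at h1
      exact (quantile_galois hs h2.1 (le_of_lt h2.2) x).1 h1
    · rintro ⟨h2, h1⟩
      refine ⟨?_, h2⟩
      rw [gQuant_eq t h2]
      exact (quantile_galois hs h2.1 (le_of_lt h2.2) x).2 h1
  rw [hset]
  rcases lt_or_ge ((μ (Iic x)).toReal) 1 with hlt | hge
  · have : Ioo (0:ℝ) 1 ∩ Iic ((μ (Iic x)).toReal) = Ioc 0 ((μ (Iic x)).toReal) := by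
      ext t
      simp only [mem_inter_iff, mem_Ioo, mem_Iic, mem_Ioc]
      exact ⟨fun ⟨⟨h1, _⟩, h3⟩ => ⟨h1, h3⟩, fun ⟨h1, h3⟩ => ⟨⟨h1, lt_of_le_of_lt h3 hlt⟩, h3⟩⟩
    rw [this, Real.volume_Ioc]
    rw [show ENNReal.ofReal ((μ (Iic x)).toReal - 0) = μ (Iic x) by
      rw [sub_zero]; exact ENNReal.ofReal_toReal (measure_ne_top μ _)]
  · have hF : (μ (Iic x)).toReal = 1 := le_antisymm hF1 hge
    have : Ioo (0:ℝ) 1 ∩ Iic ((μ (Iic x)).toReal) = Ioo 0 1 := by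
      rw [hF]
      exact inter_eq_left.2 (fun t ht => le_of_lt ht.2)
    rw [this]
    have : μ (Iic x) = 1 := by
      have := ENNReal.ofReal_toReal (measure_ne_top μ (Iic x))
      rw [hF] at this; simpa using this.symm
    simp [this]

end gquant

section hoeffding
open scoped ENNReal
variable {a b : ℝ}

/-- Representation: the expectation of a product of nonnegative parts as the double
integral of the joint survival function. -/
lemma prod_repr {Ω : Type*} [MeasurableSpace Ω] (P : Measure Ω) [IsProbabilityMeasure P]
    {f1 f2 : Ω → ℝ} (h1 : Measurable f1) (h2 : Measurable f2)
    (hae : ∀ᵐ ω ∂P, f1 ω ∈ Icc a b ∧ f2 ω ∈ Icc a b) :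
    ∫⁻ ω, ENNReal.ofReal (f1 ω - a) * ENNReal.ofReal (f2 ω - a) ∂P
      = ∫⁻ st, P {ω | st.1 < f1 ω ∧ st.2 < f2 ω}
          ∂(((volume : Measure ℝ).restrict (Ioo a b)).prod
            ((volume : Measure ℝ).restrict (Ioo a b))) := by
  set I := (volume : Measure ℝ).restrict (Ioo a b) with hI
  set Q := I.prod I with hQ
  have hvol : ∀ x : ℝ, x ∈ Icc a b → I (Iio x) = ENNReal.ofReal (x - a) := by
    intro x hx
    rw [hI, Measure.restrict_apply measurableSet_Iio]
    have : Iio x ∩ Ioo a b = Ioo a x := by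
      ext s; simp only [mem_inter_iff, mem_Iio, mem_Ioo]
      exact ⟨fun ⟨hs, hs2⟩ => ⟨hs2.1, hs⟩, fun ⟨hs1, hs2⟩ => ⟨hs2, hs1, lt_of_lt_of_le hs2 hx.2⟩⟩
    rw [this, Real.volume_Ioo]
  have step1 : ∫⁻ ω, ENNReal.ofReal (f1 ω - a) * ENNReal.ofReal (f2 ω - a) ∂P
      = ∫⁻ ω, Q {st : ℝ × ℝ | st.1 < f1 ω ∧ st.2 < f2 ω} ∂P := by
    refine lintegral_congr_ae (hae.mono fun ω hω => ?_)
    have hrect : {st : ℝ × ℝ | st.1 < f1 ω ∧ st.2 < f2 ω} = Iio (f1 ω) ×ˢ Iio (f2 ω) := rfl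
    dsimp only
    rw [hrect, hQ, Measure.prod_prod, hvol _ hω.1, hvol _ hω.2]
  rw [step1]
  have hSmeas : MeasurableSet {z : Ω × (ℝ × ℝ) | z.2.1 < f1 z.1 ∧ z.2.2 < f2 z.1} :=
    (measurableSet_lt measurable_snd.fst (h1.comp measurable_fst)).inter
      (measurableSet_lt measurable_snd.snd (h2.comp measurable_fst))
  have hunc : Function.uncurry
      (fun ω (st : ℝ × ℝ) => Set.indicator {z : ℝ × ℝ | z.1 < f1 ω ∧ z.2 < f2 ω}
        (fun _ => (1:ℝ≥0∞)) st)
      = Set.indicator {z : Ω × (ℝ × ℝ) | z.2.1 < f1 z.1 ∧ z.2.2 < f2 z.1}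
        (fun _ => (1:ℝ≥0∞)) := by
    funext z
    simp only [Function.uncurry, Set.indicator, mem_setOf_eq]
  have key := lintegral_lintegral_swap (μ := P) (ν := Q)
    (f := fun ω (st : ℝ × ℝ) => Set.indicator {z : ℝ × ℝ | z.1 < f1 ω ∧ z.2 < f2 ω}
      (fun _ => (1:ℝ≥0∞)) st)
    (by rw [hunc]; exact ((measurable_const).indicator hSmeas).aemeasurable)
  have lhs_eq : ∫⁻ ω, ∫⁻ st, Set.indicator {z : ℝ × ℝ | z.1 < f1 ω ∧ z.2 < f2 ω}
      (fun _ => (1:ℝ≥0∞)) st ∂Q ∂P = ∫⁻ ω, Q {st : ℝ × ℝ | st.1 < f1 ω ∧ st.2 < f2 ω} ∂P := by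
    refine lintegral_congr fun ω => ?_
    exact lintegral_indicator_one
      ((measurableSet_lt measurable_fst measurable_const).inter
        (measurableSet_lt measurable_snd measurable_const))
  have rhs_eq : ∫⁻ st, ∫⁻ ω, Set.indicator {z : ℝ × ℝ | z.1 < f1 ω ∧ z.2 < f2 ω}
      (fun _ => (1:ℝ≥0∞)) st ∂P ∂Q = ∫⁻ st, P {ω | st.1 < f1 ω ∧ st.2 < f2 ω} ∂Q := by
    refine lintegral_congr fun st => ?_
    have : (fun ω => Set.indicator {z : ℝ × ℝ | z.1 < f1 ω ∧ z.2 < f2 ω}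
        (fun _ => (1:ℝ≥0∞)) st) = Set.indicator {ω | st.1 < f1 ω ∧ st.2 < f2 ω}
        (fun _ => (1:ℝ≥0∞)) := by
      funext ω
      simp only [Set.indicator, mem_setOf_eq]
    rw [this]
    exact lintegral_indicator_one
      ((measurableSet_lt measurable_const h1).inter (measurableSet_lt measurable_const h2))
  rw [← lhs_eq, key, rhs_eq]

end hoeffding

section w2
open scoped ENNReal
variable {a b : ℝ} {μ ν : Measure ℝ}

lemma measure_Ioi_eq [IsProbabilityMeasure μ] (s : ℝ) :
    μ (Ioi s) = ENNReal.ofReal (1 - (μ (Iic s)).toReal) := by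
  have hadd : μ (Iic s) + μ (Ioi s) = 1 := by
    have := measure_add_measure_compl (μ := μ) (measurableSet_Iic (a := s))
    rwa [compl_Iic, measure_univ] at this
  have hIoi : μ (Ioi s) = 1 - μ (Iic s) :=
    ENNReal.eq_sub_of_add_eq (measure_ne_top μ _) (by rw [add_comm]; exact hadd)
  rw [hIoi, ENNReal.ofReal_sub _ ENNReal.toReal_nonneg, ENNReal.ofReal_one,
    ENNReal.ofReal_toReal (measure_ne_top μ _)]

lemma gQuant_gt_set [IsProbabilityMeasure μ] (hs : μ (Icc a b)ᶜ = 0) (s : ℝ) :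
    {u : ℝ | s < gQuant a b μ u} ∩ Ioo 0 1 = Ioo ((μ (Iic s)).toReal) 1 := by
  ext u
  simp only [mem_inter_iff, mem_setOf_eq, mem_Ioo]
  constructor
  · rintro ⟨h1, h2, h3⟩
    refine ⟨?_, h3⟩
    rw [gQuant_eq u ⟨h2, h3⟩] at h1
    by_contra hc
    push_neg at hc
    exact absurd ((quantile_galois hs h2 h3.le s).2 hc) (not_le.2 h1)
  · rintro ⟨h1, h3⟩
    have h2 : 0 < u := lt_of_le_of_lt ENNReal.toReal_nonneg h1
    refine ⟨?_, h2, h3⟩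
    rw [gQuant_eq u ⟨h2, h3⟩]
    by_contra hc
    push_neg at hc
    exact absurd ((quantile_galois hs h2 h3.le s).1 hc) (not_le.2 h1)

lemma gQuant_joint_survival [IsProbabilityMeasure μ] [IsProbabilityMeasure ν]
    (hab : a < b) (hμs : μ (Icc a b)ᶜ = 0) (hνs : ν (Icc a b)ᶜ = 0) (s t : ℝ) :
    ((volume : Measure ℝ).restrict (Ioo 0 1)) {u | s < gQuant a b μ u ∧ t < gQuant a b ν u}
      = min (μ (Ioi s)) (ν (Ioi t)) := by
  rw [show {u : ℝ | s < gQuant a b μ u ∧ t < gQuant a b ν u}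
      = {u : ℝ | s < gQuant a b μ u} ∩ {u : ℝ | t < gQuant a b ν u} from rfl,
    Measure.restrict_apply ((measurableSet_lt measurable_const
    (gQuant_measurable hab hμs)).inter (measurableSet_lt measurable_const
    (gQuant_measurable hab hνs)))]
  have hset : ({u : ℝ | s < gQuant a b μ u} ∩ {u : ℝ | t < gQuant a b ν u}) ∩ Ioo 0 1
      = Ioo (max ((μ (Iic s)).toReal) ((ν (Iic t)).toReal)) 1 := by
    have h1 := gQuant_gt_set (a := a) (b := b) hμs s
    have h2 := gQuant_gt_set (a := a) (b := b) hνs t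
    have : ({u : ℝ | s < gQuant a b μ u} ∩ {u : ℝ | t < gQuant a b ν u}) ∩ Ioo 0 1
        = ({u : ℝ | s < gQuant a b μ u} ∩ Ioo 0 1) ∩ ({u : ℝ | t < gQuant a b ν u} ∩ Ioo 0 1) := by
      ext u; simp only [mem_inter_iff, mem_setOf_eq]; tauto
    rw [this, h1, h2, Ioo_inter_Ioo]
    simp
  rw [hset, Real.volume_Ioo, measure_Ioi_eq, measure_Ioi_eq]
  rw [← Monotone.map_min (f := ENNReal.ofReal) (fun x y hxy => ENNReal.ofReal_le_ofReal hxy)]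
  congr 1
  rcases le_total ((μ (Iic s)).toReal) ((ν (Iic t)).toReal) with h | h
  · rw [max_eq_right h, min_eq_right (by linarith)]
  · rw [max_eq_left h, min_eq_left (by linarith)]

lemma coupling_joint_le (π : Measure (ℝ × ℝ))
    (hfst : π.map Prod.fst = μ) (hsnd : π.map Prod.snd = ν) (s t : ℝ) :
    π {p : ℝ × ℝ | s < p.1 ∧ t < p.2} ≤ min (μ (Ioi s)) (ν (Ioi t)) := by
  refine le_min ?_ ?_
  · calc π {p : ℝ × ℝ | s < p.1 ∧ t < p.2} ≤ π (Prod.fst ⁻¹' Ioi s) :=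
        measure_mono (fun p hp => hp.1)
    _ = μ (Ioi s) := by rw [← hfst, Measure.map_apply measurable_fst measurableSet_Ioi]
  · calc π {p : ℝ × ℝ | s < p.1 ∧ t < p.2} ≤ π (Prod.snd ⁻¹' Ioi t) :=
        measure_mono (fun p hp => hp.2)
    _ = ν (Ioi t) := by rw [← hsnd, Measure.map_apply measurable_snd measurableSet_Ioi]

end w2

section lowerbound
open scoped ENNReal
variable {a b : ℝ} {μ ν : Measure ℝ}

lemma integrable_of_ae_bdd {Ω : Type*} [MeasurableSpace Ω] (P : Measure Ω)
    [IsProbabilityMeasure P] {f : Ω → ℝ} (hf : AEStronglyMeasurable f P) {C : ℝ}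
    (h : ∀ᵐ ω ∂P, |f ω| ≤ C) : Integrable f P :=
  (integrable_const C).mono' hf (h.mono fun ω hω => by simpa [Real.norm_eq_abs] using hω)

lemma coupling_ae_mem (hμs : μ (Icc a b)ᶜ = 0) (hνs : ν (Icc a b)ᶜ = 0)
    (π : Measure (ℝ × ℝ)) (hfst : π.map Prod.fst = μ) (hsnd : π.map Prod.snd = ν) :
    ∀ᵐ p ∂π, p.1 ∈ Icc a b ∧ p.2 ∈ Icc a b := by
  have h1 : π (Prod.fst ⁻¹' (Icc a b)ᶜ) = 0 := by
    rw [← Measure.map_apply measurable_fst measurableSet_Icc.compl, hfst]; exact hμs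
  have h2 : π (Prod.snd ⁻¹' (Icc a b)ᶜ) = 0 := by
    rw [← Measure.map_apply measurable_snd measurableSet_Icc.compl, hsnd]; exact hνs
  have e1 : ∀ᵐ p ∂π, p.1 ∈ Icc a b := by
    rw [ae_iff]; exact measure_mono_null (fun p hp => hp) h1
  have e2 : ∀ᵐ p ∂π, p.2 ∈ Icc a b := by
    rw [ae_iff]; exact measure_mono_null (fun p hp => hp) h2
  exact e1.and e2

lemma coupling_cost_ge [IsProbabilityMeasure μ] [IsProbabilityMeasure ν]
    (hab : a < b) (hμs : μ (Icc a b)ᶜ = 0) (hνs : ν (Icc a b)ᶜ = 0)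
    (π : Measure (ℝ × ℝ)) [IsProbabilityMeasure π]
    (hfst : π.map Prod.fst = μ) (hsnd : π.map Prod.snd = ν) :
    (∫ t in Ioo (0:ℝ) 1, (gQuant a b μ t - gQuant a b ν t)^2)
      ≤ ∫ p : ℝ × ℝ, (p.1 - p.2)^2 ∂π := by
  set L := (volume : Measure ℝ).restrict (Ioo (0:ℝ) 1) with hL
  set g1 := gQuant a b μ with hg1
  set g2 := gQuant a b ν with hg2
  have hg1m : Measurable g1 := gQuant_measurable hab hμs
  have hg2m : Measurable g2 := gQuant_measurable hab hνs
  have hg1i : ∀ u, g1 u ∈ Icc a b := gQuant_mem_Icc hab hμs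
  have hg2i : ∀ u, g2 u ∈ Icc a b := gQuant_mem_Icc hab hνs
  have hπae : ∀ᵐ p ∂π, p.1 ∈ Icc a b ∧ p.2 ∈ Icc a b := coupling_ae_mem hμs hνs π hfst hsnd
  have hLae : ∀ᵐ u ∂L, g1 u ∈ Icc a b ∧ g2 u ∈ Icc a b :=
    Filter.Eventually.of_forall fun u => ⟨hg1i u, hg2i u⟩
  -- key lintegral comparison via Hoeffding representation
  have hlint : (∫⁻ p : ℝ × ℝ, ENNReal.ofReal (p.1 - a) * ENNReal.ofReal (p.2 - a) ∂π)
      ≤ ∫⁻ u, ENNReal.ofReal (g1 u - a) * ENNReal.ofReal (g2 u - a) ∂L := by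
    rw [prod_repr π measurable_fst measurable_snd hπae, prod_repr L hg1m hg2m hLae]
    refine lintegral_mono fun st => ?_
    rw [hL, hg1, hg2, gQuant_joint_survival hab hμs hνs st.1 st.2]
    exact coupling_joint_le π hfst hsnd st.1 st.2
  have hLfin : (∫⁻ u, ENNReal.ofReal (g1 u - a) * ENNReal.ofReal (g2 u - a) ∂L) ≠ ⊤ := by
    have hbound : (∫⁻ u, ENNReal.ofReal (g1 u - a) * ENNReal.ofReal (g2 u - a) ∂L)
        ≤ ∫⁻ _, ENNReal.ofReal (b - a) * ENNReal.ofReal (b - a) ∂L :=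
      lintegral_mono fun u =>
        mul_le_mul' (ENNReal.ofReal_le_ofReal (by linarith [(hg1i u).2]))
          (ENNReal.ofReal_le_ofReal (by linarith [(hg2i u).2]))
    refine ne_top_of_le_ne_top ?_ hbound
    rw [lintegral_const]
    exact ENNReal.mul_ne_top (ENNReal.mul_ne_top ENNReal.ofReal_ne_top ENNReal.ofReal_ne_top)
      (by simp [hL])
  -- real-valued product comparison
  have hTπ : ∫ p : ℝ × ℝ, (p.1 - a) * (p.2 - a) ∂π
      = (∫⁻ p : ℝ × ℝ, ENNReal.ofReal (p.1 - a) * ENNReal.ofReal (p.2 - a) ∂π).toReal := by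
    rw [integral_eq_lintegral_of_nonneg_ae (f := fun p : ℝ × ℝ => (p.1 - a) * (p.2 - a))
      (hπae.mono fun p hp => mul_nonneg (by linarith [hp.1.1]) (by linarith [hp.2.1]))
      (((continuous_fst.sub continuous_const).mul
        (continuous_snd.sub continuous_const)).aestronglyMeasurable)]
    congr 1
    refine lintegral_congr_ae (hπae.mono fun p hp => ?_)
    dsimp only
    rw [ENNReal.ofReal_mul (by linarith [hp.1.1])]
  have hTL : ∫ u, (g1 u - a) * (g2 u - a) ∂L
      = (∫⁻ u, ENNReal.ofReal (g1 u - a) * ENNReal.ofReal (g2 u - a) ∂L).toReal := by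
    rw [integral_eq_lintegral_of_nonneg_ae (f := fun u => (g1 u - a) * (g2 u - a))
      (Filter.Eventually.of_forall fun u =>
        mul_nonneg (by linarith [(hg1i u).1]) (by linarith [(hg2i u).1]))
      (((hg1m.sub measurable_const).mul (hg2m.sub measurable_const)).aestronglyMeasurable)]
    congr 1
    refine lintegral_congr fun u => ?_
    rw [ENNReal.ofReal_mul (by linarith [(hg1i u).1])]
  have hT : ∫ p : ℝ × ℝ, (p.1 - a) * (p.2 - a) ∂π ≤ ∫ u, (g1 u - a) * (g2 u - a) ∂L := by
    rw [hTπ, hTL]; exact ENNReal.toReal_mono hLfin hlint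
  -- marginal transfers
  have hA1 : ∫ p : ℝ × ℝ, (p.1 - a)^2 ∂π = ∫ u, (g1 u - a)^2 ∂L := by
    have e1 : ∫ x, (x - a)^2 ∂μ = ∫ p : ℝ × ℝ, (p.1 - a)^2 ∂π := by
      rw [← hfst]
      exact integral_map measurable_fst.aemeasurable
        ((continuous_sub_right a).pow 2).aestronglyMeasurable
    have e2 : ∫ x, (x - a)^2 ∂(Measure.map (gQuant a b μ)
          ((volume : Measure ℝ).restrict (Ioo 0 1)))
        = ∫ u in Ioo (0:ℝ) 1, (gQuant a b μ u - a)^2 :=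
      integral_map (gQuant_measurable hab hμs).aemeasurable
        ((continuous_sub_right a).pow 2).aestronglyMeasurable
    rw [gQuant_map hab hμs] at e2
    rw [← e1, e2]
  have hA2 : ∫ p : ℝ × ℝ, (p.2 - a)^2 ∂π = ∫ u, (g2 u - a)^2 ∂L := by
    have e1 : ∫ x, (x - a)^2 ∂ν = ∫ p : ℝ × ℝ, (p.2 - a)^2 ∂π := by
      rw [← hsnd]
      exact integral_map measurable_snd.aemeasurable
        ((continuous_sub_right a).pow 2).aestronglyMeasurable
    have e2 : ∫ x, (x - a)^2 ∂(Measure.map (gQuant a b ν)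
          ((volume : Measure ℝ).restrict (Ioo 0 1)))
        = ∫ u in Ioo (0:ℝ) 1, (gQuant a b ν u - a)^2 :=
      integral_map (gQuant_measurable hab hνs).aemeasurable
        ((continuous_sub_right a).pow 2).aestronglyMeasurable
    rw [gQuant_map hab hνs] at e2
    rw [← e1, e2]
  -- integrability
  have habs : ∀ x y : ℝ, x ∈ Icc a b → y ∈ Icc a b → |(x - a) * (y - a)| ≤ (b - a)^2 := by
    intro x y hx hy
    rw [abs_of_nonneg (mul_nonneg (by linarith [hx.1]) (by linarith [hy.1]))]
    nlinarith [hx.1, hx.2, hy.1, hy.2]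
  have habs2 : ∀ x : ℝ, x ∈ Icc a b → |(x - a)^2| ≤ (b - a)^2 := by
    intro x hx
    rw [abs_of_nonneg (sq_nonneg _)]
    nlinarith [hx.1, hx.2]
  have hIπ1 : Integrable (fun p : ℝ × ℝ => (p.1 - a)^2) π :=
    integrable_of_ae_bdd π ((continuous_fst.sub continuous_const).pow 2).aestronglyMeasurable
      (hπae.mono fun p hp => habs2 _ hp.1)
  have hIπ2 : Integrable (fun p : ℝ × ℝ => (p.2 - a)^2) π :=
    integrable_of_ae_bdd π ((continuous_snd.sub continuous_const).pow 2).aestronglyMeasurable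
      (hπae.mono fun p hp => habs2 _ hp.2)
  have hIπ3 : Integrable (fun p : ℝ × ℝ => (p.1 - a) * (p.2 - a)) π :=
    integrable_of_ae_bdd π (((continuous_fst.sub continuous_const).mul
      (continuous_snd.sub continuous_const))).aestronglyMeasurable
      (hπae.mono fun p hp => habs _ _ hp.1 hp.2)
  have hIL1 : Integrable (fun u => (g1 u - a)^2) L :=
    integrable_of_ae_bdd L ((hg1m.sub measurable_const).pow_const 2).aestronglyMeasurable
      (Filter.Eventually.of_forall fun u => habs2 _ (hg1i u))
  have hIL2 : Integrable (fun u => (g2 u - a)^2) L :=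
    integrable_of_ae_bdd L ((hg2m.sub measurable_const).pow_const 2).aestronglyMeasurable
      (Filter.Eventually.of_forall fun u => habs2 _ (hg2i u))
  have hIL3 : Integrable (fun u => (g1 u - a) * (g2 u - a)) L :=
    integrable_of_ae_bdd L ((hg1m.sub measurable_const).mul
      (hg2m.sub measurable_const)).aestronglyMeasurable
      (Filter.Eventually.of_forall fun u => habs _ _ (hg1i u) (hg2i u))
  -- expansions
  have hexpπ : ∫ p : ℝ × ℝ, (p.1 - p.2)^2 ∂π
      = (∫ p : ℝ × ℝ, (p.1 - a)^2 ∂π) + (∫ p : ℝ × ℝ, (p.2 - a)^2 ∂π)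
        - 2 * ∫ p : ℝ × ℝ, (p.1 - a) * (p.2 - a) ∂π := by
    have hfun : (fun p : ℝ × ℝ => (p.1 - p.2)^2)
        = fun p : ℝ × ℝ => (p.1 - a)^2 + (p.2 - a)^2 - 2 * ((p.1 - a) * (p.2 - a)) := by
      funext p; ring
    have h12 : Integrable (fun p : ℝ × ℝ => (p.1 - a)^2 + (p.2 - a)^2) π := hIπ1.add hIπ2
    have h3 : Integrable (fun p : ℝ × ℝ => 2 * ((p.1 - a) * (p.2 - a))) π := hIπ3.const_mul 2
    rw [hfun, integral_sub h12 h3, integral_add hIπ1 hIπ2, integral_const_mul]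
  have hexpL : ∫ u, (g1 u - g2 u)^2 ∂L
      = (∫ u, (g1 u - a)^2 ∂L) + (∫ u, (g2 u - a)^2 ∂L)
        - 2 * ∫ u, (g1 u - a) * (g2 u - a) ∂L := by
    have hfun : (fun u => (g1 u - g2 u)^2)
        = fun u => (g1 u - a)^2 + (g2 u - a)^2 - 2 * ((g1 u - a) * (g2 u - a)) := by
      funext u; ring
    have h12 : Integrable (fun u => (g1 u - a)^2 + (g2 u - a)^2) L := hIL1.add hIL2
    have h3 : Integrable (fun u => 2 * ((g1 u - a) * (g2 u - a))) L := hIL3.const_mul 2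
    rw [hfun, integral_sub h12 h3, integral_add hIL1 hIL2, integral_const_mul]
  have : (∫ t in Ioo (0:ℝ) 1, (gQuant a b μ t - gQuant a b ν t)^2) = ∫ u, (g1 u - g2 u)^2 ∂L := rfl
  rw [this, hexpL, hexpπ]
  linarith [hT, hA1, hA2]

end lowerbound

section w2eq
variable {a b : ℝ} {μ ν : Measure ℝ}

lemma comonotone_mem [IsProbabilityMeasure μ] [IsProbabilityMeasure ν]
    (hab : a < b) (hμs : μ (Icc a b)ᶜ = 0) (hνs : ν (Icc a b)ᶜ = 0) :
    (∫ t in Ioo (0:ℝ) 1, (gQuant a b μ t - gQuant a b ν t)^2)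
      ∈ {c : ℝ | ∃ π : Measure (ℝ × ℝ), IsProbabilityMeasure π ∧
        π.map Prod.fst = μ ∧ π.map Prod.snd = ν ∧ c = ∫ x : ℝ × ℝ, (x.1 - x.2) ^ 2 ∂π} := by
  have hg1m : Measurable (gQuant a b μ) := gQuant_measurable hab hμs
  have hg2m : Measurable (gQuant a b ν) := gQuant_measurable hab hνs
  have hpair : Measurable (fun u => (gQuant a b μ u, gQuant a b ν u)) := hg1m.prodMk hg2m
  refine ⟨Measure.map (fun u => (gQuant a b μ u, gQuant a b ν u))
    ((volume : Measure ℝ).restrict (Ioo 0 1)), ?_, ?_, ?_, ?_⟩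
  · exact Measure.isProbabilityMeasure_map hpair.aemeasurable
  · rw [Measure.map_map measurable_fst hpair]
    exact gQuant_map hab hμs
  · rw [Measure.map_map measurable_snd hpair]
    exact gQuant_map hab hνs
  · rw [integral_map hpair.aemeasurable (f := fun x : ℝ × ℝ => (x.1 - x.2) ^ 2)
      ((continuous_fst.sub continuous_snd).pow 2).aestronglyMeasurable]

lemma W2sqR_eq [IsProbabilityMeasure μ] [IsProbabilityMeasure ν]
    (hab : a < b) (hμs : μ (Icc a b)ᶜ = 0) (hνs : ν (Icc a b)ᶜ = 0) :
    W2sqR μ ν = ∫ t in Ioo (0:ℝ) 1, (gQuant a b μ t - gQuant a b ν t)^2 := by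
  have hmem := comonotone_mem hab hμs hνs
  have hlb : ∀ c ∈ {c : ℝ | ∃ π : Measure (ℝ × ℝ), IsProbabilityMeasure π ∧
      π.map Prod.fst = μ ∧ π.map Prod.snd = ν ∧ c = ∫ x : ℝ × ℝ, (x.1 - x.2) ^ 2 ∂π},
      (∫ t in Ioo (0:ℝ) 1, (gQuant a b μ t - gQuant a b ν t)^2) ≤ c := by
    rintro c ⟨π, hπ, h1, h2, rfl⟩
    exact coupling_cost_ge hab hμs hνs π h1 h2
  exact le_antisymm (csInf_le ⟨_, hlb⟩ hmem) (le_csInf ⟨_, hmem⟩ hlb)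

end w2eq

/-- Quantile-based global Fréchet regression for one-dimensional distributional responses:
with weights `s_{iG}(x)` averaging to 1, a probability measure `μ*` on `[a,b]` minimizes
`(1/n)Σᵢ s_{iG}(x)·W₂²(μ, νᵢ)` over probability measures on `[a,b]` if and only if its
quantile function is the metric projection in `L²[0,1]` of the weighted average
`(1/n)Σᵢ s_{iG}(x)·F_{νᵢ}⁻¹` onto the convex set of quantile functions. -/
theorem global_frechet_regression_quantile (a b : ℝ) (hab : a < b)
    (n : ℕ) (hn : 0 < n) (s : Fin n → ℝ) (hs : (1 / (n : ℝ)) * ∑ i, s i = 1)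
    (ν : Fin n → Measure ℝ) (hνp : ∀ i, IsProbabilityMeasure (ν i))
    (hνs : ∀ i, (ν i) (Icc a b)ᶜ = 0)
    (μStar : Measure ℝ) (hμp : IsProbabilityMeasure μStar)
    (hμs : μStar (Icc a b)ᶜ = 0) :
    (∀ μ : Measure ℝ, IsProbabilityMeasure μ → μ (Icc a b)ᶜ = 0 →
      (1 / (n : ℝ)) * ∑ i, s i * W2sqR μStar (ν i) ≤
      (1 / (n : ℝ)) * ∑ i, s i * W2sqR μ (ν i)) ↔
    (∀ g ∈ quantileSet a b,
      (∫ t in Ioo (0:ℝ) 1,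
        (quantileFn μStar t - (1 / (n : ℝ)) * ∑ i, s i * quantileFn (ν i) t) ^ 2) ≤
      (∫ t in Ioo (0:ℝ) 1,
        (g t - (1 / (n : ℝ)) * ∑ i, s i * quantileFn (ν i) t) ^ 2)) := by
  have hn0 : (0:ℝ) < n := by exact_mod_cast hn
  set L := (volume : Measure ℝ).restrict (Ioo (0:ℝ) 1) with hL
  set M : ℝ := max |a| |b| with hM
  set G : ℝ → ℝ := fun t => (1 / (n : ℝ)) * ∑ i, s i * gQuant a b (ν i) t with hG
  set CG : ℝ := (1 / (n : ℝ)) * ∑ i, |s i| * M with hCG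
  have hgi : ∀ i, Measurable (gQuant a b (ν i)) := fun i => by
    haveI := hνp i; exact gQuant_measurable hab (hνs i)
  have hgiI : ∀ i t, gQuant a b (ν i) t ∈ Icc a b := fun i t => by
    haveI := hνp i; exact gQuant_mem_Icc hab (hνs i) t
  have habsM : ∀ x : ℝ, x ∈ Icc a b → |x| ≤ M := fun x hx => abs_le_max_abs_abs hx.1 hx.2
  have hM0 : 0 ≤ M := le_trans (abs_nonneg a) (le_max_left _ _)
  have hGm : Measurable G := by
    rw [hG]
    exact (Finset.measurable_sum _ fun i _ => (hgi i).const_mul (s i)).const_mul _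
  have hGbd : ∀ t, |G t| ≤ CG := by
    intro t
    rw [hG, hCG]
    simp only
    rw [abs_mul, abs_of_nonneg (by positivity : (0:ℝ) ≤ 1/(n:ℝ))]
    refine mul_le_mul_of_nonneg_left ?_ (by positivity)
    calc |∑ i, s i * gQuant a b (ν i) t| ≤ ∑ i, |s i * gQuant a b (ν i) t| :=
        Finset.abs_sum_le_sum_abs _ _
      _ ≤ ∑ i, |s i| * M := Finset.sum_le_sum fun i _ => by
          rw [abs_mul]; exact mul_le_mul_of_nonneg_left (habsM _ (hgiI i t)) (abs_nonneg _)
  have hCG0 : 0 ≤ CG := le_trans (abs_nonneg _) (hGbd 0)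
  have hIbdd : ∀ {f : ℝ → ℝ}, Measurable f → ∀ {c : ℝ}, (∀ t, |f t| ≤ c) → Integrable f L :=
    fun hf _ h => integrable_of_ae_bdd L hf.aestronglyMeasurable (Filter.Eventually.of_forall h)
  -- the constant part of the objective (independent of μ)
  have hDeq : ∀ (μ : Measure ℝ), IsProbabilityMeasure μ → μ (Icc a b)ᶜ = 0 →
      (1 / (n : ℝ)) * ∑ i, s i * W2sqR μ (ν i)
        = (∫ t in Ioo (0:ℝ) 1, (gQuant a b μ t - G t)^2)
          + ∫ t in Ioo (0:ℝ) 1,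
              ((1 / (n : ℝ)) * ∑ i, s i * (gQuant a b (ν i) t)^2 - (G t)^2) := by
    intro μ hp hsupp
    haveI := hp
    have hgm : Measurable (gQuant a b μ) := gQuant_measurable hab hsupp
    have hgI : ∀ t, gQuant a b μ t ∈ Icc a b := gQuant_mem_Icc hab hsupp
    have hW : ∀ i, W2sqR μ (ν i)
        = ∫ t in Ioo (0:ℝ) 1, (gQuant a b μ t - gQuant a b (ν i) t)^2 := fun i => by
      haveI := hνp i; exact W2sqR_eq hab hsupp (hνs i)
    have hIi : ∀ i, Integrable (fun t => s i * (gQuant a b μ t - gQuant a b (ν i) t)^2) L := by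
      intro i
      refine hIbdd (((hgm.sub (hgi i)).pow_const 2).const_mul (s i))
        (c := |s i| * (b - a)^2) fun t => ?_
      rw [abs_mul, abs_of_nonneg (sq_nonneg (gQuant a b μ t - gQuant a b (ν i) t))]
      refine mul_le_mul_of_nonneg_left ?_ (abs_nonneg _)
      have h1 := hgI t; have h2 := hgiI i t
      nlinarith [h1.1, h1.2, h2.1, h2.2]
    have hptwise : ∀ t, (1 / (n:ℝ)) * ∑ i, s i * (gQuant a b μ t - gQuant a b (ν i) t)^2
        = (gQuant a b μ t - G t)^2
          + ((1 / (n:ℝ)) * ∑ i, s i * (gQuant a b (ν i) t)^2 - (G t)^2) := by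
      intro t
      have e1 : ∑ i, s i * (gQuant a b μ t - gQuant a b (ν i) t)^2
          = (gQuant a b μ t)^2 * (∑ i, s i)
            - 2 * gQuant a b μ t * (∑ i, s i * gQuant a b (ν i) t)
            + ∑ i, s i * (gQuant a b (ν i) t)^2 := by
        rw [Finset.mul_sum, Finset.mul_sum, ← Finset.sum_sub_distrib, ← Finset.sum_add_distrib]
        exact Finset.sum_congr rfl fun i _ => by ring
      simp only [hG]
      rw [e1]
      linear_combination (gQuant a b μ t)^2 * hs
    have hIA : Integrable (fun t => (gQuant a b μ t - G t)^2) L := by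
      refine hIbdd ((hgm.sub hGm).pow_const 2) (c := (M + CG)^2) fun t => ?_
      rw [abs_of_nonneg (sq_nonneg _)]
      have h1 : |gQuant a b μ t - G t| ≤ M + CG := by
        calc |gQuant a b μ t - G t| ≤ |gQuant a b μ t| + |G t| := abs_sub _ _
          _ ≤ M + CG := add_le_add (habsM _ (hgI t)) (hGbd t)
      calc (gQuant a b μ t - G t)^2 = |gQuant a b μ t - G t|^2 := (sq_abs _).symm
        _ ≤ (M + CG)^2 := by nlinarith [abs_nonneg (gQuant a b μ t - G t)]
    have hIB : Integrable (fun t =>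
        (1 / (n:ℝ)) * ∑ i, s i * (gQuant a b (ν i) t)^2 - (G t)^2) L := by
      refine Integrable.sub ?_ ?_
      · refine Integrable.const_mul ?_ _
        refine integrable_finset_sum _ fun i _ => ?_
        refine hIbdd (((hgi i).pow_const 2).const_mul (s i)) (c := |s i| * M^2) fun t => ?_
        rw [abs_mul, abs_of_nonneg (sq_nonneg (gQuant a b (ν i) t))]
        refine mul_le_mul_of_nonneg_left ?_ (abs_nonneg _)
        have h2 := hgiI i t
        nlinarith [habsM _ h2, abs_nonneg (gQuant a b (ν i) t), sq_abs (gQuant a b (ν i) t)]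
      · refine hIbdd (hGm.pow_const 2) (c := CG^2) fun t => ?_
        rw [abs_of_nonneg (sq_nonneg _)]
        calc (G t)^2 = |G t|^2 := (sq_abs _).symm
          _ ≤ CG^2 := by nlinarith [abs_nonneg (G t), hGbd t]
    calc (1 / (n : ℝ)) * ∑ i, s i * W2sqR μ (ν i)
        = (1 / (n : ℝ)) * ∑ i, s i *
            ∫ t in Ioo (0:ℝ) 1, (gQuant a b μ t - gQuant a b (ν i) t)^2 := by
          simp only [hW]
      _ = (1 / (n : ℝ)) * ∑ i,
            ∫ t in Ioo (0:ℝ) 1, s i * (gQuant a b μ t - gQuant a b (ν i) t)^2 := by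
          simp only [integral_const_mul]
      _ = ∫ t in Ioo (0:ℝ) 1,
            (1 / (n : ℝ)) * ∑ i, s i * (gQuant a b μ t - gQuant a b (ν i) t)^2 := by
          rw [← integral_finset_sum _ (fun i _ => hIi i), ← integral_const_mul]
      _ = ∫ t in Ioo (0:ℝ) 1, ((gQuant a b μ t - G t)^2
            + ((1 / (n:ℝ)) * ∑ i, s i * (gQuant a b (ν i) t)^2 - (G t)^2)) := by
          exact integral_congr_ae (Filter.Eventually.of_forall fun t => hptwise t)
      _ = (∫ t in Ioo (0:ℝ) 1, (gQuant a b μ t - G t)^2)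
          + ∫ t in Ioo (0:ℝ) 1,
              ((1 / (n:ℝ)) * ∑ i, s i * (gQuant a b (ν i) t)^2 - (G t)^2) :=
          integral_add hIA hIB
  -- bridge between quantileFn-integrals and gQuant-integrals
  have hbridge : ∀ (μ : Measure ℝ), IsProbabilityMeasure μ → μ (Icc a b)ᶜ = 0 →
      (∫ t in Ioo (0:ℝ) 1,
        (quantileFn μ t - (1 / (n : ℝ)) * ∑ i, s i * quantileFn (ν i) t) ^ 2)
        = ∫ t in Ioo (0:ℝ) 1, (gQuant a b μ t - G t)^2 := by
    intro μ hp hsupp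
    haveI := hp
    refine setIntegral_congr_fun measurableSet_Ioo fun t ht => ?_
    simp only [hG]
    have h1 : ∑ i, s i * gQuant a b (ν i) t = ∑ i, s i * quantileFn (ν i) t :=
      Finset.sum_congr rfl fun i _ => by rw [gQuant_eq t ht]
    rw [gQuant_eq t ht, h1]
  constructor
  · intro hmin g hg
    obtain ⟨ρ, hρp, hρs, rfl⟩ := hg
    have h1 := hmin ρ hρp hρs
    rw [hDeq μStar hμp hμs, hDeq ρ hρp hρs] at h1
    rw [hbridge μStar hμp hμs, hbridge ρ hρp hρs]
    linarith
  · intro hproj μ hp hsupp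
    have h1 := hproj (quantileFn μ) ⟨μ, hp, hsupp, rfl⟩
    rw [hbridge μStar hμp hμs, hbridge μ hp hsupp] at h1
    rw [hDeq μStar hμp hμs, hDeq μ hp hsupp]
    linarith
end

section
/- Let ν₀ be an absolutely continuous probability measure on compact convex M ⊂ ℝ^d and let T(M) be an admissible class of deformations: a convex, compact (in L²(ν₀)) set of bijective gradients of convex functions containing the identity and closed under T_i∘T_j⁻¹. Let ν = T_#ν₀ with T random in T(M), and let s(X,x) be weights with E[s(X,x)] = 1. Then the minimizer μ over {T₀#ν₀ : T₀ ∈ T(M)} of E[s(X,x)·W₂²(μ, ν)] exists, is unique, and equals T̃_#ν₀ where T̃ is the metric projection in L²(ν₀;ℝ^d) of w ↦ E[s(X,x)·T_ν(w)] onto T(M) (T_ν being the optimal map from ν to ν₀ composed appropriately). -/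
open MeasureTheory ProbabilityTheory Set Filter Topology

set_option maxHeartbeats 1600000

/-- `T` is the gradient of a convex function on ℝ^d. -/
def IsGradientOfConvex {d : ℕ} (T : EuclideanSpace ℝ (Fin d) → EuclideanSpace ℝ (Fin d)) :
    Prop :=
  ∃ φ : EuclideanSpace ℝ (Fin d) → ℝ, ConvexOn ℝ univ φ ∧ ∀ x, HasGradientAt φ (T x) x

/-- An admissible class of deformations relative to a base measure `ν₀`: a convex,
L²(ν₀)-(sequentially) compact set of measurable bijective gradients of convex functions
containing the identity and closed under `T_i ∘ T_j⁻¹`. -/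
structure AdmissibleClass {d : ℕ} (ν₀ : Measure (EuclideanSpace ℝ (Fin d)))
    (𝒯 : Set (EuclideanSpace ℝ (Fin d) → EuclideanSpace ℝ (Fin d))) : Prop where
  id_mem : id ∈ 𝒯
  gradient : ∀ T ∈ 𝒯, IsGradientOfConvex T
  measurable : ∀ T ∈ 𝒯, Measurable T
  bijective : ∀ T ∈ 𝒯, Function.Bijective T
  comp_inv_mem : ∀ Ti ∈ 𝒯, ∀ Tj ∈ 𝒯, Ti ∘ Function.invFun Tj ∈ 𝒯
  convex : ∀ T₁ ∈ 𝒯, ∀ T₂ ∈ 𝒯, ∀ a : ℝ, 0 ≤ a → a ≤ 1 →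
    (fun w => a • T₁ w + (1 - a) • T₂ w) ∈ 𝒯
  compact : ∀ f : ℕ → (EuclideanSpace ℝ (Fin d) → EuclideanSpace ℝ (Fin d)),
    (∀ n, f n ∈ 𝒯) → ∃ g ∈ 𝒯, ∃ φ : ℕ → ℕ, StrictMono φ ∧
      Tendsto (fun n => ∫ w, ‖f (φ n) w - g w‖ ^ 2 ∂ν₀) atTop (nhds 0)



section GradConvex

variable {F : Type*} [NormedAddCommGroup F] [InnerProductSpace ℝ F] [CompleteSpace F]

local notation "⟪" x ", " y "⟫" => @inner ℝ _ _ x y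

lemma hasDerivAt_comp_line {φ : F → ℝ} {p x v : F} {t₀ : ℝ}
    (hg : HasGradientAt φ p (x + t₀ • v)) :
    HasDerivAt (fun t : ℝ => φ (x + t • v)) ⟪p, v⟫ t₀ := by
  have h1 : HasDerivAt (fun t : ℝ => x + t • v) v t₀ := by
    simpa using ((hasDerivAt_id t₀).smul_const v).const_add x
  have h2 := hg.hasFDerivAt.comp_hasDerivAt t₀ h1
  simp only [InnerProductSpace.toDual_apply_apply] at h2
  exact h2

/-- The gradient inequality for a convex function. -/
lemma grad_ineq {φ : F → ℝ} {p x : F} (hφ : ConvexOn ℝ univ φ)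
    (hg : HasGradientAt φ p x) (y : F) : φ x + ⟪p, y - x⟫ ≤ φ y := by
  set v := y - x with hv
  have hline : ∀ t : ℝ, x + t • v = (1 - t) • x + t • y := by
    intro t; simp [hv, smul_sub, sub_smul]; abel
  have hq : HasDerivAt (fun t : ℝ => φ (x + t • v)) ⟪p, v⟫ 0 := by
    apply hasDerivAt_comp_line; simpa using hg
  have key : ⟪p, v⟫ ≤ φ y - φ x := by
    have htend : Tendsto (slope (fun t : ℝ => φ (x + t • v)) 0) (𝓝[>] 0) (𝓝 ⟪p, v⟫) :=
      (hasDerivAt_iff_tendsto_slope.1 hq).mono_left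
        (nhdsWithin_mono _ (fun t ht => ne_of_gt ht))
    refine le_of_tendsto htend ?_
    filter_upwards [Ioo_mem_nhdsGT_of_mem (Set.left_mem_Ico.2 one_pos)] with t ht
    have h01 : (0:ℝ) < t := ht.1
    have h1 : φ (x + t • v) ≤ (1 - t) * φ x + t * φ y := by
      rw [hline t]
      have := hφ.2 (mem_univ x) (mem_univ y) (by linarith [ht.2] : (0:ℝ) ≤ 1 - t)
        (le_of_lt h01) (by ring)
      simpa [smul_eq_mul] using this
    have hs : slope (fun t : ℝ => φ (x + t • v)) 0 t
        = (φ (x + t • v) - φ x) / t := by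
      rw [slope_def_field]; simp
    rw [hs, div_le_iff₀ h01]
    nlinarith [h1]
  linarith [key]

/-- A subgradient at a point of differentiability equals the gradient. -/
lemma subgradient_eq {φ : F → ℝ} {p x gx : F}
    (hg : HasGradientAt φ gx x) (hp : ∀ y, φ x + ⟪p, y - x⟫ ≤ φ y) : p = gx := by
  have h : ∀ v : F, ⟪p, v⟫ ≤ ⟪gx, v⟫ := by
    intro v
    have hq : HasDerivAt (fun t : ℝ => φ (x + t • v)) ⟪gx, v⟫ 0 := by
      apply hasDerivAt_comp_line; simpa using hg
    have htend : Tendsto (slope (fun t : ℝ => φ (x + t • v)) 0) (𝓝[>] 0) (𝓝 ⟪gx, v⟫) :=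
      (hasDerivAt_iff_tendsto_slope.1 hq).mono_left
        (nhdsWithin_mono _ (fun t ht => ne_of_gt ht))
    refine ge_of_tendsto htend ?_
    filter_upwards [self_mem_nhdsWithin] with t (ht : 0 < t)
    have hpy := hp (x + t • v)
    rw [add_sub_cancel_left, real_inner_smul_right] at hpy
    have hs : slope (fun t : ℝ => φ (x + t • v)) 0 t
        = (φ (x + t • v) - φ x) / t := by
      rw [slope_def_field]; simp
    rw [hs, le_div_iff₀ ht]
    linarith [hpy]
  have h2 := h (p - gx)
  rw [← sub_nonpos, ← inner_sub_left] at h2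
  exact sub_eq_zero.1 (real_inner_self_nonpos.1 h2)

/-- The gradient of an everywhere-differentiable convex function is continuous. -/
lemma gradient_continuous_of_convex [FiniteDimensional ℝ F] {φ : F → ℝ} {g : F → F}
    (hφ : ConvexOn ℝ univ φ) (hg : ∀ x, HasGradientAt φ (g x) x) : Continuous g := by
  have φcont : Continuous φ := by
    exact continuousOn_univ.1 (hφ.continuousOn isOpen_univ)
  -- local boundedness of g
  have hbdd : ∀ x : F, ∃ C : ℝ, ∀ z ∈ Metric.closedBall x 1, ‖g z‖ ≤ C := by
    intro x
    obtain ⟨C₁, hC₁⟩ := (isCompact_closedBall x 2).exists_bound_of_continuousOn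
      φcont.continuousOn
    refine ⟨2 * C₁, fun z hz => ?_⟩
    have hC₁0 : 0 ≤ C₁ := le_trans (norm_nonneg _) (hC₁ x (by simp))
    rcases eq_or_ne (g z) 0 with h0 | h0
    · simp [h0]; linarith
    · set v : F := ‖g z‖⁻¹ • g z with hvdef
      have hineq := grad_ineq hφ (hg z) (z + v)
      rw [add_sub_cancel_left] at hineq
      have hinner : ⟪g z, v⟫ = ‖g z‖ := by
        rw [hvdef, real_inner_smul_right, real_inner_self_eq_norm_sq, sq,
          inv_mul_cancel_left₀ (norm_ne_zero_iff.2 h0)]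
      have hvnorm : ‖v‖ = 1 := by
        rw [hvdef, norm_smul]; simp [norm_ne_zero_iff.2 h0]
      have hz2 : z ∈ Metric.closedBall x 2 := by
        apply Metric.closedBall_subset_closedBall (by norm_num : (1:ℝ) ≤ 2) hz
      have hzv2 : z + v ∈ Metric.closedBall x 2 := by
        rw [Metric.mem_closedBall] at hz ⊢
        calc dist (z + v) x ≤ dist (z + v) z + dist z x := dist_triangle _ _ _
        _ ≤ 1 + 1 := by
            apply add_le_add _ hz
            simp [dist_eq_norm, hvnorm]
        _ = 2 := by norm_num
      have b1 : φ (z + v) ≤ C₁ := le_trans (le_abs_self _) (hC₁ _ hzv2)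
      have b2 : -C₁ ≤ φ z := by
        have := hC₁ z hz2; rw [Real.norm_eq_abs, abs_le] at this; exact this.1
      linarith [hineq, hinner.symm.le, hinner.le]
  -- sequential continuity
  apply SeqContinuous.continuous
  intro u x hu
  apply tendsto_of_subseq_tendsto
  intro ns hns
  have hy : Tendsto (fun n => u (ns n)) atTop (𝓝 x) := hu.comp hns
  obtain ⟨C, hC⟩ := hbdd x
  obtain ⟨N, hN⟩ := (Metric.tendsto_atTop.1 hy) 1 one_pos
  have hmem : ∀ k : ℕ, g (u (ns (N + k))) ∈ Metric.closedBall (0 : F) C := by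
    intro k
    rw [Metric.mem_closedBall, dist_zero_right]
    exact hC _ (Metric.mem_closedBall.2 (le_of_lt (hN _ (Nat.le_add_right N k))))
  obtain ⟨p, _, ψ, hψmono, hψ⟩ := (isCompact_closedBall (0:F) C).tendsto_subseq hmem
  have hcomp : Tendsto (fun k => N + ψ k) atTop atTop :=
    tendsto_atTop_mono (fun k => Nat.le_add_left (ψ k) N) hψmono.tendsto_atTop
  have hyk : Tendsto (fun k => u (ns (N + ψ k))) atTop (𝓝 x) := hy.comp hcomp
  have hp : p = g x := by
    apply subgradient_eq (hg x)
    intro y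
    have hk : ∀ k, φ (u (ns (N + ψ k))) + ⟪g (u (ns (N + ψ k))), y - u (ns (N + ψ k))⟫
        ≤ φ y := fun k => grad_ineq hφ (hg _) y
    have hlim : Tendsto (fun k => φ (u (ns (N + ψ k)))
        + ⟪g (u (ns (N + ψ k))), y - u (ns (N + ψ k))⟫) atTop (𝓝 (φ x + ⟪p, y - x⟫)) :=
      ((φcont.tendsto x).comp hyk).add (hψ.inner (tendsto_const_nhds.sub hyk))
    exact le_of_tendsto hlim (Eventually.of_forall hk)
  refine ⟨fun k => N + ψ k, ?_⟩
  rw [← hp]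
  exact hψ


end GradConvex

section Main

variable {d : ℕ}

local notation "𝔼" => EuclideanSpace ℝ (Fin d)
local notation "⟪" x ", " y "⟫" => @inner ℝ _ _ x y

lemma AdmissibleClass.continuous_of_mem {ν₀ : Measure 𝔼} {𝒯 : Set (𝔼 → 𝔼)}
    (h𝒯 : AdmissibleClass ν₀ 𝒯) {S : 𝔼 → 𝔼} (hS : S ∈ 𝒯) : Continuous S := by
  obtain ⟨φ, hφ, hg⟩ := h𝒯.gradient S hS
  exact gradient_continuous_of_convex hφ hg

lemma ae_mem_M {M : Set 𝔼} {ν₀ : Measure 𝔼} (hsupp : ν₀ Mᶜ = 0) : ∀ᵐ w ∂ν₀, w ∈ M := by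
  rw [ae_iff]
  exact hsupp

lemma bounded_integrable {M : Set 𝔼} {ν₀ : Measure 𝔼} [IsProbabilityMeasure ν₀]
    (hsupp : ν₀ Mᶜ = 0) {f : 𝔼 → ℝ} (hf : AEStronglyMeasurable f ν₀) {C : ℝ}
    (hC : ∀ w ∈ M, |f w| ≤ C) : Integrable f ν₀ := by
  refine Integrable.mono' (integrable_const C) hf ?_
  filter_upwards [ae_mem_M hsupp] with w hw
  simpa [Real.norm_eq_abs] using hC w hw

lemma cont_integrable {M : Set 𝔼} (hMc : IsCompact M) {ν₀ : Measure 𝔼}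
    [IsProbabilityMeasure ν₀] (hsupp : ν₀ Mᶜ = 0) {f : 𝔼 → ℝ} (hf : Continuous f) :
    Integrable f ν₀ := by
  obtain ⟨C, hC⟩ := hMc.exists_bound_of_continuousOn hf.continuousOn
  exact bounded_integrable hsupp hf.aestronglyMeasurable
    (fun w hw => by simpa [Real.norm_eq_abs] using hC w hw)

/-- Brenier-type identity: within the admissible class, the squared Wasserstein distance is
the `L²(ν₀)` distance between the transport maps. -/
lemma W2sq_eq {M : Set 𝔼} (hMc : IsCompact M) {ν₀ : Measure 𝔼} [IsProbabilityMeasure ν₀]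
    (hsupp : ν₀ Mᶜ = 0) {𝒯 : Set (𝔼 → 𝔼)} (h𝒯 : AdmissibleClass ν₀ 𝒯)
    (hrange : ∀ T ∈ 𝒯, MapsTo T M M) {T₁ T₂ : 𝔼 → 𝔼} (h₁ : T₁ ∈ 𝒯) (h₂ : T₂ ∈ 𝒯) :
    W2sq (ν₀.map T₁) (ν₀.map T₂) = ∫ w, ‖T₁ w - T₂ w‖ ^ 2 ∂ν₀ := by
  have hm₁ : Measurable T₁ := h𝒯.measurable T₁ h₁
  have hm₂ : Measurable T₂ := h𝒯.measurable T₂ h₂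
  have hMmeas : MeasurableSet M := hMc.isClosed.measurableSet
  set c₀ : ℝ := ∫ w, ‖T₁ w - T₂ w‖ ^ 2 ∂ν₀ with hc₀
  -- the coupling witnessing the upper bound
  have hpairm : Measurable (fun w : 𝔼 => (T₁ w, T₂ w)) := hm₁.prodMk hm₂
  have hcostcont : Continuous (fun x : 𝔼 × 𝔼 => ‖x.1 - x.2‖ ^ 2) :=
    (continuous_fst.sub continuous_snd).norm.pow 2
  have hmem : c₀ ∈ {c : ℝ | ∃ π : Measure (𝔼 × 𝔼),
      IsProbabilityMeasure π ∧ π.map Prod.fst = ν₀.map T₁ ∧ π.map Prod.snd = ν₀.map T₂ ∧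
      c = ∫ x, ‖x.1 - x.2‖ ^ 2 ∂π} := by
    refine ⟨ν₀.map (fun w => (T₁ w, T₂ w)), Measure.isProbabilityMeasure_map hpairm.aemeasurable,
      ?_, ?_, ?_⟩
    · rw [Measure.map_map measurable_fst hpairm]; rfl
    · rw [Measure.map_map measurable_snd hpairm]; rfl
    · rw [integral_map hpairm.aemeasurable hcostcont.aestronglyMeasurable]
  -- the lower bound : every coupling has cost at least c₀
  have hlow : ∀ c ∈ {c : ℝ | ∃ π : Measure (𝔼 × 𝔼),
      IsProbabilityMeasure π ∧ π.map Prod.fst = ν₀.map T₁ ∧ π.map Prod.snd = ν₀.map T₂ ∧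
      c = ∫ x, ‖x.1 - x.2‖ ^ 2 ∂π}, c₀ ≤ c := by
    rintro c ⟨π, hπ, hfst, hsnd, rfl⟩
    -- a.e. membership in M × M
    have hfstnull : π (Prod.fst ⁻¹' Mᶜ) = 0 := by
      rw [← Measure.map_apply measurable_fst hMmeas.compl, hfst,
        Measure.map_apply hm₁ hMmeas.compl]
      refine measure_mono_null (fun w hw => ?_) hsupp
      intro hwM
      exact hw ((hrange T₁ h₁) hwM)
    have hsndnull : π (Prod.snd ⁻¹' Mᶜ) = 0 := by
      rw [← Measure.map_apply measurable_snd hMmeas.compl, hsnd,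
        Measure.map_apply hm₂ hMmeas.compl]
      refine measure_mono_null (fun w hw => ?_) hsupp
      intro hwM
      exact hw ((hrange T₂ h₂) hwM)
    have haeπ : ∀ᵐ x ∂π, x.1 ∈ M ∧ x.2 ∈ M := by
      have h1 : ∀ᵐ x ∂π, x.1 ∈ M := by
        rw [ae_iff]; exact hfstnull
      have h2 : ∀ᵐ x ∂π, x.2 ∈ M := by
        rw [ae_iff]; exact hsndnull
      filter_upwards [h1, h2] with x hx1 hx2 using ⟨hx1, hx2⟩
    have hIπ : ∀ {f : 𝔼 × 𝔼 → ℝ}, Continuous f → Integrable f π := by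
      intro f hf
      obtain ⟨C, hC⟩ := (hMc.prod hMc).exists_bound_of_continuousOn hf.continuousOn
      refine Integrable.mono' (integrable_const C) hf.aestronglyMeasurable ?_
      filter_upwards [haeπ] with x hx
      exact hC x (Set.mem_prod.2 hx)
    have hmargfst : ∀ {f : 𝔼 → ℝ}, Continuous f → ∫ x, f x.1 ∂π = ∫ w, f (T₁ w) ∂ν₀ := by
      intro f hf
      calc ∫ x, f x.1 ∂π = ∫ y, f y ∂(π.map Prod.fst) :=
            (integral_map measurable_fst.aemeasurable hf.aestronglyMeasurable).symm
        _ = ∫ y, f y ∂(ν₀.map T₁) := by rw [hfst]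
        _ = ∫ w, f (T₁ w) ∂ν₀ := integral_map hm₁.aemeasurable hf.aestronglyMeasurable
    have hmargsnd : ∀ {f : 𝔼 → ℝ}, Continuous f → ∫ x, f x.2 ∂π = ∫ w, f (T₂ w) ∂ν₀ := by
      intro f hf
      calc ∫ x, f x.2 ∂π = ∫ y, f y ∂(π.map Prod.snd) :=
            (integral_map measurable_snd.aemeasurable hf.aestronglyMeasurable).symm
        _ = ∫ y, f y ∂(ν₀.map T₂) := by rw [hsnd]
        _ = ∫ w, f (T₂ w) ∂ν₀ := integral_map hm₂.aemeasurable hf.aestronglyMeasurable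
    -- the convex potential and its "conjugate"
    set S : 𝔼 → 𝔼 := T₁ ∘ Function.invFun T₂ with hSdef
    have hS : S ∈ 𝒯 := h𝒯.comp_inv_mem T₁ h₁ T₂ h₂
    have hSbij : Function.Bijective S := h𝒯.bijective S hS
    set u : 𝔼 → 𝔼 := Function.invFun S with hudef
    have hu𝒯 : u ∈ 𝒯 := by
      have := h𝒯.comp_inv_mem id h𝒯.id_mem S hS
      simpa [Function.id_comp] using this
    have hucont : Continuous u := h𝒯.continuous_of_mem hu𝒯
    obtain ⟨φ, hφconv, hφgrad⟩ := h𝒯.gradient S hS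
    have hφcont : Continuous φ :=
      continuousOn_univ.1 (hφconv.continuousOn isOpen_univ)
    have hSu : ∀ x, S (u x) = x := fun x => Function.rightInverse_invFun hSbij.surjective x
    have huS : ∀ z, u (S z) = z := fun z => Function.leftInverse_invFun hSbij.injective z
    set ψ : 𝔼 → ℝ := fun x => ⟪x, u x⟫ - φ (u x) with hψdef
    have hψcont : Continuous ψ := by
      apply Continuous.sub
      · exact continuous_id.inner hucont
      · exact hφcont.comp hucont
    have young : ∀ x y : 𝔼, ⟪x, y⟫ ≤ φ y + ψ x := by
      intro x y
      have h := grad_ineq hφconv (hφgrad (u x)) y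
      rw [hSu x] at h
      rw [inner_sub_right] at h
      simp only [hψdef]
      linarith
    have graph_eq : ∀ w, ψ (T₁ w) = ⟪T₁ w, T₂ w⟫ - φ (T₂ w) := by
      intro w
      have h1 : S (T₂ w) = T₁ w := by
        simp only [hSdef, Function.comp_apply]
        rw [Function.leftInverse_invFun (h𝒯.bijective T₂ h₂).injective w]
      have h2 : u (T₁ w) = T₂ w := by rw [← h1, huS]
      simp only [hψdef, h2, h1]
    -- integrabilities
    have hip1 : Integrable (fun x : 𝔼 × 𝔼 => ‖x.1‖ ^ 2) π := hIπ (continuous_fst.norm.pow 2)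
    have hip2 : Integrable (fun x : 𝔼 × 𝔼 => ‖x.2‖ ^ 2) π := hIπ (continuous_snd.norm.pow 2)
    have hipinner : Integrable (fun x : 𝔼 × 𝔼 => ⟪x.1, x.2⟫) π :=
      hIπ (continuous_fst.inner continuous_snd)
    have hipφ : Integrable (fun x : 𝔼 × 𝔼 => φ x.2) π := hIπ (hφcont.comp continuous_snd)
    have hipψ : Integrable (fun x : 𝔼 × 𝔼 => ψ x.1) π := hIπ (hψcont.comp continuous_fst)
    have hiT : ∀ {f : 𝔼 → ℝ}, Continuous f → Integrable f ν₀ := fun hf =>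
      cont_integrable hMc hsupp hf
    -- expand cost under π
    have expandπ : ∫ x, ‖x.1 - x.2‖ ^ 2 ∂π
        = ∫ x, ‖x.1‖ ^ 2 ∂π + ∫ x, ‖x.2‖ ^ 2 ∂π - 2 * ∫ x, ⟪x.1, x.2⟫ ∂π := by
      have : (fun x : 𝔼 × 𝔼 => ‖x.1 - x.2‖ ^ 2)
          = fun x : 𝔼 × 𝔼 => ‖x.1‖ ^ 2 + ‖x.2‖ ^ 2 - 2 * ⟪x.1, x.2⟫ := by
        funext x
        rw [norm_sub_sq_real]
        ring
      have hipsum : Integrable (fun x : 𝔼 × 𝔼 => ‖x.1‖ ^ 2 + ‖x.2‖ ^ 2) π :=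
        hIπ ((continuous_fst.norm.pow 2).add (continuous_snd.norm.pow 2))
      rw [this, integral_sub hipsum (hipinner.const_mul 2),
        integral_add hip1 hip2, integral_const_mul]
    -- expand cost under ν₀
    have expandν : c₀ = ∫ w, ‖T₁ w‖ ^ 2 ∂ν₀ + ∫ w, ‖T₂ w‖ ^ 2 ∂ν₀
        - 2 * ∫ w, ⟪T₁ w, T₂ w⟫ ∂ν₀ := by
      have hcT₁ : Continuous T₁ := h𝒯.continuous_of_mem h₁
      have hcT₂ : Continuous T₂ := h𝒯.continuous_of_mem h₂
      have : (fun w => ‖T₁ w - T₂ w‖ ^ 2)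
          = fun w => ‖T₁ w‖ ^ 2 + ‖T₂ w‖ ^ 2 - 2 * ⟪T₁ w, T₂ w⟫ := by
        funext w
        rw [norm_sub_sq_real]
        ring
      have h1 : Integrable (fun w => ‖T₁ w‖ ^ 2) ν₀ := hiT (hcT₁.norm.pow 2)
      have h2 : Integrable (fun w => ‖T₂ w‖ ^ 2) ν₀ := hiT (hcT₂.norm.pow 2)
      have h12 : Integrable (fun w => ‖T₁ w‖ ^ 2 + ‖T₂ w‖ ^ 2) ν₀ :=
        hiT ((hcT₁.norm.pow 2).add (hcT₂.norm.pow 2))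
      have h3 : Integrable (fun w => ⟪T₁ w, T₂ w⟫) ν₀ := hiT (hcT₁.inner hcT₂)
      rw [hc₀, this, integral_sub h12 (h3.const_mul 2),
        integral_add h1 h2, integral_const_mul]
    -- the key inequality on the inner product term
    have hcT₁ : Continuous T₁ := h𝒯.continuous_of_mem h₁
    have hcT₂ : Continuous T₂ := h𝒯.continuous_of_mem h₂
    have hinnerle : ∫ x, ⟪x.1, x.2⟫ ∂π ≤ ∫ w, ⟪T₁ w, T₂ w⟫ ∂ν₀ := by
      have step1 : ∫ x, ⟪x.1, x.2⟫ ∂π ≤ ∫ x, (φ x.2 + ψ x.1) ∂π := by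
        have hipφψ : Integrable (fun x : 𝔼 × 𝔼 => φ x.2 + ψ x.1) π :=
          hIπ ((hφcont.comp continuous_snd).add (hψcont.comp continuous_fst))
        refine integral_mono hipinner hipφψ ?_
        intro x
        exact young x.1 x.2
      have step2 : ∫ x, (φ x.2 + ψ x.1) ∂π = ∫ w, φ (T₂ w) ∂ν₀ + ∫ w, ψ (T₁ w) ∂ν₀ := by
        rw [integral_add hipφ hipψ, hmargsnd hφcont, hmargfst hψcont]
      have step3 : ∫ w, ψ (T₁ w) ∂ν₀
          = ∫ w, ⟪T₁ w, T₂ w⟫ ∂ν₀ - ∫ w, φ (T₂ w) ∂ν₀ := by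
        have : (fun w => ψ (T₁ w)) = fun w => ⟪T₁ w, T₂ w⟫ - φ (T₂ w) := funext graph_eq
        have hInn : Integrable (fun w => ⟪T₁ w, T₂ w⟫) ν₀ := hiT (hcT₁.inner hcT₂)
        have hφT₂ : Integrable (fun w => φ (T₂ w)) ν₀ := hiT (hφcont.comp hcT₂)
        rw [this, integral_sub hInn hφT₂]
      rw [step2, step3] at step1
      linarith [step1]
    -- put it together
    have hfst2 : ∫ x, ‖x.1‖ ^ 2 ∂π = ∫ w, ‖T₁ w‖ ^ 2 ∂ν₀ := hmargfst (continuous_norm.pow 2)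
    have hsnd2 : ∫ x, ‖x.2‖ ^ 2 ∂π = ∫ w, ‖T₂ w‖ ^ 2 ∂ν₀ := hmargsnd (continuous_norm.pow 2)
    rw [expandπ, expandν, hfst2, hsnd2]
    linarith
  exact le_antisymm (csInf_le ⟨c₀, hlow⟩ hmem) (le_csInf ⟨c₀, hmem⟩ hlow)


/-- Joint a.e.-strong measurability of `(ω, w) ↦ s ω • T ω w` for a family of continuous maps
that is a.e.-measurable in `ω` at each fixed `w`. -/
lemma joint_aesm {Ω : Type*} [MeasureSpace Ω] [IsProbabilityMeasure (ℙ : Measure Ω)]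
    (ν₀ : Measure 𝔼) [IsProbabilityMeasure ν₀]
    (T : Ω → 𝔼 → 𝔼) (hTcont : ∀ ω, Continuous (T ω)) (s : Ω → ℝ)
    (hsT : ∀ w, Integrable (fun ω => s ω • T ω w) ℙ) :
    AEStronglyMeasurable (fun p : Ω × 𝔼 => s p.1 • T p.1 p.2) ((ℙ : Measure Ω).prod ν₀) := by
  set e : ℕ → 𝔼 := TopologicalSpace.denseSeq 𝔼 with he_def
  have he : DenseRange e := TopologicalSpace.denseRange_denseSeq 𝔼
  set G : ℕ → Ω → 𝔼 := fun n => ((hsT (e n)).aestronglyMeasurable).mk _ with hG_def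
  have hGsm : ∀ n, StronglyMeasurable (G n) := fun n =>
    (hsT (e n)).aestronglyMeasurable.stronglyMeasurable_mk
  have hGeq : ∀ n, ∀ᵐ ω ∂(ℙ : Measure Ω), s ω • T ω (e n) = G n ω := fun n =>
    (hsT (e n)).aestronglyMeasurable.ae_eq_mk
  have hex : ∀ (k : ℕ) (w : 𝔼), ∃ n, dist w (e n) < 1 / (k + 1) := fun k w =>
    he.exists_dist_lt w (by positivity)
  set r : ℕ → 𝔼 → ℕ := fun k w => Nat.find (hex k w) with hr_def
  have hrmeas : ∀ k, Measurable (r k) := by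
    intro k
    apply measurable_find
    intro n
    have : {w : 𝔼 | dist w (e n) < 1 / (k + 1)} = Metric.ball (e n) (1 / (k + 1)) := by
      ext w; simp [Metric.mem_ball]
    rw [this]
    exact measurableSet_ball
  set H : ℕ → Ω × 𝔼 → 𝔼 := fun k p => G (r k p.2) p.1 with hH_def
  have hHmeas : ∀ k, AEStronglyMeasurable (H k) ((ℙ : Measure Ω).prod ν₀) := by
    intro k
    have h1 : Measurable (fun q : Ω × ℕ => G q.2 q.1) :=
      measurable_from_prod_countable_left (fun n => (hGsm n).measurable)
    have h2 : Measurable (fun p : Ω × 𝔼 => (p.1, r k p.2)) :=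
      measurable_fst.prodMk ((hrmeas k).comp measurable_snd)
    exact (h1.comp h2).aestronglyMeasurable
  set N : Set Ω := ⋃ n, {ω | ¬ s ω • T ω (e n) = G n ω} with hN_def
  have hNnull : (ℙ : Measure Ω) N = 0 := by
    refine measure_iUnion_null fun n => ?_
    have := hGeq n
    rwa [MeasureTheory.ae_iff] at this
  obtain ⟨N', hNN', hN'meas, hN'null⟩ := exists_measurable_superset_of_null hNnull
  have hprodnull : ((ℙ : Measure Ω).prod ν₀) {p : Ω × 𝔼 | p.1 ∈ N} = 0 := by
    refine measure_mono_null (fun p hp => ?_) (?_ : ((ℙ : Measure Ω).prod ν₀) (N' ×ˢ univ) = 0)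
    · exact ⟨hNN' hp, mem_univ _⟩
    · rw [Measure.prod_prod, hN'null, zero_mul]
  have haet : ∀ᵐ p ∂((ℙ : Measure Ω).prod ν₀),
      Tendsto (fun k => H k p) atTop (𝓝 (s p.1 • T p.1 p.2)) := by
    have hae : ∀ᵐ p ∂((ℙ : Measure Ω).prod ν₀), p.1 ∉ N := by
      rw [MeasureTheory.ae_iff]
      simpa using hprodnull
    filter_upwards [hae] with p hp
    have hG : ∀ n, G n p.1 = s p.1 • T p.1 (e n) := by
      intro n
      by_contra hcon
      exact hp (mem_iUnion.2 ⟨n, fun h => hcon h.symm⟩)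
    have hH : ∀ k, H k p = s p.1 • T p.1 (e (r k p.2)) := fun k => hG (r k p.2)
    have he_t : Tendsto (fun k => e (r k p.2)) atTop (𝓝 p.2) := by
      rw [tendsto_iff_dist_tendsto_zero]
      refine squeeze_zero (fun k => dist_nonneg) (fun k => ?_)
        tendsto_one_div_add_atTop_nhds_zero_nat
      rw [dist_comm]
      exact le_of_lt (Nat.find_spec (hex k p.2))
    have hlim : Tendsto (fun k => s p.1 • T p.1 (e (r k p.2))) atTop
        (𝓝 (s p.1 • T p.1 p.2)) :=
      (((hTcont p.1).tendsto p.2).comp he_t).const_smul (s p.1)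
    exact Tendsto.congr (fun k => (hH k).symm) hlim
  exact aestronglyMeasurable_of_tendsto_ae atTop hHmeas haet

/-- The Fubini swap identity for the admissible family. -/
lemma swap_identity {Ω : Type*} [MeasureSpace Ω] [IsProbabilityMeasure (ℙ : Measure Ω)]
    {M : Set 𝔼} (hMc : IsCompact M) {ν₀ : Measure 𝔼} [IsProbabilityMeasure ν₀]
    (hsupp : ν₀ Mᶜ = 0)
    (T : Ω → 𝔼 → 𝔼) (hTcont : ∀ ω, Continuous (T ω)) (hrangeT : ∀ ω, MapsTo (T ω) M M)
    (s : Ω → ℝ) (hs : Integrable s ℙ)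
    (hsT : ∀ w, Integrable (fun ω => s ω • T ω w) ℙ)
    (h : 𝔼 → 𝔼) (hhcont : Continuous h) :
    Integrable (fun ω => ∫ w, ⟪h w, s ω • T ω w⟫ ∂ν₀) ℙ ∧
    ∫ ω, (∫ w, ⟪h w, s ω • T ω w⟫ ∂ν₀) ∂(ℙ : Measure Ω)
      = ∫ w, ⟪h w, ∫ ω, s ω • T ω w ∂(ℙ : Measure Ω)⟫ ∂ν₀ := by
  have hMmeas : MeasurableSet M := hMc.isClosed.measurableSet
  have hjoint := joint_aesm ν₀ T hTcont s hsT
  set f₀ : Ω × 𝔼 → ℝ := fun p => ⟪h p.2, s p.1 • T p.1 p.2⟫ with hf₀_def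
  have hf₀aesm : AEStronglyMeasurable f₀ ((ℙ : Measure Ω).prod ν₀) :=
    AEStronglyMeasurable.inner (hhcont.measurable.comp measurable_snd).aestronglyMeasurable hjoint
  obtain ⟨Ch, hCh⟩ := hMc.exists_bound_of_continuousOn hhcont.continuousOn
  obtain ⟨CM, hCM⟩ := isBounded_iff_forall_norm_le.1 hMc.isBounded
  have haem : ∀ᵐ p ∂((ℙ : Measure Ω).prod ν₀), p.2 ∈ M := by
    rw [MeasureTheory.ae_iff]
    have : {p : Ω × 𝔼 | ¬ p.2 ∈ M} = (univ : Set Ω) ×ˢ Mᶜ := by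
      ext p; simp
    rw [this, Measure.prod_prod, hsupp, mul_zero]
  have hsfst : Integrable (fun p : Ω × 𝔼 => s p.1) ((ℙ : Measure Ω).prod ν₀) := by
    have hmap : ((ℙ : Measure Ω).prod ν₀).map Prod.fst = (ℙ : Measure Ω) := by
      rw [Measure.map_fst_prod]; simp
    have := (integrable_map_measure (f := Prod.fst)
      (by rw [hmap]; exact hs.aestronglyMeasurable) measurable_fst.aemeasurable)
    rw [hmap] at this
    exact this.1 hs
  have hf₀int : Integrable f₀ ((ℙ : Measure Ω).prod ν₀) := by
    refine Integrable.mono' ((hsfst.abs).const_mul (Ch * CM)) hf₀aesm ?_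
    filter_upwards [haem] with p hp
    have hTin : T p.1 p.2 ∈ M := hrangeT p.1 hp
    have hb1 : ‖h p.2‖ ≤ Ch := hCh p.2 hp
    have hb2 : ‖T p.1 p.2‖ ≤ CM := hCM _ hTin
    have hCh0 : (0:ℝ) ≤ Ch := le_trans (norm_nonneg _) hb1
    calc ‖f₀ p‖ ≤ ‖h p.2‖ * ‖s p.1 • T p.1 p.2‖ := by
          rw [hf₀_def]; exact norm_inner_le_norm _ _
      _ = ‖h p.2‖ * (|s p.1| * ‖T p.1 p.2‖) := by rw [norm_smul]; rfl
      _ ≤ Ch * (|s p.1| * CM) := by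
          refine mul_le_mul hb1 ?_ (by positivity) hCh0
          exact mul_le_mul_of_nonneg_left hb2 (abs_nonneg _)
      _ = Ch * CM * |s p.1| := by ring
  constructor
  · exact hf₀int.integral_prod_left
  · have hswap := MeasureTheory.integral_integral_swap
      (f := fun ω w => ⟪h w, s ω • T ω w⟫) hf₀int
    rw [hswap]
    refine integral_congr_ae (Eventually.of_forall fun w => ?_)
    exact integral_inner (hsT w) (h w)

end Main

local notation "⟪" x ", " y "⟫" => @inner ℝ _ _ x y

/-- Existence, uniqueness and characterization of the conditional Wasserstein barycenter
within an admissible deformation class: the minimizer of the weighted Fréchet objective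
`E[s(X,x)·W₂²(μ, ν)]` over `{T₀#ν₀ : T₀ ∈ 𝒯}` exists, is unique, and is obtained as
`T̃#ν₀`, where `T̃` is the metric projection in `L²(ν₀;ℝ^d)` of
`w ↦ E[s(X,x)·T(w)]` onto `𝒯`. -/
theorem conditional_barycenter_exists_unique {d : ℕ} {Ω : Type*} [MeasureSpace Ω]
    [IsProbabilityMeasure (ℙ : Measure Ω)]
    (M : Set (EuclideanSpace ℝ (Fin d))) (hMc : IsCompact M) (hMconv : Convex ℝ M)
    (ν₀ : Measure (EuclideanSpace ℝ (Fin d))) [IsProbabilityMeasure ν₀]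
    (hac : ν₀ ≪ volume) (hsupp : ν₀ Mᶜ = 0)
    (𝒯 : Set (EuclideanSpace ℝ (Fin d) → EuclideanSpace ℝ (Fin d)))
    (h𝒯 : AdmissibleClass ν₀ 𝒯) (hrange : ∀ T ∈ 𝒯, MapsTo T M M)
    (T : Ω → EuclideanSpace ℝ (Fin d) → EuclideanSpace ℝ (Fin d))
    (hT : ∀ ω, T ω ∈ 𝒯)
    (s : Ω → ℝ) (hs : Integrable s ℙ) (hs1 : ∫ ω, s ω ∂(ℙ : Measure Ω) = 1)
    (hsT : ∀ w, Integrable (fun ω => s ω • T ω w) ℙ)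
    (hobj : ∀ T₀ ∈ 𝒯, Integrable
      (fun ω => s ω * W2sq (ν₀.map T₀) (ν₀.map (T ω))) ℙ) :
    ∃ Ttil ∈ 𝒯,
      (∀ T₀ ∈ 𝒯,
        (∫ w, ‖Ttil w - ∫ ω, s ω • T ω w ∂(ℙ : Measure Ω)‖ ^ 2 ∂ν₀) ≤
        (∫ w, ‖T₀ w - ∫ ω, s ω • T ω w ∂(ℙ : Measure Ω)‖ ^ 2 ∂ν₀)) ∧
      (∀ T₀ ∈ 𝒯,
        (∫ ω, s ω * W2sq (ν₀.map Ttil) (ν₀.map (T ω)) ∂(ℙ : Measure Ω)) ≤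
        (∫ ω, s ω * W2sq (ν₀.map T₀) (ν₀.map (T ω)) ∂(ℙ : Measure Ω))) ∧
      (∀ T' ∈ 𝒯,
        (∀ T₀ ∈ 𝒯,
          (∫ ω, s ω * W2sq (ν₀.map T') (ν₀.map (T ω)) ∂(ℙ : Measure Ω)) ≤
          (∫ ω, s ω * W2sq (ν₀.map T₀) (ν₀.map (T ω)) ∂(ℙ : Measure Ω))) →
        ν₀.map T' = ν₀.map Ttil) := by
  classical
  have hMmeas : MeasurableSet M := hMc.isClosed.measurableSet
  have haeM : ∀ᵐ w ∂ν₀, w ∈ M := ae_mem_M hsupp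
  obtain ⟨CM, hCM⟩ := isBounded_iff_forall_norm_le.1 hMc.isBounded
  have hCM0 : 0 ≤ CM := by
    rcases Set.eq_empty_or_nonempty M with hE | ⟨x, hx⟩
    · exfalso
      have h0 : ν₀ Set.univ = 0 := by
        have hMc' : Mᶜ = Set.univ := by rw [hE]; simp
        rw [← hMc']; exact hsupp
      simp [measure_univ] at h0
    · exact le_trans (norm_nonneg x) (hCM x hx)
  have hTcont : ∀ ω, Continuous (T ω) := fun ω => h𝒯.continuous_of_mem (hT ω)
  have hIν : ∀ {f : EuclideanSpace ℝ (Fin d) → ℝ}, Continuous f → Integrable f ν₀ :=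
    fun hf => cont_integrable hMc hsupp hf
  set m : EuclideanSpace ℝ (Fin d) → EuclideanSpace ℝ (Fin d) :=
    fun w => ∫ ω, s ω • T ω w ∂(ℙ : Measure Ω) with hm_def
  have hjoint := joint_aesm ν₀ T hTcont s hsT
  have hmaesm : AEStronglyMeasurable m ν₀ := by
    have h1 := hjoint.prod_swap
    exact h1.integral_prod_right'
  set Cs : ℝ := ∫ ω, |s ω| ∂(ℙ : Measure Ω) with hCs_def
  have hCs0 : 0 ≤ Cs := integral_nonneg (fun ω => abs_nonneg _)
  have hmbound : ∀ w ∈ M, ‖m w‖ ≤ Cs * CM := by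
    intro w hw
    calc ‖m w‖ ≤ ∫ ω, ‖s ω • T ω w‖ ∂(ℙ : Measure Ω) := norm_integral_le_integral_norm _
      _ ≤ ∫ ω, |s ω| * CM ∂(ℙ : Measure Ω) := by
          refine integral_mono (hsT w).norm (hs.abs.mul_const CM) (fun ω => ?_)
          rw [norm_smul, Real.norm_eq_abs]
          exact mul_le_mul_of_nonneg_left (hCM _ (hrange _ (hT ω) hw)) (abs_nonneg _)
      _ = Cs * CM := by rw [integral_mul_const]
  -- the L² projection objective
  set G : (EuclideanSpace ℝ (Fin d) → EuclideanSpace ℝ (Fin d)) → ℝ :=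
    fun T₀ => ∫ w, ‖T₀ w - m w‖ ^ 2 ∂ν₀ with hG_def
  have hGaesm : ∀ T₀ ∈ 𝒯, AEStronglyMeasurable (fun w => ‖T₀ w - m w‖ ^ 2) ν₀ := by
    intro T₀ h
    exact ((((h𝒯.continuous_of_mem h).aestronglyMeasurable).sub hmaesm).norm).pow 2
  have hGbnd : ∀ T₀ ∈ 𝒯, ∀ w ∈ M, |‖T₀ w - m w‖ ^ 2| ≤ (CM + Cs * CM) ^ 2 := by
    intro T₀ h w hw
    rw [abs_of_nonneg (by positivity)]
    have h1 : ‖T₀ w - m w‖ ≤ CM + Cs * CM :=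
      le_trans (norm_sub_le _ _) (add_le_add (hCM _ (hrange _ h hw)) (hmbound w hw))
    exact pow_le_pow_left₀ (norm_nonneg _) h1 2
  have hGint : ∀ T₀ ∈ 𝒯, Integrable (fun w => ‖T₀ w - m w‖ ^ 2) ν₀ := fun T₀ h =>
    bounded_integrable hsupp (hGaesm T₀ h) (hGbnd T₀ h)
  -- minimizing sequence and compactness
  set Sv : Set ℝ := G '' 𝒯 with hSv_def
  have hSvne : Sv.Nonempty := ⟨G id, ⟨id, h𝒯.id_mem, rfl⟩⟩
  have hSvbdd : BddBelow Sv := by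
    refine ⟨0, ?_⟩
    rintro x ⟨T₀, hT₀, rfl⟩
    exact integral_nonneg (fun w => by positivity)
  set ι : ℝ := sInf Sv with hι_def
  have hseq : ∀ n : ℕ, ∃ fj ∈ 𝒯, G fj < ι + 1 / (n + 1) := by
    intro n
    obtain ⟨x, hx, hlt⟩ := exists_lt_of_csInf_lt hSvne
      (lt_add_of_pos_right ι (by positivity : (0:ℝ) < 1 / (n + 1)))
    obtain ⟨fj, hfj, rfl⟩ := hx
    exact ⟨fj, hfj, hlt⟩
  choose f hf𝒯 hflt using hseq
  obtain ⟨g, hg𝒯, φs, hφmono, hφlim⟩ := h𝒯.compact f hf𝒯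
  have hgcont : Continuous g := h𝒯.continuous_of_mem hg𝒯
  -- L¹ convergence along the subsequence
  have hL1 : Tendsto (fun n => ∫ w, ‖f (φs n) w - g w‖ ∂ν₀) atTop (𝓝 0) := by
    rw [Metric.tendsto_atTop]
    intro ε hε
    set δ : ℝ := ε / 2 with hδ_def
    have hδ : 0 < δ := by positivity
    rw [Metric.tendsto_atTop] at hφlim
    obtain ⟨N, hN⟩ := hφlim (δ ^ 2) (by positivity)
    refine ⟨N, fun n hn => ?_⟩
    have hfn : Continuous (f (φs n)) := h𝒯.continuous_of_mem (hf𝒯 (φs n))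
    have hAn : ∫ w, ‖f (φs n) w - g w‖ ^ 2 ∂ν₀ < δ ^ 2 := by
      have h1 := hN n hn
      rw [Real.dist_eq, sub_zero] at h1
      exact lt_of_le_of_lt (le_abs_self _) h1
    have hnn : 0 ≤ ∫ w, ‖f (φs n) w - g w‖ ∂ν₀ :=
      integral_nonneg (fun w => norm_nonneg _)
    rw [Real.dist_eq, sub_zero, abs_of_nonneg hnn]
    have hkey : ∫ w, ‖f (φs n) w - g w‖ ∂ν₀
        ≤ δ / 2 + (∫ w, ‖f (φs n) w - g w‖ ^ 2 ∂ν₀) / (2 * δ) := by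
      have hmono : ∫ w, ‖f (φs n) w - g w‖ ∂ν₀
          ≤ ∫ w, (δ / 2 + ‖f (φs n) w - g w‖ ^ 2 / (2 * δ)) ∂ν₀ := by
        refine integral_mono (hIν (hfn.sub hgcont).norm)
          ((integrable_const (δ / 2)).add ((hIν ((hfn.sub hgcont).norm.pow 2)).div_const _))
          (fun w => ?_)
        have h0 : 0 ≤ ‖f (φs n) w - g w‖ := norm_nonneg _
        rw [show δ / 2 + ‖f (φs n) w - g w‖ ^ 2 / (2 * δ)
            = (δ ^ 2 + ‖f (φs n) w - g w‖ ^ 2) / (2 * δ) by field_simp,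
          le_div_iff₀ (by positivity : (0:ℝ) < 2 * δ)]
        nlinarith [sq_nonneg (‖f (φs n) w - g w‖ - δ)]
      calc ∫ w, ‖f (φs n) w - g w‖ ∂ν₀
          ≤ ∫ w, (δ / 2 + ‖f (φs n) w - g w‖ ^ 2 / (2 * δ)) ∂ν₀ := hmono
        _ = δ / 2 + (∫ w, ‖f (φs n) w - g w‖ ^ 2 ∂ν₀) / (2 * δ) := by
            rw [integral_add (integrable_const _)
              ((hIν (f := fun w => ‖f (φs n) w - g w‖ ^ 2) ((hfn.sub hgcont).norm.pow 2)).div_const _),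
              integral_const, integral_div]
            simp [measure_univ]
    have hfin : δ / 2 + (∫ w, ‖f (φs n) w - g w‖ ^ 2 ∂ν₀) / (2 * δ) < δ := by
      have h2δ : (0:ℝ) < 2 * δ := by positivity
      have h1 : (∫ w, ‖f (φs n) w - g w‖ ^ 2 ∂ν₀) / (2 * δ) < δ ^ 2 / (2 * δ) :=
        (div_lt_div_iff_of_pos_right h2δ).2 hAn
      have hδ' : δ ≠ 0 := ne_of_gt hδ
      have h2 : δ ^ 2 / (2 * δ) = δ / 2 := by field_simp
      rw [h2] at h1
      linarith
    calc ∫ w, ‖f (φs n) w - g w‖ ∂ν₀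
        ≤ δ / 2 + (∫ w, ‖f (φs n) w - g w‖ ^ 2 ∂ν₀) / (2 * δ) := hkey
      _ < δ := hfin
      _ < ε := by rw [hδ_def]; linarith
  -- G is continuous along the subsequence
  set K : ℝ := 2 * CM + 2 * (Cs * CM) with hK_def
  have hGdiffbound : ∀ n, |G (f (φs n)) - G g| ≤ K * ∫ w, ‖f (φs n) w - g w‖ ∂ν₀ := by
    intro n
    have hfn : Continuous (f (φs n)) := h𝒯.continuous_of_mem (hf𝒯 (φs n))
    have hfnint := hGint _ (hf𝒯 (φs n))
    have hgint := hGint _ hg𝒯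
    have hsub : G (f (φs n)) - G g
        = ∫ w, (‖f (φs n) w - m w‖ ^ 2 - ‖g w - m w‖ ^ 2) ∂ν₀ := by
      rw [hG_def, ← integral_sub hfnint hgint]
    rw [hsub]
    have habs : |∫ w, (‖f (φs n) w - m w‖ ^ 2 - ‖g w - m w‖ ^ 2) ∂ν₀|
        ≤ ∫ w, |‖f (φs n) w - m w‖ ^ 2 - ‖g w - m w‖ ^ 2| ∂ν₀ := by
      simpa [Real.norm_eq_abs] using
        norm_integral_le_integral_norm (fun w => ‖f (φs n) w - m w‖ ^ 2 - ‖g w - m w‖ ^ 2)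
    refine le_trans habs ?_
    rw [← integral_const_mul]
    refine integral_mono_ae (hfnint.sub hgint).abs
      ((hIν (hfn.sub hgcont).norm).const_mul K) ?_
    filter_upwards [haeM] with w hw
    have hx : ‖f (φs n) w - m w‖ ≤ CM + Cs * CM :=
      le_trans (norm_sub_le _ _) (add_le_add (hCM _ (hrange _ (hf𝒯 (φs n)) hw)) (hmbound w hw))
    have hy : ‖g w - m w‖ ≤ CM + Cs * CM :=
      le_trans (norm_sub_le _ _) (add_le_add (hCM _ (hrange _ hg𝒯 hw)) (hmbound w hw))
    have hinnerid : ‖f (φs n) w - m w‖ ^ 2 - ‖g w - m w‖ ^ 2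
        = ⟪(f (φs n) w - m w) - (g w - m w), (f (φs n) w - m w) + (g w - m w)⟫ := by
      rw [inner_sub_left, inner_add_right, inner_add_right,
        real_inner_self_eq_norm_sq, real_inner_self_eq_norm_sq,
        real_inner_comm (g w - m w) (f (φs n) w - m w)]
      ring
    have hsubid : (f (φs n) w - m w) - (g w - m w) = f (φs n) w - g w := by abel
    calc |‖f (φs n) w - m w‖ ^ 2 - ‖g w - m w‖ ^ 2|
        = |⟪(f (φs n) w - m w) - (g w - m w), (f (φs n) w - m w) + (g w - m w)⟫| := by
          rw [hinnerid]
      _ ≤ ‖(f (φs n) w - m w) - (g w - m w)‖ * ‖(f (φs n) w - m w) + (g w - m w)‖ :=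
          abs_real_inner_le_norm _ _
      _ ≤ ‖f (φs n) w - g w‖ * K := by
          rw [hsubid]
          refine mul_le_mul_of_nonneg_left ?_ (norm_nonneg _)
          refine le_trans (norm_add_le _ _) ?_
          rw [hK_def]; linarith
      _ = K * ‖f (φs n) w - g w‖ := mul_comm _ _
  have hGconv : Tendsto (fun n => G (f (φs n))) atTop (𝓝 (G g)) := by
    rw [← tendsto_sub_nhds_zero_iff]
    refine squeeze_zero_norm (fun n => by
      simpa [Real.norm_eq_abs] using hGdiffbound n) ?_
    simpa using hL1.const_mul K
  have hιle : ∀ n, G (f (φs n)) ≤ ι + 1 / (n + 1) := by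
    intro n
    refine le_trans (le_of_lt (hflt (φs n))) ?_
    have hle : (1:ℝ) / (φs n + 1) ≤ 1 / (n + 1) := by
      apply one_div_le_one_div_of_le (by positivity)
      have hnn : n ≤ φs n := hφmono.le_apply
      push_cast
      exact_mod_cast Nat.add_le_add_right hnn 1
    linarith
  have hlimle : Tendsto (fun n : ℕ => ι + 1 / ((n : ℝ) + 1)) atTop (𝓝 ι) := by
    have := tendsto_const_nhds (x := ι) (f := atTop (α := ℕ)) |>.add
      tendsto_one_div_add_atTop_nhds_zero_nat
    simpa using this
  have hGg_le : G g ≤ ι := le_of_tendsto_of_tendsto' hGconv hlimle hιle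
  have hGmin : ∀ T₀ ∈ 𝒯, G g ≤ G T₀ := fun T₀ h =>
    hGg_le.trans (csInf_le hSvbdd ⟨T₀, h, rfl⟩)
  -- the link between the Fréchet objective and the projection objective
  have hFG : ∀ T₀ ∈ 𝒯,
      (∫ ω, s ω * W2sq (ν₀.map T₀) (ν₀.map (T ω)) ∂(ℙ : Measure Ω))
        - (∫ ω, s ω * W2sq (ν₀.map g) (ν₀.map (T ω)) ∂(ℙ : Measure Ω))
      = G T₀ - G g := by
    intro T₀ hT₀
    have hT₀cont : Continuous T₀ := h𝒯.continuous_of_mem hT₀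
    set hd : EuclideanSpace ℝ (Fin d) → EuclideanSpace ℝ (Fin d) :=
      fun w => T₀ w - g w with hh_def
    have hhcont : Continuous hd := hT₀cont.sub hgcont
    set A : ℝ := ∫ w, (‖T₀ w‖ ^ 2 - ‖g w‖ ^ 2) ∂ν₀ with hA_def
    obtain ⟨hJint, hJeq⟩ := swap_identity hMc hsupp T hTcont
      (fun ω => hrange _ (hT ω)) s hs hsT hd hhcont
    have hpt : ∀ ω, s ω * W2sq (ν₀.map T₀) (ν₀.map (T ω))
        = s ω * W2sq (ν₀.map g) (ν₀.map (T ω)) + s ω * A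
          - 2 * ∫ w, ⟪hd w, s ω • T ω w⟫ ∂ν₀ := by
      intro ω
      rw [W2sq_eq hMc hsupp h𝒯 hrange hT₀ (hT ω), W2sq_eq hMc hsupp h𝒯 hrange hg𝒯 (hT ω)]
      have hTω := hTcont ω
      have e1 : ∫ w, ‖T₀ w - T ω w‖ ^ 2 ∂ν₀ - ∫ w, ‖g w - T ω w‖ ^ 2 ∂ν₀
          = A - 2 * ∫ w, ⟪hd w, T ω w⟫ ∂ν₀ := by
        rw [← integral_sub (hIν (f := fun w => ‖T₀ w - T ω w‖ ^ 2) ((hT₀cont.sub hTω).norm.pow 2))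
          (hIν (f := fun w => ‖g w - T ω w‖ ^ 2) ((hgcont.sub hTω).norm.pow 2))]
        have e2 : ∀ w, ‖T₀ w - T ω w‖ ^ 2 - ‖g w - T ω w‖ ^ 2
            = (‖T₀ w‖ ^ 2 - ‖g w‖ ^ 2) - 2 * ⟪hd w, T ω w⟫ := by
          intro w
          rw [norm_sub_sq_real, norm_sub_sq_real, hh_def]
          simp only [inner_sub_left]
          ring
        rw [integral_congr_ae (Eventually.of_forall e2),
          integral_sub (hIν (f := fun w => ‖T₀ w‖ ^ 2 - ‖g w‖ ^ 2) ((hT₀cont.norm.pow 2).sub (hgcont.norm.pow 2)))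
            ((hIν (hhcont.inner hTω)).const_mul 2),
          integral_const_mul, hA_def]
      have e3 : ∫ w, ⟪hd w, s ω • T ω w⟫ ∂ν₀ = s ω * ∫ w, ⟪hd w, T ω w⟫ ∂ν₀ := by
        rw [← integral_const_mul]
        refine integral_congr_ae (Eventually.of_forall fun w => ?_)
        show ⟪hd w, s ω • T ω w⟫ = s ω * ⟪hd w, T ω w⟫
        exact real_inner_smul_right _ _ _
      rw [e3]
      linear_combination (s ω) * e1
    have hWg_int := hobj g hg𝒯
    have hsA : Integrable (fun ω => s ω * A) ℙ := hs.mul_const A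
    have hstep : ∫ ω, s ω * W2sq (ν₀.map T₀) (ν₀.map (T ω)) ∂(ℙ : Measure Ω)
        = ∫ ω, (s ω * W2sq (ν₀.map g) (ν₀.map (T ω)) + s ω * A
            - 2 * ∫ w, ⟪hd w, s ω • T ω w⟫ ∂ν₀) ∂(ℙ : Measure Ω) :=
      integral_congr_ae (Eventually.of_forall hpt)
    have hsA_eq : ∫ ω, s ω * A ∂(ℙ : Measure Ω) = A := by
      rw [integral_mul_const, hs1, one_mul]
    have hinm_int : Integrable (fun w => ⟪hd w, m w⟫) ν₀ := by
      refine bounded_integrable hsupp ((hhcont.aestronglyMeasurable).inner hmaesm)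
        (C := (CM + CM) * (Cs * CM)) ?_
      intro w hw
      have h1 : ‖hd w‖ ≤ CM + CM := by
        rw [hh_def]
        exact le_trans (norm_sub_le _ _)
          (add_le_add (hCM _ (hrange _ hT₀ hw)) (hCM _ (hrange _ hg𝒯 hw)))
      calc |⟪hd w, m w⟫| ≤ ‖hd w‖ * ‖m w‖ := abs_real_inner_le_norm _ _
        _ ≤ (CM + CM) * (Cs * CM) :=
            mul_le_mul h1 (hmbound w hw) (norm_nonneg _) (by positivity)
    have hGdiff : G T₀ - G g = A - 2 * ∫ w, ⟪hd w, m w⟫ ∂ν₀ := by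
      rw [hG_def, ← integral_sub (hGint T₀ hT₀) (hGint g hg𝒯)]
      have e4 : ∀ᵐ w ∂ν₀, ‖T₀ w - m w‖ ^ 2 - ‖g w - m w‖ ^ 2
          = (‖T₀ w‖ ^ 2 - ‖g w‖ ^ 2) - 2 * ⟪hd w, m w⟫ :=
        Eventually.of_forall (fun w => by
          rw [norm_sub_sq_real, norm_sub_sq_real, hh_def]
          simp only [inner_sub_left]
          ring)
      rw [integral_congr_ae e4,
        integral_sub (hIν (f := fun w => ‖T₀ w‖ ^ 2 - ‖g w‖ ^ 2) ((hT₀cont.norm.pow 2).sub (hgcont.norm.pow 2)))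
          (hinm_int.const_mul 2),
        integral_const_mul, hA_def]
    have hadd : Integrable (fun ω => s ω * W2sq (ν₀.map g) (ν₀.map (T ω)) + s ω * A)
        (ℙ : Measure Ω) := hWg_int.add hsA
    rw [hstep, integral_sub hadd (hJint.const_mul 2),
      integral_add hWg_int hsA, integral_const_mul, hJeq, hsA_eq, hGdiff]
    ring
  -- conclusion
  refine ⟨g, hg𝒯, ?_, ?_, ?_⟩
  · intro T₀ hT₀
    exact hGmin T₀ hT₀
  · intro T₀ hT₀
    have h1 := hFG T₀ hT₀
    have h2 := hGmin T₀ hT₀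
    linarith
  · intro T' hT' hmin
    have h1 := hmin g hg𝒯
    have h2 := hFG T' hT'
    have hGT' : G T' = G g := le_antisymm (by linarith) (hGmin T' hT')
    have hT'cont : Continuous T' := h𝒯.continuous_of_mem hT'
    set mid : EuclideanSpace ℝ (Fin d) → EuclideanSpace ℝ (Fin d) :=
      fun w => (1/2 : ℝ) • T' w + (1 - (1/2 : ℝ)) • g w with hmid_def
    have hmid𝒯 : mid ∈ 𝒯 := h𝒯.convex T' hT' g hg𝒯 (1/2) (by norm_num) (by norm_num)
    have hpar : ∀ w, ‖T' w - m w‖ ^ 2 + ‖g w - m w‖ ^ 2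
        = 2 * ‖mid w - m w‖ ^ 2 + (1/2) * ‖T' w - g w‖ ^ 2 := by
      intro w
      have hx : mid w - m w = (1/2 : ℝ) • ((T' w - m w) + (g w - m w)) := by
        simp only [hmid_def]
        module
      have hnorm : ‖mid w - m w‖ ^ 2
          = (1/4) * ‖(T' w - m w) + (g w - m w)‖ ^ 2 := by
        rw [hx, norm_smul]
        rw [show ‖(1/2 : ℝ)‖ = 1/2 by simp [Real.norm_eq_abs]]
        ring
      have hpl := parallelogram_law_with_norm ℝ (T' w - m w) (g w - m w)
      have hsubid : (T' w - m w) - (g w - m w) = T' w - g w := by abel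
      have h4 : ‖T' w - g w‖ ^ 2 = ‖(T' w - m w) - (g w - m w)‖ ^ 2 := by rw [hsubid]
      rw [hnorm, h4]
      nlinarith [hpl]
    have hi1 := hGint T' hT'
    have hi2 := hGint g hg𝒯
    have hi3 := hGint mid hmid𝒯
    have hi4 : Integrable (fun w => ‖T' w - g w‖ ^ 2) ν₀ :=
      hIν ((hT'cont.sub hgcont).norm.pow 2)
    have hintpar : G T' + G g
        = 2 * G mid + (1/2) * ∫ w, ‖T' w - g w‖ ^ 2 ∂ν₀ := by
      have hcong : ∫ w, (‖T' w - m w‖ ^ 2 + ‖g w - m w‖ ^ 2) ∂ν₀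
          = ∫ w, (2 * ‖mid w - m w‖ ^ 2 + (1/2) * ‖T' w - g w‖ ^ 2) ∂ν₀ :=
        integral_congr_ae (Eventually.of_forall hpar)
      rw [integral_add hi1 hi2, integral_add (hi3.const_mul 2) (hi4.const_mul (1/2)),
        integral_const_mul, integral_const_mul] at hcong
      exact hcong
    have hmidge : G g ≤ G mid := hGmin mid hmid𝒯
    have hzero : ∫ w, ‖T' w - g w‖ ^ 2 ∂ν₀ = 0 := by
      have hnn : 0 ≤ ∫ w, ‖T' w - g w‖ ^ 2 ∂ν₀ :=
        integral_nonneg fun w => by positivity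
      nlinarith [hintpar, hmidge, hGT']
    have haeeq : T' =ᵐ[ν₀] g := by
      have h5 : (fun w => ‖T' w - g w‖ ^ 2) =ᵐ[ν₀] 0 :=
        (integral_eq_zero_iff_of_nonneg (fun w => by positivity) hi4).1 hzero
      filter_upwards [h5] with w hw
      have h6 : ‖T' w - g w‖ ^ 2 = 0 := hw
      have h7 : ‖T' w - g w‖ = 0 := by
        have := pow_eq_zero_iff (two_ne_zero) |>.1 h6
        exact this
      rw [norm_eq_zero, sub_eq_zero] at h7
      exact h7
    exact Measure.map_congr haeeq
end
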